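/- arXiv:1702.05605 — 12 statements merged into one kernel-verified Lean document; each statement's English description precedes it below -/
import Mathlib

section
/- If R is a trinil clean ring, then the element 6 = 1+1+1+1+1+1 of R is nilpotent. -/
/-- A ring is *trinil clean* if every element is the sum of a tripotent
(`e ^ 3 = e`) and a nilpotent. -/
def TrinilClean (R : Type*) [Ring R] : Prop :=
  ∀ a : R, ∃ e w : R, e ^ 3 = e ∧ IsNilpotent w ∧ a = e + w

theorem six_isNilpotent_of_trinilClean (R : Type*) [Ring R]
    (h : TrinilClean R) : IsNilpotent (6 : R) := by
  obtain ⟨e, w, he, hw, h2⟩ := h 2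
  have hew : e = 2 - w := by rw [h2]; abel
  have h3 : (2 - w) ^ 3 = 2 - w := by rw [← hew]; exact he
  have key : (6 : R) = w * (w ^ 2 - 6 * w + 11) := by
    have h4 : (2 - w) ^ 3 - (2 - w) = 0 := sub_eq_zero.mpr h3
    have expand : (2 - w) ^ 3 - (2 - w) = 6 - w * (w ^ 2 - 6 * w + 11) := by
      have hp : ((2 - Polynomial.X) ^ 3 - (2 - Polynomial.X) : Polynomial ℤ) = 6 - Polynomial.X * (Polynomial.X ^ 2 - 6 * Polynomial.X + 11) := by ring
      have := congrArg (Polynomial.aeval w) hp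
      simpa [map_ofNat] using this
    rw [expand] at h4
    exact sub_eq_zero.mp h4
  rw [key]
  have hc : Commute w (w ^ 2 - 6 * w + 11) := by
    have h1 : Commute w (w ^ 2) := (Commute.refl w).pow_right 2
    have h2' : Commute w (6 * w) := (Commute.ofNat_right w 6).mul_right (Commute.refl w)
    have h3' : Commute w (11 : R) := Commute.ofNat_right w 11
    exact (h1.sub_right h2').add_right h3'
  exact hc.isNilpotent_mul_right hw
end

section
/- A ring R is trinil clean if and only if there exist rings A and B and a ring isomorphism R ≅ A × B such that A and B are both trinil clean, 2 lies in the Jacobson radical of A, and 3 lies in the Jacobson radical of B. -/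
section Aux

variable {R S : Type*} [Ring R] [Ring S]

lemma TrinilClean.of_surjective (f : R →+* S) (hf : Function.Surjective f)
    (h : TrinilClean R) : TrinilClean S := by
  intro s
  obtain ⟨r, rfl⟩ := hf s
  obtain ⟨e, w, he, hw, hr⟩ := h r
  exact ⟨f e, f w, by rw [← map_pow, he], hw.map f, by rw [hr, map_add]⟩

lemma TrinilClean.prod {A B : Type*} [Ring A] [Ring B]
    (hA : TrinilClean A) (hB : TrinilClean B) : TrinilClean (A × B) := by
  rintro ⟨a, b⟩
  obtain ⟨e₁, w₁, he₁, ⟨k₁, hk₁⟩, h₁⟩ := hA a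
  obtain ⟨e₂, w₂, he₂, ⟨k₂, hk₂⟩, h₂⟩ := hB b
  refine ⟨(e₁, e₂), (w₁, w₂), ?_, ⟨max k₁ k₂, ?_⟩, ?_⟩
  · exact Prod.ext (by simpa using he₁) (by simpa using he₂)
  · exact Prod.ext (by simpa using pow_eq_zero_of_le (le_max_left _ _) hk₁)
      (by simpa using pow_eq_zero_of_le (le_max_right _ _) hk₂)
  · exact Prod.ext (by simpa using h₁) (by simpa using h₂)

lemma mem_jacobson_bot_of_central_nilpotent {x : R}
    (hc : ∀ y : R, x * y = y * x) (hx : IsNilpotent x) :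
    x ∈ Ideal.jacobson (⊥ : Ideal R) := by
  rw [Ideal.jacobson]
  refine Ideal.mem_sInf.mpr fun {J} hJ => ?_
  by_contra hxJ
  have htop : J ⊔ Ideal.span {x} = ⊤ :=
    hJ.2.out.2 _ (left_lt_sup.mpr fun hle => hxJ (hle (Ideal.subset_span rfl)))
  have h1 : (1 : R) ∈ J ⊔ Ideal.span {x} := htop ▸ Submodule.mem_top
  obtain ⟨m, hm, z, hz, hmz⟩ := Submodule.mem_sup.mp h1
  obtain ⟨r, rfl⟩ := Submodule.mem_span_singleton.mp hz
  have hnil : IsNilpotent (r * x) := (show Commute r x from (hc r).symm).isNilpotent_mul_left hx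
  have hu : IsUnit m := by
    have hm' : m = 1 + -(r * x) := by
      have : r • x = r * x := rfl
      rw [← hmz, this]; abel
    rw [hm']
    exact hnil.neg.isUnit_one_add
  exact hJ.2.ne_top (J.eq_top_of_isUnit_mem hm hu)

/-- The ring congruence associated to a central element `f`:
`x ~ y` iff `f * x = f * y`. -/
def cornerCon (f : R) (hf : ∀ x : R, f * x = x * f) : RingCon R where
  r x y := f * x = f * y
  iseqv := ⟨fun _ => rfl, Eq.symm, Eq.trans⟩
  add' {a b c d} h1 h2 := by
    have h1' : f * a = f * b := h1
    have h2' : f * c = f * d := h2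
    show f * (a + c) = f * (b + d)
    rw [mul_add, mul_add, h1', h2']
  mul' {a b c d} h1 h2 := by
    have h1' : f * a = f * b := h1
    have h2' : f * c = f * d := h2
    show f * (a * c) = f * (b * d)
    calc f * (a * c) = (f * a) * c := (mul_assoc _ _ _).symm
      _ = (f * b) * c := by rw [h1']
      _ = (b * f) * c := by rw [hf b]
      _ = b * (f * c) := mul_assoc _ _ _
      _ = b * (f * d) := by rw [h2']
      _ = (b * f) * d := (mul_assoc _ _ _).symm
      _ = (f * b) * d := by rw [hf b]
      _ = f * (b * d) := mul_assoc _ _ _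

end Aux

theorem trinilClean_iff_prod (R : Type) [Ring R] :
    TrinilClean R ↔
      ∃ (A B : Type) (_ : Ring A) (_ : Ring B),
        Nonempty (R ≃+* A × B) ∧ TrinilClean A ∧ TrinilClean B ∧
        (2 : A) ∈ Ideal.jacobson (⊥ : Ideal A) ∧
        (3 : B) ∈ Ideal.jacobson (⊥ : Ideal B) := by
  constructor
  · intro hR
    -- 6 is nilpotent
    obtain ⟨e, w, he, hw, h2⟩ := hR (2 : R)
    have hwe : w = 2 - e := by rw [h2]; abel
    have key : w * (11 - 6 * w + w ^ 2) = 6 + e - e ^ 3 := by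
      rw [hwe]; noncomm_ring; norm_num; abel
    rw [he] at key
    have key' : w * (11 - 6 * w + w ^ 2) = 6 := by rw [key]; abel
    have h6 : IsNilpotent (6 : R) := by
      have hcomm : Commute w (11 - 6 * w + w ^ 2) := by
        refine Commute.add_right (Commute.sub_right ?_ ?_) ?_
        · exact Commute.ofNat_right w 11
        · exact (Commute.ofNat_right w 6).mul_right (Commute.refl w)
        · exact (Commute.refl w).pow_right 2
      have := hcomm.isNilpotent_mul_right hw
      rwa [key'] at this
    obtain ⟨n, hn⟩ := h6
    -- Bezout coefficients
    have hcop : IsCoprime ((2 : ℤ) ^ n) ((3 : ℤ) ^ n) := by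
      apply IsCoprime.pow
      rw [Int.isCoprime_iff_gcd_eq_one]
      decide
    obtain ⟨u, v, huv⟩ := hcop
    set f : R := ((v * 3 ^ n : ℤ) : R) with hf_def
    set g : R := ((u * 2 ^ n : ℤ) : R) with hg_def
    have hf_central : ∀ x : R, f * x = x * f := fun x =>
      (Int.cast_commute (v * 3 ^ n) x).eq
    have hg_central : ∀ x : R, g * x = x * g := fun x =>
      (Int.cast_commute (u * 2 ^ n) x).eq
    have hfg1 : g + f = 1 := by
      rw [hf_def, hg_def, ← Int.cast_add, ← Int.cast_one]
      exact congrArg _ huv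
    have h63 : ((6 : ℤ) : R) = (6 : R) := by norm_num
    have hcast6 : ((6 ^ n : ℤ) : R) = 0 := by rw [Int.cast_pow, h63, hn]
    have h236 : ((2 : ℤ) ^ n) * 3 ^ n = 6 ^ n := by
      rw [show (6 : ℤ) = 2 * 3 by norm_num, mul_pow]
    have hfg0 : f * g = 0 := by
      rw [hf_def, hg_def, ← Int.cast_mul]
      have : (v * 3 ^ n) * (u * 2 ^ n) = (v * u) * (2 ^ n * 3 ^ n) := by ring
      rw [this, h236, Int.cast_mul, hcast6, mul_zero]
    have hgf0 : g * f = 0 := by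
      rw [hg_def, hf_def, ← Int.cast_mul]
      have : (u * 2 ^ n) * (v * 3 ^ n) = (u * v) * (2 ^ n * 3 ^ n) := by ring
      rw [this, h236, Int.cast_mul, hcast6, mul_zero]
    have hff : f * f = f := by
      have h' : f * (g + f) = f * g + f * f := mul_add _ _ _
      rw [hfg1, mul_one, hfg0, zero_add] at h'
      exact h'.symm
    have hgg : g * g = g := by
      have h' : g * (g + f) = g * g + g * f := mul_add _ _ _
      rw [hfg1, mul_one, hgf0, add_zero] at h'
      exact h'.symm
    -- key vanishing facts
    have hf2n : f * (2 : R) ^ n = 0 := by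
      have hc2 : ((2 : R) ^ n) = ((2 ^ n : ℤ) : R) := by push_cast; ring
      rw [hf_def, hc2, ← Int.cast_mul]
      have h' : (v * 3 ^ n) * 2 ^ n = v * (2 ^ n * 3 ^ n) := by ring
      rw [h', h236, Int.cast_mul, hcast6, mul_zero]
    have hg3n : g * (3 : R) ^ n = 0 := by
      have hc3 : ((3 : R) ^ n) = ((3 ^ n : ℤ) : R) := by push_cast; ring
      rw [hg_def, hc3, ← Int.cast_mul]
      have h' : (u * 2 ^ n) * 3 ^ n = u * (2 ^ n * 3 ^ n) := by ring
      rw [h', h236, Int.cast_mul, hcast6, mul_zero]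
    set cf := cornerCon f hf_central with hcf_def
    set cg := cornerCon g hg_central with hcg_def
    have hsf : Function.Surjective cf.mk' := fun p => Quotient.exists_rep p
    have hsg : Function.Surjective cg.mk' := fun p => Quotient.exists_rep p
    refine ⟨cf.Quotient, cg.Quotient, inferInstance, inferInstance, ?_, ?_, ?_, ?_, ?_⟩
    · -- the isomorphism
      refine ⟨RingEquiv.ofBijective (cf.mk'.prod cg.mk') ⟨?_, ?_⟩⟩
      · intro x y hxy
        have h1' : f * x = f * y := cf.eq.mp (congrArg Prod.fst hxy)
        have h2' : g * x = g * y := cg.eq.mp (congrArg Prod.snd hxy)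
        calc x = (g + f) * x := by rw [hfg1, one_mul]
          _ = g * x + f * x := add_mul _ _ _
          _ = g * y + f * y := by rw [h1', h2']
          _ = (g + f) * y := (add_mul _ _ _).symm
          _ = y := by rw [hfg1, one_mul]
      · rintro ⟨p, q⟩
        obtain ⟨x, rfl⟩ := hsf p
        obtain ⟨y, rfl⟩ := hsg q
        refine ⟨f * x + g * y, Prod.ext ?_ ?_⟩
        · show cf.mk' (f * x + g * y) = cf.mk' x
          exact cf.eq.mpr (show f * (f * x + g * y) = f * x by
            rw [mul_add, ← mul_assoc, ← mul_assoc, hff, hfg0, zero_mul, add_zero])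
        · show cg.mk' (f * x + g * y) = cg.mk' y
          exact cg.eq.mpr (show g * (f * x + g * y) = g * y by
            rw [mul_add, ← mul_assoc, ← mul_assoc, hgg, hgf0, zero_mul, zero_add])
    · exact hR.of_surjective cf.mk' hsf
    · exact hR.of_surjective cg.mk' hsg
    · -- 2 ∈ J(A)
      apply mem_jacobson_bot_of_central_nilpotent
      · exact fun y => (Commute.ofNat_left 2 y).eq
      · refine ⟨n, ?_⟩
        have h2A : cf.mk' (2 : R) = (2 : cf.Quotient) := map_ofNat cf.mk' 2
        rw [← h2A, ← map_pow]
        show cf.mk' ((2 : R) ^ n) = cf.mk' (0 : R)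
        exact cf.eq.mpr (show f * (2 : R) ^ n = f * 0 by rw [hf2n, mul_zero])
    · -- 3 ∈ J(B)
      apply mem_jacobson_bot_of_central_nilpotent
      · exact fun y => (Commute.ofNat_left 3 y).eq
      · refine ⟨n, ?_⟩
        have h3B : cg.mk' (3 : R) = (3 : cg.Quotient) := map_ofNat cg.mk' 3
        rw [← h3B, ← map_pow]
        show cg.mk' ((3 : R) ^ n) = cg.mk' (0 : R)
        exact cg.eq.mpr (show g * (3 : R) ^ n = g * 0 by rw [hg3n, mul_zero])
  · rintro ⟨A, B, _, _, ⟨φ⟩, hA, hB, -, -⟩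
    exact (hA.prod hB).of_surjective φ.symm.toRingHom φ.symm.surjective
end

section
/- If R is a trinil clean ring, then every element of the Jacobson radical J(R) is nilpotent. -/
/-- Even powers (≥ 2) of a tripotent all equal its square. -/
private lemma tripotent_even_pow {R : Type*} [Monoid R] {e : R} (he : e ^ 3 = e) :
    ∀ k : ℕ, e ^ (2 * k + 2) = e ^ 2
  | 0 => by norm_num
  | k + 1 => by
    have h1 : 2 * (k + 1) + 2 = (2 * k + 2) + 2 := by ring
    rw [h1, pow_add, tripotent_even_pow he k, ← pow_add]
    show e ^ 4 = e ^ 2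
    have : e ^ 4 = e ^ 3 * e := by rw [← pow_succ]
    rw [this, he, ← pow_two]

/-- The Jacobson radical of `⊥` is closed under right multiplication. -/
private lemma jac_mul_mem_right {R : Type*} [Ring R] {a : R} (y : R)
    (ha : a ∈ Ideal.jacobson (⊥ : Ideal R)) : a * y ∈ Ideal.jacobson (⊥ : Ideal R) :=
  Ideal.mul_mem_right y _ ha

/-- If `a` lies in the Jacobson radical of `⊥`, then `1 - a` is a unit (two-sided). -/
private lemma isUnit_one_sub_of_mem_jac {R : Type*} [Ring R] {a : R}
    (ha : a ∈ Ideal.jacobson (⊥ : Ideal R)) : IsUnit (1 - a) := by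
  -- left quasi-inverse
  obtain ⟨z, hz⟩ := Ideal.mem_jacobson_iff.mp ha (-1)
  rw [Ideal.mem_bot] at hz
  have hz1 : z * (1 - a) = 1 := by
    have h0 : z * (1 - a) - 1 = z * -1 * a + z - 1 := by noncomm_ring
    exact sub_eq_zero.mp (h0.trans hz)
  -- z = 1 + z * a, and z * a ∈ J, so z itself has a left quasi-inverse
  have hzaJ : -(z * a) ∈ Ideal.jacobson (⊥ : Ideal R) :=
    (Ideal.jacobson (⊥ : Ideal R)).neg_mem (Ideal.mul_mem_left _ z ha)
  obtain ⟨z', hz'⟩ := Ideal.mem_jacobson_iff.mp hzaJ (-1)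
  rw [Ideal.mem_bot] at hz'
  have hz'1 : z' * z = 1 := by
    set t := z * a with ht
    have hzs : z - t = 1 := by rw [ht, ← hz1]; noncomm_ring
    have hzeq : z = 1 + t := eq_add_of_sub_eq hzs
    have h0 : z' * z - 1 = z' * -1 * -t + z' - 1 := by rw [hzeq]; noncomm_ring
    exact sub_eq_zero.mp (h0.trans hz')
  -- z' = 1 - a, so 1 - a is a two-sided inverse of z
  have hz'eq : z' = 1 - a := by
    calc z' = z' * (z * (1 - a)) := by rw [hz1, mul_one]
    _ = (z' * z) * (1 - a) := by rw [mul_assoc]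
    _ = 1 - a := by rw [hz'1, one_mul]
  exact ⟨⟨1 - a, z, by rw [← hz'eq]; exact hz'1, hz1⟩, rfl⟩

theorem jacobson_nil_of_trinilClean (R : Type*) [Ring R] (h : TrinilClean R) :
    ∀ x ∈ Ideal.jacobson (⊥ : Ideal R), IsNilpotent x := by
  intro x hx
  obtain ⟨e, w, he, ⟨n, hn⟩, hx'⟩ := h x
  -- degenerate case: n = 0 means 1 = 0
  rcases Nat.eq_zero_or_pos n with hn0 | hn1
  · subst hn0
    exact ⟨0, by simpa using hn⟩
  -- noncommutative binomial: (x + b)^m ≡ b^m mod J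
  have key : ∀ m : ℕ, (x + -e) ^ m - (-e) ^ m ∈ Ideal.jacobson (⊥ : Ideal R) := by
    intro m
    induction m with
    | zero => simp
    | succ k ih =>
      have h1 : (x + -e) ^ (k + 1) - (-e) ^ (k + 1)
          = (x + -e) ^ k * x + ((x + -e) ^ k - (-e) ^ k) * (-e) := by
        rw [pow_succ, pow_succ]; noncomm_ring
      rw [h1]
      exact (Ideal.jacobson (⊥ : Ideal R)).add_mem
        (Ideal.mul_mem_left _ _ hx) (jac_mul_mem_right _ ih)
  -- (x - e)^n = w^n = 0, hence (-e)^n ∈ J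
  have hxe : x + -e = w := by rw [hx']; abel
  have hne : (-e) ^ n ∈ Ideal.jacobson (⊥ : Ideal R) := by
    have := key n
    rw [hxe, hn, zero_sub] at this
    simpa using (Ideal.jacobson (⊥ : Ideal R)).neg_mem this
  -- hence e^(2n) ∈ J, and e^(2n) = e^2
  have he2n : e ^ (2 * n) ∈ Ideal.jacobson (⊥ : Ideal R) := by
    have hprod : (-e) ^ n * (-e) ^ n ∈ Ideal.jacobson (⊥ : Ideal R) :=
      Ideal.mul_mem_left _ _ hne
    have heq : (-e) ^ n * (-e) ^ n = e ^ (2 * n) := by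
      rw [← pow_add, Even.neg_pow ⟨n, by ring⟩, two_mul]
    rwa [heq] at hprod
  have he2 : e ^ 2 ∈ Ideal.jacobson (⊥ : Ideal R) := by
    obtain ⟨k, hk⟩ : ∃ k, n = k + 1 := ⟨n - 1, (Nat.succ_pred_eq_of_pos hn1).symm⟩
    have h2n : 2 * n = 2 * k + 2 := by omega
    rw [h2n] at he2n
    rwa [← tripotent_even_pow he k]
  -- 1 - e^2 is a unit and e * (1 - e^2) = 0, so e = 0
  have hu : IsUnit (1 - e ^ 2) := isUnit_one_sub_of_mem_jac he2
  have hez : e = 0 := by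
    have hmul : e * (1 - e ^ 2) = 0 * (1 - e ^ 2) := by
      have h5 : e * (1 - e ^ 2) = e - e ^ 3 := by noncomm_ring
      rw [h5, he, sub_self, zero_mul]
    exact hu.mul_right_cancel hmul
  exact ⟨n, by rw [hx', hez, zero_add, hn]⟩
end

section
/- Let R be a ring and let a ∈ R. If a^2 - a is nilpotent, then there exists a monic polynomial f(t) with integer coefficients such that f(a)^2 = f(a) and a - f(a) is nilpotent (where f(a) denotes the evaluation of f at a in R). -/
open Polynomial

theorem exists_monic_poly_idempotent (R : Type*) [Ring R] (a : R)
    (h : IsNilpotent (a ^ 2 - a)) :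
    ∃ f : Polynomial ℤ, f.Monic ∧
      (Polynomial.aeval a f) ^ 2 = Polynomial.aeval a f ∧
      IsNilpotent (a - Polynomial.aeval a f) := by
  obtain ⟨n, hn⟩ := h
  have hn1 : aeval a (((X : ℤ[X]) ^ 2 - X) ^ (n + 1)) = 0 := by
    rw [map_pow, map_sub, map_pow, aeval_X, pow_succ, hn, zero_mul]
  obtain ⟨u, v, huv⟩ : IsCoprime ((X : ℤ[X]) ^ (n + 1)) ((1 - X) ^ (n + 1)) :=
    IsCoprime.pow ⟨1, 1, by ring⟩
  have hmp : (((X : ℤ[X]) ^ 2 - X) ^ (n + 1)).Monic := by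
    apply Polynomial.Monic.pow
    have h2 : ((X : ℤ[X]) ^ 2 - X) = X * (X - C 1) := by rw [C_1]; ring
    rw [h2]
    exact monic_X.mul (monic_X_sub_C 1)
  set d : ℕ := (u * X ^ (n + 1)).natDegree + 1 with hd
  have hm : (((X : ℤ[X]) ^ 2 - X) ^ (n + 1) * X ^ d).Monic := hmp.mul (monic_X_pow d)
  refine ⟨((X : ℤ[X]) ^ 2 - X) ^ (n + 1) * X ^ d + u * X ^ (n + 1), ?_, ?_, ?_⟩
  · -- Monic
    apply hm.add_of_left
    have hdeg : (((X : ℤ[X]) ^ 2 - X) ^ (n + 1) * X ^ d).natDegree = 2 * (n + 1) + d := by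
      rw [hmp.natDegree_mul (monic_X_pow d), natDegree_pow, natDegree_X_pow]
      have h3 : ((X : ℤ[X]) ^ 2 - X).natDegree = 2 := by compute_degree!
      rw [h3]; ring
    calc (u * X ^ (n + 1)).degree ≤ ((u * X ^ (n + 1)).natDegree : WithBot ℕ) :=
          degree_le_natDegree
      _ < ((2 * (n + 1) + d : ℕ) : WithBot ℕ) := by exact_mod_cast by omega
      _ = (((X : ℤ[X]) ^ 2 - X) ^ (n + 1) * X ^ d).degree := by
          rw [degree_eq_natDegree hm.ne_zero, hdeg]
  all_goals
    have heval : aeval a (((X : ℤ[X]) ^ 2 - X) ^ (n + 1) * X ^ d + u * X ^ (n + 1)) =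
        aeval a (u * X ^ (n + 1)) := by
      rw [map_add, map_mul, hn1, zero_mul, zero_add]
    rw [heval]
  · -- idempotent
    have hid : (u * X ^ (n + 1) : ℤ[X]) ^ 2 - u * X ^ (n + 1) =
        -(u * v * (X ^ (n + 1) * (1 - X) ^ (n + 1))) := by
      linear_combination (u * X ^ (n + 1)) * huv
    have haux : aeval a ((X : ℤ[X]) ^ (n + 1) * (1 - X) ^ (n + 1)) = 0 := by
      rw [← mul_pow, show ((X : ℤ[X]) * (1 - X)) = -(X ^ 2 - X) by ring, neg_pow, map_mul,
        hn1, mul_zero]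
    have h0 : (aeval a (u * X ^ (n + 1))) ^ 2 - aeval a (u * X ^ (n + 1)) = 0 := by
      rw [← map_pow, ← map_sub, hid, map_neg, map_mul, haux, mul_zero, neg_zero]
    exact sub_eq_zero.mp h0
  · -- nilpotent
    have hdiv : (X : ℤ[X]) - u * X ^ (n + 1) =
        (X ^ 2 - X) * (u * X ^ n - v * (1 - X) ^ n) := by
      linear_combination (-X) * huv
    have hkey : a - aeval a (u * X ^ (n + 1)) = aeval a ((X : ℤ[X]) ^ 2 - X) *
        aeval a (u * X ^ n - v * (1 - X) ^ n) := by
      rw [← map_mul, ← hdiv, map_sub, aeval_X]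
    rw [hkey]
    have hcomm : Commute (aeval a ((X : ℤ[X]) ^ 2 - X))
        (aeval a (u * X ^ n - v * (1 - X) ^ n)) := by
      unfold Commute SemiconjBy
      rw [← map_mul, ← map_mul, mul_comm]
    exact hcomm.isNilpotent_mul_right ⟨n + 1, by rw [← map_pow, hn1]⟩
end

section
/- Let R be a ring with 3 in its Jacobson radical J(R). Then R is trinil clean if and only if the quotient ring R/J(R) is trinil clean and every element of J(R) is nilpotent. -/
section CommLemmas
variable {S : Type*} [CommRing S]

/-- Idempotent lifting along a nilpotent obstruction, with explicit cofactor. -/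
private lemma idemLift : ∀ n : ℕ, ∀ x : S, (x ^ 2 - x) ^ n = 0 →
    ∃ e c : S, e ^ 2 = e ∧ e - x = c * (x ^ 2 - x)
  | 0 => fun x h => by
      have h1 : (1 : S) = 0 := by simpa using h
      have := subsingleton_of_zero_eq_one h1.symm
      exact ⟨x, 0, Subsingleton.elim _ _, Subsingleton.elim _ _⟩
  | 1 => fun x h => by
      rw [pow_one, sub_eq_zero] at h
      exact ⟨x, 0, h, by rw [sub_self, zero_mul]⟩
  | (n + 2) => fun x h => by
      obtain ⟨e, c, he, hc⟩ := idemLift (n + 1) (3 * x ^ 2 - 2 * x ^ 3) (by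
        have key : (3 * x ^ 2 - 2 * x ^ 3) ^ 2 - (3 * x ^ 2 - 2 * x ^ 3)
            = (x ^ 2 - x) ^ 2 * (4 * (x ^ 2 - x) - 3) := by ring
        rw [key, mul_pow, ← pow_mul, show 2 * (n + 1) = (n + 2) + n by ring, pow_add, h,
          zero_mul, zero_mul])
      refine ⟨e, c * ((x ^ 2 - x) * (4 * (x ^ 2 - x) - 3)) - (2 * x - 1), he, ?_⟩
      linear_combination hc

/-- Tripotent lifting, commutative case, with `2` invertible. -/
private lemma triLift (u x : S) (hu : 2 * u = 1) (h : IsNilpotent (x ^ 3 - x)) :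
    ∃ f c : S, f ^ 3 = f ∧ f - x = c * (x ^ 3 - x) := by
  obtain ⟨n, hn⟩ := h
  obtain ⟨g, c₁, hg, hc₁⟩ := idemLift n (x ^ 2) (by
    have : (x ^ 2) ^ 2 - x ^ 2 = x * (x ^ 3 - x) := by ring
    rw [this, mul_pow, hn, mul_zero])
  set p : S := u * g * (1 + x) with hp
  have h1 : p ^ 2 = u ^ 2 * g ^ 2 * (1 + x) ^ 2 := by rw [hp]; ring
  rw [hg] at h1
  have h2 : p ^ 2 - p = u ^ 2 * (g * x ^ 2 - g) := by
    rw [h1, hp]; linear_combination (u * g * (1 + x)) * hu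
  have h3 : g * x ^ 2 - g = (c₁ * ((x ^ 2) ^ 2 - x ^ 2)) * (x ^ 2 - 1) + (x ^ 4 - x ^ 2) := by
    linear_combination (x ^ 2 - 1) * hc₁
  have hpt : p ^ 2 - p = (u ^ 2 * (c₁ * (x ^ 2 - 1) + 1) * x) * (x ^ 3 - x) := by
    rw [h2, h3]; ring
  obtain ⟨q, c₂, hq, hc₂⟩ := idemLift n p (by rw [hpt, mul_pow, hn, mul_zero])
  refine ⟨2 * q * g - g, 2 * c₂ * (u ^ 2 * (c₁ * (x ^ 2 - 1) + 1) * x) * g + c₁ * x ^ 2 + 1,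
    ?_, ?_⟩
  · have hsq : (2 * q * g - g) ^ 2 = 4 * q ^ 2 * g ^ 2 - 4 * (q * g ^ 2) + g ^ 2 := by ring
    rw [hq, hg] at hsq
    have hcube : (2 * q * g - g) ^ 3 = (4 * q * g - 4 * (q * g) + g) * (2 * q * g - g) := by
      rw [pow_succ, hsq]
    rw [hcube]
    have : (4 * q * g - 4 * (q * g) + g) * (2 * q * g - g) = 2 * q * g ^ 2 - g ^ 2 := by ring
    rw [this, hg]
  · have h4 : q - p = c₂ * ((u ^ 2 * (c₁ * (x ^ 2 - 1) + 1) * x) * (x ^ 3 - x)) := by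
      rw [← hpt]; exact hc₂
    have h5 : 2 * p * g = 2 * u * g ^ 2 * (1 + x) := by rw [hp]; ring
    rw [hg] at h5
    have h6 : 2 * p * g = g * (1 + x) := by
      rw [h5]; linear_combination (g * (1 + x)) * hu
    have h7 : g * x - x = (c₁ * x ^ 2 + 1) * (x ^ 3 - x) := by
      linear_combination x * hc₁
    linear_combination (2 * g) * h4 + h6 + h7

end CommLemmas

section RingLemmas
variable {R : Type*} [Ring R]

private lemma odd_pow_tri {e : R} (he : e ^ 3 = e) : ∀ k : ℕ, e ^ (2 * k + 1) = e
  | 0 => pow_one e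
  | (k + 1) => by
      have hk := odd_pow_tri he k
      calc e ^ (2 * (k + 1) + 1) = e ^ (2 * k + 1) * e ^ 2 := by
            rw [← pow_add]; ring_nf
        _ = e ^ 3 := by rw [hk, ← pow_succ']
        _ = e := he

/-- In the Jacobson radical of `⊥`, `x + 1` is a (two-sided) unit. -/
private lemma exists_two_sided_inv {x : R} (hx : x ∈ Ideal.jacobson (⊥ : Ideal R)) :
    ∃ z : R, z * (x + 1) = 1 ∧ (x + 1) * z = 1 := by
  obtain ⟨z, hz⟩ := Ideal.mem_jacobson_iff.1 hx 1
  rw [Ideal.mem_bot, sub_eq_zero, mul_one] at hz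
  have hz1 : z * (x + 1) = 1 := by rw [mul_add, mul_one]; exact hz
  have hzJ : -(z * x) ∈ Ideal.jacobson (⊥ : Ideal R) :=
    neg_mem (Ideal.mul_mem_left _ z hx)
  obtain ⟨z₂, hz₂⟩ := Ideal.mem_jacobson_iff.1 hzJ 1
  rw [Ideal.mem_bot, sub_eq_zero, mul_one] at hz₂
  have hz2 : z₂ * z = 1 := by
    have hzz : z = -(z * x) + 1 := by
      rw [neg_add_eq_sub]; exact (eq_sub_of_add_eq' hz)
    calc z₂ * z = z₂ * (-(z * x)) + z₂ := by
          conv_lhs => rw [hzz]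
          rw [mul_add, mul_one]
      _ = 1 := hz₂
  have hz3 : z₂ = x + 1 := by
    calc z₂ = z₂ * (z * (x + 1)) := by rw [hz1, mul_one]
      _ = (z₂ * z) * (x + 1) := by rw [mul_assoc]
      _ = x + 1 := by rw [hz2, one_mul]
  exact ⟨z, hz1, by rw [← hz3]; exact hz2⟩

private lemma pow_sub_pow_mem (J : Ideal R)
    (hmr : ∀ {x y : R}, x ∈ J → x * y ∈ J) {a b : R} (hab : a - b ∈ J) :
    ∀ n : ℕ, a ^ n - b ^ n ∈ J
  | 0 => by simp
  | (n + 1) => by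
      have h1 : a ^ (n + 1) - b ^ (n + 1) = a ^ n * (a - b) + (a ^ n - b ^ n) * b := by
        rw [pow_succ, pow_succ]; noncomm_ring
      rw [h1]
      exact add_mem (Ideal.mul_mem_left _ _ hab) (hmr (pow_sub_pow_mem J hmr hab n))

/-- Lifting tripotents along nilpotents in a (noncommutative) ring with `2` invertible. -/
private lemma triLiftRing (u e : R) (h2u : 2 * u = 1) (hue : u * e = e * u)
    (h : IsNilpotent (e ^ 3 - e)) :
    ∃ f c : R, f ^ 3 = f ∧ f - e = c * (e ^ 3 - e) := by
  have hcomm : ∀ x ∈ ({e, u} : Set R), ∀ y ∈ ({e, u} : Set R), x * y = y * x := by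
    rintro x (rfl | rfl) y (rfl | rfl) <;> first | rfl | exact hue | exact hue.symm
  letI : CommRing (Subring.closure ({e, u} : Set R)) := Subring.closureCommRingOfComm hcomm
  set E : Subring.closure ({e, u} : Set R) :=
    ⟨e, Subring.subset_closure (by simp)⟩ with hE
  set U : Subring.closure ({e, u} : Set R) :=
    ⟨u, Subring.subset_closure (by simp)⟩ with hU
  have hUeq : 2 * U = 1 := by
    apply Subtype.ext
    push_cast [hU]
    exact h2u
  obtain ⟨n, hn⟩ := h
  have hEn : (E ^ 3 - E) ^ n = 0 := by
    apply Subtype.ext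
    push_cast [hE]
    exact hn
  obtain ⟨f, c, hf, hfc⟩ := triLift U E hUeq ⟨n, hEn⟩
  refine ⟨(f : R), (c : R), ?_, ?_⟩
  · have := congrArg (Subtype.val) hf
    push_cast at this
    exact this
  · have := congrArg (Subtype.val) hfc
    push_cast [hE] at this
    exact this

end RingLemmas

/-- `R / J(R)` is trinil clean, stated elementwise: every element of the
quotient (i.e. every coset, represented by an arbitrary `a : R`) is the sum of
a tripotent and a nilpotent of the quotient. -/
theorem trinilClean_iff_quotient_jacobson (R : Type*) [Ring R]
    (h3 : (3 : R) ∈ Ideal.jacobson (⊥ : Ideal R)) :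
    TrinilClean R ↔
      ((∀ a : R, ∃ e w : R,
          e ^ 3 - e ∈ Ideal.jacobson (⊥ : Ideal R) ∧
          (∃ n : ℕ, w ^ n ∈ Ideal.jacobson (⊥ : Ideal R)) ∧
          a - (e + w) ∈ Ideal.jacobson (⊥ : Ideal R)) ∧
        ∀ x ∈ Ideal.jacobson (⊥ : Ideal R), IsNilpotent x) := by
  set J := Ideal.jacobson (⊥ : Ideal R) with hJdef
  have hmr : ∀ {x y : R}, x ∈ J → x * y ∈ J :=
    fun {x y} hx => Ideal.mul_mem_right y (Ideal.jacobson (⊥ : Ideal R)) hx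
  constructor
  · intro hT
    constructor
    · intro a
      obtain ⟨e, w, he, ⟨n, hn⟩, rfl⟩ := hT a
      exact ⟨e, w, by rw [he, sub_self]; exact J.zero_mem,
        ⟨n, by rw [hn]; exact J.zero_mem⟩,
        by rw [sub_self]; exact J.zero_mem⟩
    · intro x hx
      obtain ⟨e, w, he, ⟨m, hw⟩, hxew⟩ := hT x
      have hsub : e - (-w) ∈ J := by
        rw [sub_neg_eq_add, ← hxew]; exact hx
      have hpow := pow_sub_pow_mem J hmr hsub (2 * m + 1)
      have hwz : (-w) ^ (2 * m + 1) = 0 := by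
        have hm0 : (-w) ^ m = 0 := by rw [neg_pow, hw, mul_zero]
        exact pow_eq_zero_of_le (by omega) hm0
      rw [hwz, sub_zero, odd_pow_tri he] at hpow
      have he2 : -(e * e) ∈ J := neg_mem (Ideal.mul_mem_left J e hpow)
      obtain ⟨z, hz1, hz2⟩ := exists_two_sided_inv he2
      have h5 : e * (-(e * e) + 1) = 0 := by
        have h6 : e * (-(e * e) + 1) = -(e ^ 3) + e := by noncomm_ring
        rw [h6, he, neg_add_cancel]
      have he0 : e = 0 := by
        calc e = e * ((-(e * e) + 1) * z) := by rw [hz2, mul_one]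
          _ = (e * (-(e * e) + 1)) * z := by rw [mul_assoc]
          _ = 0 := by rw [h5, zero_mul]
      exact ⟨m, by rw [hxew, he0, zero_add, hw]⟩
  · rintro ⟨hQ, hN⟩
    have h3' : (-3 : R) ∈ J := neg_mem h3
    obtain ⟨z, hz1, hz2⟩ := exists_two_sided_inv h3'
    have hm2 : (-3 : R) + 1 = -2 := by norm_num
    rw [hm2] at hz1 hz2
    set u : R := -z with hu
    have h2u : 2 * u = 1 := by
      rw [hu, mul_neg, ← neg_mul]; exact hz2
    have hu2 : u * 2 = 1 := by
      rw [hu, neg_mul, ← mul_neg]; exact hz1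
    have hcomm2 : ∀ r : R, u * r = r * u := fun r => by
      calc u * r = u * r * (2 * u) := by rw [h2u, mul_one]
        _ = u * (r * 2) * u := by rw [← mul_assoc, ← mul_assoc]
        _ = u * (2 * r) * u := by rw [mul_two, two_mul]
        _ = (u * 2) * (r * u) := by rw [← mul_assoc, mul_assoc (u * 2)]
        _ = r * u := by rw [hu2, one_mul]
    intro a
    obtain ⟨e, w, he, ⟨n, hwn⟩, ha⟩ := hQ a
    obtain ⟨f, c, hf, hfc⟩ := triLiftRing u e h2u (hcomm2 e) (hN _ he)
    have hfeJ : f - e ∈ J := by rw [hfc]; exact Ideal.mul_mem_left _ _ he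
    refine ⟨f, a - f, hf, ?_, by abel⟩
    have hdiff : (a - f) - w ∈ J := by
      have h7 : (a - f) - w = (a - (e + w)) + (e - f) := by abel
      rw [h7]
      exact add_mem ha (by have h8 := neg_mem hfeJ; rwa [neg_sub] at h8)
    have hpw := pow_sub_pow_mem J hmr hdiff n
    have h9 : (a - f) ^ n ∈ J := by
      have h10 : (a - f) ^ n = ((a - f) ^ n - w ^ n) + w ^ n := by abel
      rw [h10]; exact add_mem hpw hwn
    obtain ⟨k, hk⟩ := hN _ h9
    exact ⟨n * k, by rw [pow_mul]; exact hk⟩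
end

section
/- A ring R is strongly 2-nil-clean if and only if for every a ∈ R the element a - a^3 is nilpotent. -/
open Polynomial

section CommLemmas

variable {S : Type*} [CommRing S]

private lemma pow_succ_idem {c : S} (hc : c * c = c) : ∀ n : ℕ, c ^ (n + 1) = c := by
  intro n
  induction n with
  | zero => simp
  | succ n ih => rw [pow_succ, ih, hc]

private lemma tripotent_lift_two (x : S) (h2 : IsNilpotent (2 : S))
    (hx : IsNilpotent (x - x ^ 3)) : ∃ e : S, e ^ 3 = e ∧ IsNilpotent (x - e) := by
  have hsq : IsNilpotent (x ^ 2 - x) := by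
    have h1 : IsNilpotent ((-x) * (x - x ^ 3)) := (Commute.all _ _).isNilpotent_mul_left hx
    have hterm2 : IsNilpotent ((x ^ 2 - x ^ 3) * 2) := (Commute.all _ _).isNilpotent_mul_left h2
    have hid : (x ^ 2 - x) ^ 2 = (-x) * (x - x ^ 3) + (x ^ 2 - x ^ 3) * 2 := by ring
    have hn : IsNilpotent ((x ^ 2 - x) ^ 2) := by
      rw [hid]; exact (Commute.all _ _).isNilpotent_add h1 hterm2
    obtain ⟨m, hm⟩ := hn
    exact ⟨2 * m, by rw [pow_mul]; exact hm⟩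
  set P : S[X] := X ^ 2 - X with hP
  have hev : aeval x P = x ^ 2 - x := by simp [hP]
  have hdev : aeval x (derivative P) = 2 * x - 1 := by
    simp [hP]; ring
  have hu : IsUnit (2 * x - 1) := by
    have hmul : (2 * x - 1) * (2 * x - 1) = 1 - (-(4 * (x ^ 2 - x))) := by ring
    have hn : IsNilpotent (-(4 * (x ^ 2 - x))) :=
      ((Commute.all _ _).isNilpotent_mul_left hsq).neg
    have := hn.isUnit_one_sub
    rw [← hmul] at this
    exact isUnit_of_mul_isUnit_left this
  obtain ⟨r, ⟨hr1, hr2⟩, -⟩ := P.existsUnique_nilpotent_sub_and_aeval_eq_zero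
    (by rw [hev]; exact hsq) (by rw [hdev]; exact hu)
  have hrr : r ^ 2 = r := by
    have : aeval r P = r ^ 2 - r := by simp [hP]
    rw [this, sub_eq_zero] at hr2
    exact hr2
  exact ⟨r, by rw [pow_succ, hrr, ← pow_two, hrr], hr1⟩

private lemma tripotent_lift_three (x : S) (h3 : IsNilpotent (3 : S))
    (hx : IsNilpotent (x - x ^ 3)) : ∃ e : S, e ^ 3 = e ∧ IsNilpotent (x - e) := by
  set P : S[X] := X ^ 3 - X with hP
  have hev : aeval x P = x ^ 3 - x := by simp [hP]
  have hdev : aeval x (derivative P) = 3 * x ^ 2 - 1 := by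
    simp [hP]; ring
  have hu : IsUnit (3 * x ^ 2 - 1) := by
    have hn : IsNilpotent (3 * x ^ 2 : S) := (Commute.all _ _).isNilpotent_mul_right h3
    have := hn.isUnit_one_sub
    have heq : -(1 - 3 * x ^ 2) = 3 * x ^ 2 - 1 := by ring
    rw [← heq]
    exact this.neg
  have hx' : IsNilpotent (x ^ 3 - x) := by
    have := hx.neg; rwa [neg_sub] at this
  obtain ⟨r, ⟨hr1, hr2⟩, -⟩ := P.existsUnique_nilpotent_sub_and_aeval_eq_zero
    (by rw [hev]; exact hx') (by rw [hdev]; exact hu)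
  have hrr : r ^ 3 = r := by
    have : aeval r P = r ^ 3 - r := by simp [hP]
    rw [this, sub_eq_zero] at hr2
    exact hr2
  exact ⟨r, hrr, hr1⟩

private lemma tripotent_lift_six (x : S) (h6 : IsNilpotent (6 : S))
    (hx : IsNilpotent (x - x ^ 3)) : ∃ e : S, e ^ 3 = e ∧ IsNilpotent (x - e) := by
  obtain ⟨k, hk⟩ := h6
  have hcop : IsCoprime ((2 : ℤ) ^ k) ((3 : ℤ) ^ k) :=
    IsCoprime.pow (⟨-1, 1, by ring⟩ : IsCoprime (2 : ℤ) 3)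
  obtain ⟨u, v, huv⟩ := hcop
  set c2 : S := ((u * 2 ^ k : ℤ) : S) with hc2
  set c3 : S := ((v * 3 ^ k : ℤ) : S) with hc3
  have hsum : c2 + c3 = 1 := by
    rw [hc2, hc3, ← Int.cast_add, huv, Int.cast_one]
  have hmul : c2 * c3 = 0 := by
    have h1 : c2 * c3 = ((u * v : ℤ) : S) * (6 : S) ^ k := by
      rw [hc2, hc3]
      push_cast
      rw [show (6 : S) = 2 * 3 by norm_num, mul_pow]
      ring
    rw [h1, hk, mul_zero]
  have hid2 : c2 * c2 = c2 := by
    have hc3eq : c3 = 1 - c2 := by linear_combination hsum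
    have : c2 * (1 - c2) = 0 := by rw [← hc3eq]; exact hmul
    linear_combination -this
  have hid3 : c3 * c3 = c3 := by
    have hc2eq : c2 = 1 - c3 := by linear_combination hsum
    have : (1 - c3) * c3 = 0 := by rw [← hc2eq]; exact hmul
    linear_combination -this
  -- In S ⧸ span {c3}, 3 is nilpotent
  have key3 : (3 : S) ^ k * c2 = 0 := by
    have : (3 : S) ^ k * c2 = ((u : ℤ) : S) * (6 : S) ^ k := by
      rw [hc2]
      push_cast
      rw [show (6 : S) = 2 * 3 by norm_num, mul_pow]
      ring
    rw [this, hk, mul_zero]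
  have key2 : (2 : S) ^ k * c3 = 0 := by
    have : (2 : S) ^ k * c3 = ((v : ℤ) : S) * (6 : S) ^ k := by
      rw [hc3]
      push_cast
      rw [show (6 : S) = 2 * 3 by norm_num, mul_pow]
      ring
    rw [this, hk, mul_zero]
  -- quotient by span {c3} : 3 nilpotent there
  obtain ⟨e1, he1, hm1⟩ :
      ∃ e1 : S, (c3 ∣ e1 ^ 3 - e1) ∧ ∃ m : ℕ, c3 ∣ (x - e1) ^ m := by
    let I : Ideal S := Ideal.span {c3}
    let π : S →+* S ⧸ I := Ideal.Quotient.mk I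
    have h3Q : IsNilpotent (3 : S ⧸ I) := by
      refine ⟨k, ?_⟩
      have : (3 : S ⧸ I) ^ k = π ((3 : S) ^ k) := by rw [map_pow, map_ofNat]
      rw [this]
      have hdecomp : (3 : S) ^ k = (3 : S) ^ k * c2 + (3 : S) ^ k * c3 := by
        rw [← mul_add, hsum, mul_one]
      rw [hdecomp, key3, zero_add]
      rw [Ideal.Quotient.eq_zero_iff_mem]
      exact Ideal.mul_mem_left _ _ (Ideal.subset_span rfl)
    have hxQ : IsNilpotent (π x - (π x) ^ 3) := by
      have := hx.map π
      rwa [map_sub, map_pow] at this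
    obtain ⟨eb, heb3, hebn⟩ := tripotent_lift_three (π x) h3Q hxQ
    obtain ⟨e1, rfl⟩ := Ideal.Quotient.mk_surjective eb
    refine ⟨e1, ?_, ?_⟩
    · rw [← Ideal.mem_span_singleton, ← Ideal.Quotient.eq_zero_iff_mem]
      show π (e1 ^ 3 - e1) = 0
      rw [map_sub, map_pow]
      rw [sub_eq_zero]
      exact heb3
    · obtain ⟨m, hm⟩ := hebn
      refine ⟨m, ?_⟩
      rw [← Ideal.mem_span_singleton, ← Ideal.Quotient.eq_zero_iff_mem]
      show π ((x - e1) ^ m) = 0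
      rw [map_pow, map_sub]
      exact hm
  -- quotient by span {c2} : 2 nilpotent there
  obtain ⟨e2, he2, hm2⟩ :
      ∃ e2 : S, (c2 ∣ e2 ^ 3 - e2) ∧ ∃ m : ℕ, c2 ∣ (x - e2) ^ m := by
    let I : Ideal S := Ideal.span {c2}
    let π : S →+* S ⧸ I := Ideal.Quotient.mk I
    have h2Q : IsNilpotent (2 : S ⧸ I) := by
      refine ⟨k, ?_⟩
      have : (2 : S ⧸ I) ^ k = π ((2 : S) ^ k) := by rw [map_pow, map_ofNat]
      rw [this]
      have hdecomp : (2 : S) ^ k = (2 : S) ^ k * c3 + (2 : S) ^ k * c2 := by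
        rw [← mul_add, add_comm c3 c2, hsum, mul_one]
      rw [hdecomp, key2, zero_add]
      rw [Ideal.Quotient.eq_zero_iff_mem]
      exact Ideal.mul_mem_left _ _ (Ideal.subset_span rfl)
    have hxQ : IsNilpotent (π x - (π x) ^ 3) := by
      have := hx.map π
      rwa [map_sub, map_pow] at this
    obtain ⟨eb, heb3, hebn⟩ := tripotent_lift_two (π x) h2Q hxQ
    obtain ⟨e2, rfl⟩ := Ideal.Quotient.mk_surjective eb
    refine ⟨e2, ?_, ?_⟩
    · rw [← Ideal.mem_span_singleton, ← Ideal.Quotient.eq_zero_iff_mem]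
      show π (e2 ^ 3 - e2) = 0
      rw [map_sub, map_pow, sub_eq_zero]
      exact heb3
    · obtain ⟨m, hm⟩ := hebn
      refine ⟨m, ?_⟩
      rw [← Ideal.mem_span_singleton, ← Ideal.Quotient.eq_zero_iff_mem]
      show π ((x - e2) ^ m) = 0
      rw [map_pow, map_sub]
      exact hm
  obtain ⟨z1, hz1⟩ := he1
  obtain ⟨z2, hz2⟩ := he2
  obtain ⟨m1, y1, hy1⟩ := hm1
  obtain ⟨m2, y2, hy2⟩ := hm2
  refine ⟨e1 * c2 + e2 * c3, ?_, ?_⟩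
  · -- tripotent
    have hAB : (e1 * c2) * (e2 * c3) = 0 := by
      have : (e1 * c2) * (e2 * c3) = (e1 * e2) * (c2 * c3) := by ring
      rw [this, hmul, mul_zero]
    have expand : (e1 * c2 + e2 * c3) ^ 3 = (e1 * c2) ^ 3 + (e2 * c3) ^ 3 := by
      linear_combination (3 * (e1 * c2) + 3 * (e2 * c3)) * hAB
    have hc2p : c2 ^ 3 = c2 := pow_succ_idem hid2 2
    have hc3p : c3 ^ 3 = c3 := pow_succ_idem hid3 2
    have hA3 : (e1 * c2) ^ 3 = e1 * c2 := by
      rw [mul_pow, hc2p]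
      linear_combination c2 * hz1 + z1 * hmul
    have hB3 : (e2 * c3) ^ 3 = e2 * c3 := by
      rw [mul_pow, hc3p]
      linear_combination c3 * hz2 + z2 * hmul
    rw [expand, hA3, hB3]
  · -- nilpotent
    have hx1n : IsNilpotent ((x - e1) * c2) := by
      refine ⟨m1 + 1, ?_⟩
      rw [mul_pow, pow_succ_idem hid2, pow_succ, hy1]
      linear_combination y1 * (x - e1) * hmul
    have hx2n : IsNilpotent ((x - e2) * c3) := by
      refine ⟨m2 + 1, ?_⟩
      rw [mul_pow, pow_succ_idem hid3, pow_succ, hy2]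
      linear_combination y2 * (x - e2) * hmul
    have hdecomp : x - (e1 * c2 + e2 * c3) = (x - e1) * c2 + (x - e2) * c3 := by
      linear_combination (-x) * hsum
    rw [hdecomp]
    exact (Commute.all _ _).isNilpotent_add hx1n hx2n

end CommLemmas

/-- A ring is *strongly 2-nil-clean* if every element is the sum of a tripotent
(`e ^ 3 = e`) and a nilpotent that commute. -/
def Strongly2NilClean (R : Type*) [Ring R] : Prop :=
  ∀ a : R, ∃ e w : R, e ^ 3 = e ∧ IsNilpotent w ∧ e * w = w * e ∧ a = e + w

theorem strongly2NilClean_iff_nilpotent_sub_pow_three (R : Type*) [Ring R] :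
    Strongly2NilClean R ↔ ∀ a : R, IsNilpotent (a - a ^ 3) := by
  constructor
  · intro h a
    obtain ⟨e, w, he, hw, hc, rfl⟩ := h a
    have h1 : w * e = e * w := hc.symm
    have h2 : ∀ x : R, w * (e * x) = e * (w * x) := fun x => by
      rw [← mul_assoc, h1, mul_assoc]
    have expand : (e + w) ^ 3 =
        e * (e * e) + (e * (e * w) + e * (e * w) + e * (e * w))
          + (e * (w * w) + e * (w * w) + e * (w * w)) + w * (w * w) := by
      rw [pow_succ, pow_succ, pow_one]
      simp only [mul_add, add_mul, h1, h2, mul_assoc]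
      abel
    have he' : e * (e * e) = e := by
      rw [← mul_assoc, ← sq, ← pow_succ]
      exact he
    have key : (e + w) - (e + w) ^ 3 =
        (1 - (e * e + e * e + e * e) - (e * w + e * w + e * w) - w * w) * w := by
      rw [expand, he']
      noncomm_ring
    rw [key]
    have hcomm : Commute (1 - (e * e + e * e + e * e) - (e * w + e * w + e * w) - w * w) w := by
      have hew : Commute e w := hc
      have hww : Commute w w := Commute.refl w
      exact ((((Commute.one_left w).sub_left
        (((hew.mul_left hew).add_left (hew.mul_left hew)).add_left (hew.mul_left hew))).sub_left
        (((hew.mul_left hww).add_left (hew.mul_left hww)).add_left (hew.mul_left hww))).sub_left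
        (hww.mul_left hww))
    exact hcomm.isNilpotent_mul_left hw
  · intro h a
    set f : Polynomial ℤ →+* R := (Polynomial.aeval a : Polynomial ℤ →ₐ[ℤ] R).toRingHom with hf
    set φ : (Polynomial ℤ ⧸ RingHom.ker f) →+* R := RingHom.kerLift f with hφ
    have hinj : Function.Injective φ := RingHom.kerLift_injective f
    set x : Polynomial ℤ ⧸ RingHom.ker f := Ideal.Quotient.mk _ Polynomial.X with hxdef
    have hφx : φ x = a := by
      rw [hxdef, hφ, RingHom.kerLift_mk, hf]
      simp
    have pullback : ∀ z : Polynomial ℤ ⧸ RingHom.ker f, IsNilpotent (φ z) → IsNilpotent z := by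
      rintro z ⟨n, hn⟩
      exact ⟨n, hinj (by rw [map_pow, hn, map_zero])⟩
    have h6R : IsNilpotent (6 : R) := by
      have h2 := h 2
      have : ((2 : R) - 2 ^ 3) = -6 := by norm_num
      rw [this] at h2
      rwa [isNilpotent_neg_iff] at h2
    have h6S : IsNilpotent (6 : Polynomial ℤ ⧸ RingHom.ker f) := by
      refine pullback _ ?_
      rw [map_ofNat]
      exact h6R
    have hxS : IsNilpotent (x - x ^ 3) := by
      refine pullback _ ?_
      rw [map_sub, map_pow, hφx]
      exact h a
    obtain ⟨e, he, hw⟩ := tripotent_lift_six x h6S hxS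
    refine ⟨φ e, a - φ e, ?_, ?_, ?_, ?_⟩
    · rw [← map_pow, he]
    · obtain ⟨n, hn⟩ := hw
      exact ⟨n, by rw [← hφx, ← map_sub, ← map_pow, hn, map_zero]⟩
    · rw [← hφx, ← map_sub, ← map_mul, ← map_mul, mul_comm]
    · abel
end

section
/- A ring R is strongly 2-nil-clean if and only if every element of R can be written as e + f + w where e and f are idempotents, w is nilpotent, and e, f, w commute pairwise. -/
section CommCore

variable {S : Type*} [CommRing S]

private lemma nil_of_sq (y c : S) (h : y * y = c * y) (hc : IsNilpotent c) :
    IsNilpotent y := by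
  obtain ⟨k, hk⟩ := hc
  have key : ∀ m : ℕ, y ^ (m + 1) = c ^ m * y := by
    intro m
    induction m with
    | zero => simp
    | succ m ih =>
      rw [pow_succ, ih, pow_succ, mul_assoc, h]
      ring
  exact ⟨k + 1, by rw [key, hk, zero_mul]⟩

/-- The central "corner" idempotents coming from a Bezout identity for `2^M` and `3^M`,
when `6` is nilpotent. -/
private lemma setup (h6 : IsNilpotent (6 : S)) :
    ∃ al be A K : S, al + be = 1 ∧ al * be = 0 ∧ IsNilpotent (2 * be) ∧
      IsNilpotent (3 * al) ∧ 2 * A * al = al ∧ 3 * K = 1 + A := by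
  obtain ⟨M, k, hMk', h6M⟩ : ∃ M k : ℕ, M = k + 1 ∧ (6 : S) ^ M = 0 := by
    obtain ⟨k, hk⟩ := h6
    exact ⟨k + 1, k, rfl, by rw [pow_succ, hk, zero_mul]⟩
  have hcop : IsCoprime ((2 : ℤ) ^ M) ((3 : ℤ) ^ M) := by
    refine IsCoprime.pow ?_
    rw [Int.isCoprime_iff_gcd_eq_one]
    norm_num
  obtain ⟨u, v, huv⟩ := hcop
  have hodd : Odd ((3 : ℤ) ^ M) := Odd.pow ⟨1, by ring⟩
  obtain ⟨A₀, hA₀⟩ : ∃ A₀ : ℤ, (3 : ℤ) ^ M + 1 = A₀ + A₀ := by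
    obtain ⟨r, hr⟩ := hodd
    exact ⟨r + 1, by rw [hr]; ring⟩
  have hoddk : Odd ((3 : ℤ) ^ k) := Odd.pow ⟨1, by ring⟩
  obtain ⟨K₀, hK₀⟩ : ∃ K₀ : ℤ, 1 + (3 : ℤ) ^ k = K₀ + K₀ := by
    obtain ⟨r, hr⟩ := hoddk
    exact ⟨r + 1, by rw [hr]; ring⟩
  have hMk : (3 : ℤ) ^ M = 3 * 3 ^ k := by rw [hMk', pow_succ]; ring
  have hKA : (3 : ℤ) * K₀ = 1 + A₀ := by linarith
  have h23 : (2 : S) ^ M * 3 ^ M = 6 ^ M := by rw [← mul_pow]; norm_num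
  have h2b0 : (2 : S) ^ M * ((v : S) * 3 ^ M) = 0 := by
    calc (2 : S) ^ M * ((v : S) * 3 ^ M) = (v : S) * (2 ^ M * 3 ^ M) := by ring
    _ = (v : S) * 6 ^ M := by rw [h23]
    _ = 0 := by rw [h6M, mul_zero]
  have h3a0 : (3 : S) ^ M * ((u : S) * 2 ^ M) = 0 := by
    calc (3 : S) ^ M * ((u : S) * 2 ^ M) = (u : S) * (2 ^ M * 3 ^ M) := by ring
    _ = (u : S) * 6 ^ M := by rw [h23]
    _ = 0 := by rw [h6M, mul_zero]
  refine ⟨(u : S) * 2 ^ M, (v : S) * 3 ^ M, ((A₀ : ℤ) : S), ((K₀ : ℤ) : S), ?_, ?_, ?_, ?_, ?_, ?_⟩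
  · have h1 : ((u * 2 ^ M + v * 3 ^ M : ℤ) : S) = ((1 : ℤ) : S) := by rw [huv]
    push_cast at h1
    exact h1
  · calc (u : S) * 2 ^ M * ((v : S) * 3 ^ M) = (u : S) * (v : S) * (2 ^ M * 3 ^ M) := by ring
    _ = (u : S) * (v : S) * 6 ^ M := by rw [h23]
    _ = 0 := by rw [h6M, mul_zero]
  · refine ⟨M + 1, ?_⟩
    have hexp : (2 * ((v : S) * 3 ^ M)) ^ (M + 1) =
        ((2 : S) ^ M * ((v : S) * 3 ^ M)) * (2 * ((v : S) * 3 ^ M) ^ M) := by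
      rw [mul_pow, pow_succ, pow_succ]
      ring
    rw [hexp, h2b0, zero_mul]
  · refine ⟨M + 1, ?_⟩
    have hexp : (3 * ((u : S) * 2 ^ M)) ^ (M + 1) =
        ((3 : S) ^ M * ((u : S) * 2 ^ M)) * (3 * ((u : S) * 2 ^ M) ^ M) := by
      rw [mul_pow, pow_succ, pow_succ]
      ring
    rw [hexp, h3a0, zero_mul]
  · have hA2 : (2 * A₀ : ℤ) = 3 ^ M + 1 := by linarith
    have hA' : (2 : S) * ((A₀ : ℤ) : S) = (3 : S) ^ M + 1 := by
      have := congrArg (fun z : ℤ => (z : S)) hA2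
      push_cast at this
      exact this
    calc 2 * ((A₀ : ℤ) : S) * ((u : S) * 2 ^ M)
        = (2 * ((A₀ : ℤ) : S)) * ((u : S) * 2 ^ M) := by ring
    _ = ((3 : S) ^ M + 1) * ((u : S) * 2 ^ M) := by rw [hA']
    _ = (3 : S) ^ M * ((u : S) * 2 ^ M) + (u : S) * 2 ^ M := by ring
    _ = (u : S) * 2 ^ M := by rw [h3a0, zero_add]
  · have := congrArg (fun z : ℤ => (z : S)) hKA
    push_cast at this
    exact this

/-- Core of the backward direction, in a commutative ring. -/
private lemma lemA (h6 : IsNilpotent (6 : S)) (e f w : S) (he : e * e = e) (hf : f * f = f)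
    (hw : IsNilpotent w) : ∃ t n : S, t ^ 3 = t ∧ IsNilpotent n ∧ e + f + w = t + n := by
  obtain ⟨al, be, A, K, hsum, hab, h2b, h3a, hA, hK⟩ := setup h6
  have ha2 : al * al = al := by linear_combination al * hsum - hab
  have hb2 : be * be = be := by linear_combination be * hsum - hab
  set t1 := e + f - 2 * (e * f) with ht1def
  set t2 := e + f - 3 * (e * f) with ht2def
  have h1 : t1 * t1 = t1 := by
    rw [ht1def]
    linear_combination (4 * f ^ 2 - 4 * f + 1) * he + hf
  have h2 : t2 ^ 3 = t2 := by
    rw [ht2def]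
    linear_combination ((-27) * e * f ^ 3 + 27 * e * f ^ 2 - 9 * (e * f) + e + 9 * f ^ 2 - 6 * f + 1) * he +
      ((-9) * (e * f) + 3 * e + f + 1) * hf
  refine ⟨t1 * be + t2 * al, w + e * f * (2 * be) + e * f * (3 * al), ?_, ?_, ?_⟩
  · linear_combination (t1 * be ^ 3 + 3 * t2 * al * be ^ 2 + be ^ 3) * h1 + al ^ 3 * h2 +
      (3 * t1 * t2 ^ 2 * be + t2 * al + t2) * ha2 + (3 * t1 * t2 * al + t1 * be + t1) * hb2 +
      (3 * t1 * t2 ^ 2 + 3 * t1 * t2) * hab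
  · have hn1 : IsNilpotent (e * f * (2 * be)) := (Commute.all _ _).isNilpotent_mul_left h2b
    have hn2 : IsNilpotent (e * f * (3 * al)) := (Commute.all _ _).isNilpotent_mul_left h3a
    exact (Commute.all _ _).isNilpotent_add ((Commute.all _ _).isNilpotent_add hw hn1) hn2
  · linear_combination (-e - f) * hsum

/-- Core of the forward direction, in a commutative ring. -/
private lemma lemB (h6 : IsNilpotent (6 : S)) (t w : S) (ht : t ^ 3 = t)
    (hw : IsNilpotent w) :
    ∃ e f n : S, e * e = e ∧ f * f = f ∧ IsNilpotent n ∧ t + w = e + f + n := by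
  obtain ⟨al, be, A, K, hsum, hab, h2b, h3a, hA, hK⟩ := setup h6
  have ha2 : al * al = al := by linear_combination al * hsum - hab
  have hb2 : be * be = be := by linear_combination be * hsum - hab
  refine ⟨t * t, A * (t * t - t) * al,
    w + (t - t * t) * be + K * (t - t * t) * (3 * al), ?_, ?_, ?_, ?_⟩
  · linear_combination t * ht
  · linear_combination (t * A ^ 2 * al ^ 2 - 2 * A ^ 2 * al ^ 2) * ht +
      (2 * t ^ 2 * A ^ 2 - 2 * t * A ^ 2) * ha2 + (t ^ 2 * A - t * A) * hA
  · have hy : (t - t * t) * be * ((t - t * t) * be) = (-(2 * be)) * ((t - t * t) * be) := by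
      linear_combination (t * be ^ 2 - 2 * be ^ 2) * ht
    have hny : IsNilpotent ((t - t * t) * be) := nil_of_sq _ _ hy h2b.neg
    have hnz : IsNilpotent (K * (t - t * t) * (3 * al)) :=
      (Commute.all _ _).isNilpotent_mul_left h3a
    have hnz' : IsNilpotent (K * (t - t * t) * (3 * al)) := hnz
    have : IsNilpotent (w + (t - t * t) * be) :=
      (Commute.all _ _).isNilpotent_add hw hny
    have goal : IsNilpotent (w + (t - t * t) * be + K * (t - t * t) * (3 * al)) :=
      (Commute.all _ _).isNilpotent_add this hnz
    simpa [mul_assoc] using goal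
  · linear_combination (-t ^ 2 * A + 3 * t ^ 2 * K + t * A - 3 * t * K) * hsum +
      (-t ^ 2 * be + t ^ 2 + t * be - t) * hK

end CommCore

section RingWrappers

private lemma six_identity2 {S : Type*} [CommRing S] (t w : S) (ht : t ^ 3 = t)
    (h2 : w + t = 2) : (6 : S) = w * (11 - 6 * w + w * w) := by
  linear_combination (-w ^ 2 + w * t + 4 * w - t ^ 2 - 2 * t - 3) * h2 + ht

private lemma six_identity2' {S : Type*} [Ring S] (hcomm : ∀ x y : S, x * y = y * x)
    (t w : S) (ht : t ^ 3 = t) (h2 : w + t = 2) : (6 : S) = w * (11 - 6 * w + w * w) := by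
  letI : CommRing S := { ‹Ring S› with mul_comm := hcomm }
  exact six_identity2 t w ht h2

private lemma six_identity3 {S : Type*} [CommRing S] (e f w : S) (he : e * e = e)
    (hf : f * f = f) (h3 : w + e + f = 3) : (6 : S) = w * (11 - 6 * w + w * w) := by
  linear_combination
    (-w ^ 2 + w * e + w * f + 3 * w - e ^ 2 - 2 * (e * f) - f ^ 2 - 2) * h3 +
    (e + 3 * f - 2) * he + (3 * e + f - 2) * hf

private lemma six_identity3' {S : Type*} [Ring S] (hcomm : ∀ x y : S, x * y = y * x)
    (e f w : S) (he : e * e = e) (hf : f * f = f) (h3 : w + e + f = 3) :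
    (6 : S) = w * (11 - 6 * w + w * w) := by
  letI : CommRing S := { ‹Ring S› with mul_comm := hcomm }
  exact six_identity3 e f w he hf h3

private lemma lemA' {S : Type*} [Ring S] (hcomm : ∀ x y : S, x * y = y * x)
    (h6 : IsNilpotent (6 : S)) (e f w : S) (he : e * e = e) (hf : f * f = f)
    (hw : IsNilpotent w) : ∃ t n : S, t ^ 3 = t ∧ IsNilpotent n ∧ e + f + w = t + n := by
  letI : CommRing S := { ‹Ring S› with mul_comm := hcomm }
  exact lemA h6 e f w he hf hw

private lemma lemB' {S : Type*} [Ring S] (hcomm : ∀ x y : S, x * y = y * x)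
    (h6 : IsNilpotent (6 : S)) (t w : S) (ht : t ^ 3 = t) (hw : IsNilpotent w) :
    ∃ e f n : S, e * e = e ∧ f * f = f ∧ IsNilpotent n ∧ t + w = e + f + n := by
  letI : CommRing S := { ‹Ring S› with mul_comm := hcomm }
  exact lemB h6 t w ht hw

end RingWrappers

section Glue

variable {R : Type*} [Ring R]

private lemma mem_nil {T : Subalgebra ℤ R} (x : T) (h : IsNilpotent (x : R)) :
    IsNilpotent x := by
  obtain ⟨k, hk⟩ := h
  refine ⟨k, Subtype.ext ?_⟩
  push_cast
  exact hk

private lemma adjoin_comm {s : Set R} (hcomm : ∀ a ∈ s, ∀ b ∈ s, a * b = b * a)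
    (x y : Algebra.adjoin ℤ s) : x * y = y * x := by
  have hle := Algebra.adjoin_le_centralizer_centralizer ℤ s
  exact Subtype.ext
    (Set.centralizer_centralizer_comm_of_comm hcomm _ (hle x.2) _ (hle y.2))

private lemma six_nil_of_two (t w : R) (ht : t ^ 3 = t) (hw : IsNilpotent w)
    (hc : t * w = w * t) (heq : (2 : R) = t + w) : IsNilpotent (6 : R) := by
  have hcomm : ∀ a ∈ ({t, w} : Set R), ∀ b ∈ ({t, w} : Set R), a * b = b * a := by
    intro a ha b hb
    simp only [Set.mem_insert_iff, Set.mem_singleton_iff] at ha hb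
    rcases ha with rfl | rfl <;> rcases hb with rfl | rfl <;>
      first | rfl | exact hc | exact hc.symm
  set T := Algebra.adjoin ℤ ({t, w} : Set R) with hT
  have htm : t ∈ T := Algebra.subset_adjoin (by simp)
  have hwm : w ∈ T := Algebra.subset_adjoin (by simp)
  set tS : T := ⟨t, htm⟩ with htS'
  set wS : T := ⟨w, hwm⟩ with hwS'
  have htS : tS ^ 3 = tS := Subtype.ext (by push_cast [htS']; exact ht)
  have hwS : IsNilpotent wS := mem_nil wS hw
  have h2S : wS + tS = 2 := by
    rw [show (2 : T) = 1 + 1 by norm_num]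
    refine Subtype.ext ?_
    push_cast [htS', hwS']
    rw [show (1 + 1 : R) = 2 by norm_num, heq]
    exact add_comm w t
  have h6S : (6 : T) = wS * (11 - 6 * wS + wS * wS) :=
    six_identity2' (adjoin_comm hcomm) tS wS htS h2S
  have h6nil : IsNilpotent (6 : T) := by
    rw [h6S]
    exact Commute.isNilpotent_mul_right (adjoin_comm hcomm wS _) hwS
  have := h6nil.map (Subalgebra.val T)
  rwa [map_ofNat] at this

private lemma six_nil_of_three (e f w : R) (he : e * e = e) (hf : f * f = f)
    (hw : IsNilpotent w) (hef : e * f = f * e) (hew : e * w = w * e) (hfw : f * w = w * f)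
    (heq : (3 : R) = e + f + w) : IsNilpotent (6 : R) := by
  have hcomm : ∀ a ∈ ({e, f, w} : Set R), ∀ b ∈ ({e, f, w} : Set R), a * b = b * a := by
    intro a ha b hb
    simp only [Set.mem_insert_iff, Set.mem_singleton_iff] at ha hb
    rcases ha with rfl | rfl | rfl <;> rcases hb with rfl | rfl | rfl <;>
      first | rfl | exact hef | exact hef.symm | exact hew | exact hew.symm |
        exact hfw | exact hfw.symm
  set T := Algebra.adjoin ℤ ({e, f, w} : Set R) with hT
  have hem : e ∈ T := Algebra.subset_adjoin (by simp)
  have hfm : f ∈ T := Algebra.subset_adjoin (by simp)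
  have hwm : w ∈ T := Algebra.subset_adjoin (by simp)
  set eS : T := ⟨e, hem⟩ with heS'
  set fS : T := ⟨f, hfm⟩ with hfS'
  set wS : T := ⟨w, hwm⟩ with hwS'
  have heS : eS * eS = eS := Subtype.ext (by push_cast [heS']; exact he)
  have hfS : fS * fS = fS := Subtype.ext (by push_cast [hfS']; exact hf)
  have hwS : IsNilpotent wS := mem_nil wS hw
  have h3S : wS + eS + fS = 3 := by
    rw [show (3 : T) = 1 + 1 + 1 by norm_num]
    refine Subtype.ext ?_
    push_cast [heS', hfS', hwS']
    rw [show (1 + 1 + 1 : R) = 3 by norm_num, heq]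
    abel
  have h6S : (6 : T) = wS * (11 - 6 * wS + wS * wS) :=
    six_identity3' (adjoin_comm hcomm) eS fS wS heS hfS h3S
  have h6nil : IsNilpotent (6 : T) := by
    rw [h6S]
    exact Commute.isNilpotent_mul_right (adjoin_comm hcomm wS _) hwS
  have := h6nil.map (Subalgebra.val T)
  rwa [map_ofNat] at this

end Glue

theorem strongly2NilClean_iff_two_idempotents_add_nilpotent (R : Type*) [Ring R] :
    Strongly2NilClean R ↔
      ∀ a : R, ∃ e f w : R, IsIdempotentElem e ∧ IsIdempotentElem f ∧
        IsNilpotent w ∧ e * f = f * e ∧ e * w = w * e ∧ f * w = w * f ∧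
        a = e + f + w := by
  constructor
  · intro h a
    have h6 : IsNilpotent (6 : R) := by
      obtain ⟨t, w, ht, hw, hc, heq⟩ := h 2
      exact six_nil_of_two t w ht hw hc heq
    obtain ⟨t, w, ht, hw, hc, heq⟩ := h a
    have hcomm : ∀ x ∈ ({t, w} : Set R), ∀ y ∈ ({t, w} : Set R), x * y = y * x := by
      intro x hx y hy
      simp only [Set.mem_insert_iff, Set.mem_singleton_iff] at hx hy
      rcases hx with rfl | rfl <;> rcases hy with rfl | rfl <;>
        first | rfl | exact hc | exact hc.symm
    set T := Algebra.adjoin ℤ ({t, w} : Set R) with hT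
    have htm : t ∈ T := Algebra.subset_adjoin (by simp)
    have hwm : w ∈ T := Algebra.subset_adjoin (by simp)
    set tS : T := ⟨t, htm⟩ with htS'
    set wS : T := ⟨w, hwm⟩ with hwS'
    have htS : tS ^ 3 = tS := Subtype.ext (by push_cast [htS']; exact ht)
    have hwS : IsNilpotent wS := mem_nil wS hw
    have h6T : IsNilpotent (6 : T) := by
      refine mem_nil (6 : T) ?_
      rw [show ((6 : T) : R) = 6 from map_ofNat (Subalgebra.val T) 6]
      exact h6
    obtain ⟨eS, fS, nS, heS, hfS, hnS, hsumS⟩ :=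
      lemB' (adjoin_comm hcomm) h6T tS wS htS hwS
    refine ⟨(eS : R), (fS : R), (nS : R), ?_, ?_, ?_, ?_, ?_, ?_, ?_⟩
    · show (eS : R) * (eS : R) = (eS : R)
      have := congrArg (Subtype.val) heS
      exact_mod_cast this
    · show (fS : R) * (fS : R) = (fS : R)
      have := congrArg (Subtype.val) hfS
      exact_mod_cast this
    · simpa using hnS.map (Subalgebra.val T)
    · have := congrArg (Subtype.val) (adjoin_comm hcomm eS fS)
      exact_mod_cast this
    · have := congrArg (Subtype.val) (adjoin_comm hcomm eS nS)
      exact_mod_cast this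
    · have := congrArg (Subtype.val) (adjoin_comm hcomm fS nS)
      exact_mod_cast this
    · have := congrArg (Subtype.val) hsumS
      push_cast [htS', hwS'] at this
      rw [heq]
      exact this
  · intro h a
    have h6 : IsNilpotent (6 : R) := by
      obtain ⟨e, f, w, he, hf, hw, hef, hew, hfw, heq⟩ := h 3
      exact six_nil_of_three e f w he hf hw hef hew hfw heq
    obtain ⟨e, f, w, he, hf, hw, hef, hew, hfw, heq⟩ := h a
    have hcomm : ∀ x ∈ ({e, f, w} : Set R), ∀ y ∈ ({e, f, w} : Set R), x * y = y * x := by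
      intro x hx y hy
      simp only [Set.mem_insert_iff, Set.mem_singleton_iff] at hx hy
      rcases hx with rfl | rfl | rfl <;> rcases hy with rfl | rfl | rfl <;>
        first | rfl | exact hef | exact hef.symm | exact hew | exact hew.symm |
          exact hfw | exact hfw.symm
    set T := Algebra.adjoin ℤ ({e, f, w} : Set R) with hT
    have hem : e ∈ T := Algebra.subset_adjoin (by simp)
    have hfm : f ∈ T := Algebra.subset_adjoin (by simp)
    have hwm : w ∈ T := Algebra.subset_adjoin (by simp)
    set eS : T := ⟨e, hem⟩ with heS'
    set fS : T := ⟨f, hfm⟩ with hfS'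
    set wS : T := ⟨w, hwm⟩ with hwS'
    have heS : eS * eS = eS := Subtype.ext (by push_cast [heS']; exact he)
    have hfS : fS * fS = fS := Subtype.ext (by push_cast [hfS']; exact hf)
    have hwS : IsNilpotent wS := mem_nil wS hw
    have h6T : IsNilpotent (6 : T) := by
      refine mem_nil (6 : T) ?_
      rw [show ((6 : T) : R) = 6 from map_ofNat (Subalgebra.val T) 6]
      exact h6
    obtain ⟨tS, nS, htS, hnS, hsumS⟩ :=
      lemA' (adjoin_comm hcomm) h6T eS fS wS heS hfS hwS
    refine ⟨(tS : R), (nS : R), ?_, ?_, ?_, ?_⟩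
    · have := congrArg (Subtype.val) htS
      exact_mod_cast this
    · simpa using hnS.map (Subalgebra.val T)
    · have := congrArg (Subtype.val) (adjoin_comm hcomm tS nS)
      exact_mod_cast this
    · have := congrArg (Subtype.val) hsumS
      push_cast [heS', hfS', hwS'] at this
      rw [heq]
      exact this
end

section
/- A ring R is strongly 2-nil-clean if and only if the following three conditions hold: (1) R is trinil clean; (2) R is left quasi-duo, i.e., every maximal left ideal of R is a two-sided ideal; (3) every element of the Jacobson radical J(R) is nilpotent. -/
section CommPart
variable {A : Type*} [CommRing A]

/-- square nilpotent implies nilpotent -/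
lemma isNilpotent_of_sq {x : A} (h : IsNilpotent (x * x)) : IsNilpotent x := by
  obtain ⟨n, hn⟩ := h
  exact ⟨2 * n, by rw [pow_mul, pow_two]; exact hn⟩

lemma idem_pow_eq {e : A} (he : e * e = e) : ∀ {m : ℕ}, 1 ≤ m → e ^ m = e := by
  intro m hm
  induction m with
  | zero => omega
  | succ k ih =>
    rcases Nat.eq_or_lt_of_le hm with h | h
    · simp [← h]
    · rw [pow_succ, ih (by omega), he]

lemma idem_nilpotent_eq_zero {q : A} (hq : q * q = q) (hn : IsNilpotent q) : q = 0 := by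
  obtain ⟨n, hn⟩ := hn
  rcases Nat.eq_zero_or_pos n with rfl | hpos
  · have : (1 : A) = 0 := by simpa using hn
    calc q = q * 1 := by ring
    _ = 0 := by rw [this]; ring
  · rw [idem_pow_eq hq hpos] at hn; exact hn

/-- lifting idempotents in a commutative ring -/
lemma idem_lift : ∀ (K : ℕ) (x : A), (x - x ^ 2) ^ K = 0 →
    ∃ e : A, e * e = e ∧ IsNilpotent (x - e) := by
  intro K
  induction K using Nat.strong_induction_on with
  | _ K ih =>
    intro x hK
    match K, hK with
    | 0, hK =>
      have h10 : (1 : A) = 0 := by simpa using hK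
      refine ⟨0, by ring, ⟨1, ?_⟩⟩
      calc (x - 0) ^ 1 = x * 1 := by ring
      _ = 0 := by rw [h10]; ring
    | 1, hK =>
      refine ⟨x, ?_, by simp⟩
      have : x - x ^ 2 = 0 := by simpa using hK
      have := sub_eq_zero.mp this
      calc x * x = x ^ 2 := by ring
      _ = x := this.symm
    | (k+2), hK =>
      set y := 3 * x ^ 2 - 2 * x ^ 3 with hy
      have key : y - y ^ 2 = (x - x ^ 2) ^ 2 * ((3 - 2 * x) * (1 + 2 * x)) := by
        rw [hy]; ring
      have hyK : (y - y ^ 2) ^ (k + 1) = 0 := by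
        rw [key, mul_pow, ← pow_mul]
        have h1 : (x - x ^ 2) ^ (2 * (k + 1)) = 0 := by
          have : 2 * (k + 1) = (k + 2) + k := by omega
          rw [this, pow_add, hK, zero_mul]
        rw [h1, zero_mul]
      obtain ⟨e, he, hnil⟩ := ih (k + 1) (by omega) y hyK
      refine ⟨e, he, ?_⟩
      have hxy : x - y = (x - x ^ 2) * (1 - 2 * x) := by rw [hy]; ring
      have hnil1 : IsNilpotent (x - y) := by
        rw [hxy]
        exact (Commute.all _ _).isNilpotent_mul_right ⟨k + 2, hK⟩
      have : x - e = (x - y) + (y - e) := by ring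
      rw [this]
      exact (Commute.all _ _).isNilpotent_add hnil1 hnil


/-- lifting tripotents along nilpotents in a commutative ring -/
lemma trip_lift (t : A) (h3 : IsNilpotent (t - t ^ 3)) (h6 : IsNilpotent (6 : A)) :
    ∃ e : A, e ^ 3 = e ∧ IsNilpotent (t - e) := by
  classical
  obtain ⟨K, hK⟩ := h6
  rcases Nat.eq_zero_or_pos K with rfl | hKpos
  · have h10 : (1 : A) = 0 := by simpa using hK
    refine ⟨0, by ring, ⟨1, ?_⟩⟩
    calc (t - 0) ^ 1 = t * 1 := by ring
    _ = 0 := by rw [h10]; ring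
  -- Bezout data
  obtain ⟨u, v, huv⟩ : IsCoprime ((2 : ℤ) ^ K) ((3 : ℤ) ^ K) :=
    (show IsCoprime (2 : ℤ) 3 from ⟨2, -1, by ring⟩).pow
  obtain ⟨c, z, hcz⟩ : IsCoprime ((2 : ℤ)) ((3 : ℤ) ^ K) :=
    (show IsCoprime (2 : ℤ) 3 from ⟨2, -1, by ring⟩).pow_right
  set α : A := ((u * 2 ^ K : ℤ) : A) with hα
  set β : A := ((v * 3 ^ K : ℤ) : A) with hβ
  set γ : A := ((c : ℤ) : A) with hγ
  set ζ : A := ((z : ℤ) : A) with hζ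
  have h1 : α + β = 1 := by
    rw [hα, hβ, ← Int.cast_add, ← Int.cast_one]
    exact_mod_cast congrArg (fun n : ℤ => (n : A)) huv
  have hαβ : α * β = 0 := by
    have : α * β = ((u * v : ℤ) : A) * (6 : A) ^ K := by
      rw [hα, hβ, show (6 : A) = 2 * 3 by norm_num, mul_pow]; push_cast; ring
    rw [this, hK, mul_zero]
  have h3α : (3 : A) ^ K * α = 0 := by
    have : (3 : A) ^ K * α = ((u : ℤ) : A) * (6 : A) ^ K := by
      rw [hα, show (6 : A) = 2 * 3 by norm_num, mul_pow]; push_cast; ring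
    rw [this, hK, mul_zero]
  have h2β : (2 : A) ^ K * β = 0 := by
    have : (2 : A) ^ K * β = ((v : ℤ) : A) * (6 : A) ^ K := by
      rw [hβ, show (6 : A) = 2 * 3 by norm_num, mul_pow]; push_cast; ring
    rw [this, hK, mul_zero]
  have hα2 : α * α = α := by linear_combination α * h1 - hαβ
  have hβ2 : β * β = β := by linear_combination β * h1 - hαβ
  have hcz' : γ * 2 + ζ * (3 : A) ^ K = 1 := by
    rw [hγ, hζ]
    have := congrArg (fun n : ℤ => (n : A)) hcz
    push_cast at this
    exact this
  have h2γα : 2 * γ * α = α := by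
    linear_combination α * hcz' - ζ * h3α
  have hn' : IsNilpotent (t - t ^ 3) := h3
  -- beta part
  have hx2 : ((t * β) - (t * β) ^ 2) ^ 2
      = (t ^ 2 - t ^ 3) * (2 * β) - (t * (t - t ^ 3)) * β := by
    linear_combination ((t ^ 2 - 2 * t ^ 3 + t ^ 4) + (t ^ 4 - 2 * t ^ 3) * β + t ^ 4 * β ^ 2) * hβ2
  have h2βnil : IsNilpotent ((2 : A) * β) := by
    refine ⟨K, ?_⟩
    rw [mul_pow, idem_pow_eq hβ2 hKpos, h2β]
  have hxnil : IsNilpotent ((t * β) - (t * β) ^ 2) := by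
    apply isNilpotent_of_sq
    have : ((t * β) - (t * β) ^ 2) * ((t * β) - (t * β) ^ 2)
        = ((t * β) - (t * β) ^ 2) ^ 2 := by ring
    rw [this, hx2]
    exact (Commute.all _ _).isNilpotent_sub
      ((Commute.all _ _).isNilpotent_mul_left h2βnil)
      ((Commute.all _ _).isNilpotent_mul_right
        ((Commute.all _ _).isNilpotent_mul_left hn'))
  obtain ⟨K2, hK2⟩ := hxnil
  obtain ⟨f, hf, hxf⟩ := idem_lift K2 (t * β) hK2
  -- alpha part
  have hhh : IsNilpotent ((t ^ 2 + t) * γ * α - ((t ^ 2 + t) * γ * α) ^ 2) := by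
    have : (t ^ 2 + t) * γ * α - ((t ^ 2 + t) * γ * α) ^ 2
        = (t + 2) * γ ^ 2 * α * (t - t ^ 3) := by
      linear_combination (-((t ^ 2 + t) ^ 2 * γ ^ 2)) * hα2 - ((t ^ 2 + t) * γ) * h2γα
    rw [this]
    exact (Commute.all _ _).isNilpotent_mul_left hn'
  have hkk : IsNilpotent ((t ^ 2 - t) * γ * α - ((t ^ 2 - t) * γ * α) ^ 2) := by
    have : (t ^ 2 - t) * γ * α - ((t ^ 2 - t) * γ * α) ^ 2
        = -((2 - t) * γ ^ 2 * α * (t - t ^ 3)) := by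
      linear_combination (-((t ^ 2 - t) ^ 2 * γ ^ 2)) * hα2 + ((t - t ^ 2) * γ) * h2γα
    rw [this]
    exact ((Commute.all _ _).isNilpotent_mul_left hn').neg
  obtain ⟨K3, hK3⟩ := hhh
  obtain ⟨f₁, hf₁, hhf₁⟩ := idem_lift K3 ((t ^ 2 + t) * γ * α) hK3
  obtain ⟨K4, hK4⟩ := hkk
  obtain ⟨g₁, hg₁, hkg₁⟩ := idem_lift K4 ((t ^ 2 - t) * γ * α) hK4
  have hhk0 : ((t ^ 2 + t) * γ * α) * ((t ^ 2 - t) * γ * α)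
      = -(t * γ ^ 2 * α * (t - t ^ 3)) := by
    linear_combination (γ ^ 2 * (t ^ 4 - t ^ 2)) * hα2
  have hfgnil : IsNilpotent (f₁ * g₁) := by
    have hfh : IsNilpotent (f₁ - (t ^ 2 + t) * γ * α) := by
      rw [← neg_sub ((t ^ 2 + t) * γ * α) f₁]; exact hhf₁.neg
    have hgk : IsNilpotent (g₁ - (t ^ 2 - t) * γ * α) := by
      rw [← neg_sub ((t ^ 2 - t) * γ * α) g₁]; exact hkg₁.neg
    have : f₁ * g₁ = (f₁ - (t ^ 2 + t) * γ * α) * g₁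
        + ((t ^ 2 + t) * γ * α) * (g₁ - (t ^ 2 - t) * γ * α)
        + ((t ^ 2 + t) * γ * α) * ((t ^ 2 - t) * γ * α) := by ring
    rw [this, hhk0]
    refine (Commute.all _ _).isNilpotent_add ((Commute.all _ _).isNilpotent_add ?_ ?_) ?_
    · exact (Commute.all _ _).isNilpotent_mul_right hfh
    · exact (Commute.all _ _).isNilpotent_mul_left hgk
    · exact ((Commute.all _ _).isNilpotent_mul_left hn').neg
  have hfg : f₁ * g₁ = 0 := by
    refine idem_nilpotent_eq_zero ?_ hfgnil
    calc f₁ * g₁ * (f₁ * g₁) = (f₁ * f₁) * (g₁ * g₁) := by ring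
    _ = f₁ * g₁ := by rw [hf₁, hg₁]
  -- assemble
  have hα3 : α * α * α = α := by linear_combination (α + 1) * hα2
  have hD3 : (f₁ - g₁) * (f₁ - g₁) * (f₁ - g₁) = f₁ - g₁ := by
    linear_combination (f₁ + 1) * hf₁ - (g₁ + 1) * hg₁ - (3 * (f₁ - g₁)) * hfg
  have hE1 : ((f₁ - g₁) * α) * ((f₁ - g₁) * α) * ((f₁ - g₁) * α) = (f₁ - g₁) * α := by
    calc ((f₁ - g₁) * α) * ((f₁ - g₁) * α) * ((f₁ - g₁) * α)
        = ((f₁ - g₁) * (f₁ - g₁) * (f₁ - g₁)) * (α * α * α) := by ring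
    _ = (f₁ - g₁) * α := by rw [hD3, hα3]
  have hE2 : (f * β) * (f * β) = f * β := by
    calc f * β * (f * β) = (f * f) * (β * β) := by ring
    _ = f * β := by rw [hf, hβ2]
  have hE2c : (f * β) * (f * β) * (f * β) = f * β := by rw [hE2, hE2]
  have hortho : ((f₁ - g₁) * α) * (f * β) = 0 := by
    linear_combination ((f₁ - g₁) * f) * hαβ
  refine ⟨(f₁ - g₁) * α + f * β, ?_, ?_⟩
  · calc ((f₁ - g₁) * α + f * β) ^ 3
        = ((f₁ - g₁) * α) * ((f₁ - g₁) * α) * ((f₁ - g₁) * α)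
          + (f * β) * (f * β) * (f * β)
          + 3 * ((f₁ - g₁) * α + f * β) * (((f₁ - g₁) * α) * (f * β)) := by ring
    _ = (f₁ - g₁) * α + f * β := by rw [hE1, hE2c, hortho]; ring
  · have hsplit : t - ((f₁ - g₁) * α + f * β)
        = (t * α - (f₁ - g₁) * α) + (t * β - f * β) := by
      linear_combination (-t) * h1
    rw [hsplit]
    have h1' : t * α - (f₁ - g₁) * α
        = ((t ^ 2 + t) * γ * α - f₁) * α - ((t ^ 2 - t) * γ * α - g₁) * α := by
      linear_combination (-(2 * t * γ)) * hα2 - t * h2γα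
    have h2' : t * β - f * β = (t * β - f) * β := by
      linear_combination (-t) * hβ2
    refine (Commute.all _ _).isNilpotent_add ?_ ?_
    · rw [h1']
      exact (Commute.all _ _).isNilpotent_sub
        ((Commute.all _ _).isNilpotent_mul_right hhf₁)
        ((Commute.all _ _).isNilpotent_mul_right hkg₁)
    · rw [h2']
      exact (Commute.all _ _).isNilpotent_mul_right hxf


end CommPart

section Aux2
variable {R : Type*} [Ring R]


lemma coe_nilpotent_of_nilpotent {S : Subring R} {x : ↥S} (h : IsNilpotent (x : R)) :
    IsNilpotent x := by
  obtain ⟨n, hn⟩ := h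
  exact ⟨n, by ext; push_cast; exact hn⟩

lemma nilpotent_of_coe_nilpotent {S : Subring R} {x : ↥S} (h : IsNilpotent x) :
    IsNilpotent (x : R) := by
  obtain ⟨n, hn⟩ := h
  refine ⟨n, ?_⟩
  have := congrArg (fun y : ↥S => (y : R)) hn
  push_cast at this
  exact this

/-- Key lemma: if `a - a^3` is nilpotent for every `a`, the ring is strongly 2-nil-clean. -/
lemma strongly2NilClean_of_forall_nilpotent (H : ∀ a : R, IsNilpotent (a - a ^ 3)) :
    Strongly2NilClean R := by
  intro a
  set S : Subring R := Subring.closure {a} with hS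
  letI : CommRing ↥S := Subring.closureCommRingOfComm (by rintro x rfl y rfl; rfl)
  set t : ↥S := ⟨a, Subring.subset_closure rfl⟩ with ht
  have h3 : IsNilpotent (t - t ^ 3) := by
    apply coe_nilpotent_of_nilpotent
    have : ((t - t ^ 3 : ↥S) : R) = a - a ^ 3 := by push_cast; rfl
    rw [this]; exact H a
  have h6 : IsNilpotent (6 : ↥S) := by
    apply coe_nilpotent_of_nilpotent
    have h2 : IsNilpotent ((2 : R) - 2 ^ 3) := H 2
    have : ((2 : R) - 2 ^ 3) = -6 := by norm_num
    rw [this] at h2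
    have := h2.neg
    rw [neg_neg] at this
    have hc : ((6 : ↥S) : R) = (6 : R) := by push_cast; rfl
    rw [hc]; exact this
  obtain ⟨e, he3, hnil⟩ := trip_lift t h3 h6
  refine ⟨(e : R), a - (e : R), ?_, ?_, ?_, by abel⟩
  · have : ((e ^ 3 : ↥S) : R) = ((e : R)) ^ 3 := by push_cast; rfl
    rw [← this, he3]
  · have : a - (e : R) = ((t - e : ↥S) : R) := by push_cast; rfl
    rw [this]; exact nilpotent_of_coe_nilpotent hnil
  · have hcomm : e * (t - e) = (t - e) * e := mul_comm _ _
    have := congrArg (fun x : ↥S => (x : R)) hcomm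
    push_cast at this
    convert this using 2 <;> rfl


lemma forall_nilpotent_of_strongly2NilClean (h : Strongly2NilClean R) :
    ∀ a : R, IsNilpotent (a - a ^ 3) := by
  intro a
  obtain ⟨e, w, he3, hw, hcomm, rfl⟩ := h a
  set S : Subring R := Subring.closure {e, w} with hS
  letI : CommRing ↥S := Subring.closureCommRingOfComm (by
    rintro x hx y hy
    rcases hx with rfl | rfl <;> rcases hy with rfl | rfl
    · rfl
    · exact hcomm
    · exact hcomm.symm
    · rfl)
  set E : ↥S := ⟨e, Subring.subset_closure (by simp)⟩ with hE
  set W : ↥S := ⟨w, Subring.subset_closure (by simp)⟩ with hW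
  have hE3 : E ^ 3 = E := by
    ext; push_cast; exact he3
  have hWnil : IsNilpotent W := coe_nilpotent_of_nilpotent (by exact hw)
  have key : (E + W) - (E + W) ^ 3 = W * (1 - 3 * E ^ 2 - 3 * (E * W) - W ^ 2) := by
    linear_combination -hE3
  have : IsNilpotent ((E + W) - (E + W) ^ 3) := by
    rw [key]
    exact (Commute.all _ _).isNilpotent_mul_right hWnil
  have := nilpotent_of_coe_nilpotent this
  have hc : (((E + W) - (E + W) ^ 3 : ↥S) : R) = (e + w) - (e + w) ^ 3 := by push_cast; rfl
  rwa [hc] at this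

lemma exists_left_inv_one_add_of_mem_jacobson {j : R} (hj : j ∈ Ideal.jacobson (⊥ : Ideal R)) :
    ∃ z : R, z * (1 + j) = 1 := by
  obtain ⟨z, hz⟩ := Ideal.mem_jacobson_iff.mp hj 1
  rw [Ideal.mem_bot, sub_eq_zero] at hz
  rw [mul_one] at hz
  exact ⟨z, by rw [mul_add, mul_one, add_comm]; exact hz⟩

lemma jacobson_nilpotent_of_forall (H : ∀ a : R, IsNilpotent (a - a ^ 3)) :
    ∀ x ∈ Ideal.jacobson (⊥ : Ideal R), IsNilpotent x := by
  intro x hx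
  have hx2 : -(x * x) ∈ Ideal.jacobson (⊥ : Ideal R) :=
    Submodule.neg_mem _ (Ideal.mul_mem_left _ x hx)
  obtain ⟨z, hz⟩ := exists_left_inv_one_add_of_mem_jacobson hx2
  have hz1 : z * (1 - x * x) = 1 := by rw [sub_eq_add_neg]; exact hz
  have hzJ : z * (x * x) ∈ Ideal.jacobson (⊥ : Ideal R) :=
    Ideal.mul_mem_left _ z (Ideal.mul_mem_left _ x hx)
  obtain ⟨z', hz'⟩ := exists_left_inv_one_add_of_mem_jacobson hzJ
  have hzz' : z' * z = 1 := by
    have h0 : z - z * (x * x) = 1 := by rw [← mul_one z, mul_assoc, ← mul_sub, one_mul] at *; exact hz1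
    have : z = 1 + z * (x * x) := eq_add_of_sub_eq h0
    rw [← this] at hz'; exact hz'
  have hsz : (1 - x * x) * z = 1 := by
    have h1 : z' = 1 - x * x := by
      calc z' = z' * (z * (1 - x * x)) := by rw [hz1, mul_one]
      _ = (z' * z) * (1 - x * x) := by rw [mul_assoc]
      _ = 1 - x * x := by rw [hzz', one_mul]
    rw [← h1]; exact hzz'
  set u : Rˣ := ⟨1 - x * x, z, hsz, hz1⟩ with hu
  have huv : (u : R) = 1 - x * x := rfl
  have hcom : Commute x (u : R) := by
    show x * (1 - x * x) = (1 - x * x) * x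
    noncomm_ring
  have hinv : Commute x ((u⁻¹ : Rˣ) : R) := hcom.units_inv_right
  have hxu : x - x ^ 3 = x * (u : R) := by rw [huv]; noncomm_ring
  have hxx : x = (x - x ^ 3) * ((u⁻¹ : Rˣ) : R) := by
    rw [hxu, mul_assoc, Units.mul_inv, mul_one]
  rw [hxx]
  exact (hinv.sub_left (hinv.pow_left 3)).isNilpotent_mul_right (H x)


lemma quasiDuo_of_forall_nilpotent (H : ∀ a : R, IsNilpotent (a - a ^ 3)) :
    ∀ I : Ideal R, I.IsMaximal → ∀ a ∈ I, ∀ r : R, a * r ∈ I := by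
  intro I hI a ha r
  by_contra har
  haveI hsimple : IsSimpleModule R (R ⧸ I) :=
    isSimpleModule_iff_isCoatom.mpr (Ideal.isMaximal_def.mp hI)
  set M := R ⧸ I with hM
  let u : M := Submodule.Quotient.mk 1
  let w : M := Submodule.Quotient.mk r
  have hsm : ∀ s : R, s • u = Submodule.Quotient.mk s := by
    intro s
    show s • (Submodule.Quotient.mk 1 : M) = _
    rw [← Submodule.Quotient.mk_smul, smul_eq_mul, mul_one]
  have hu0 : u ≠ 0 := by
    intro h
    have h1 : (1 : R) ∈ I := (Submodule.Quotient.mk_eq_zero I).mp h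
    exact hI.ne_top ((Ideal.eq_top_iff_one I).mpr h1)
  have hau : a • u = 0 := by
    rw [hsm a, Submodule.Quotient.mk_eq_zero]; exact ha
  have haw : a • w ≠ 0 := by
    show a • (Submodule.Quotient.mk r : M) ≠ 0
    rw [← Submodule.Quotient.mk_smul, smul_eq_mul, ne_eq, Submodule.Quotient.mk_eq_zero]
    exact har
  have hw0 : w ≠ 0 := fun h => haw (by rw [h, smul_zero])
  -- step A
  obtain ⟨x₁, hx₁u, hx₁w⟩ : ∃ x₁ : R, x₁ • u = 0 ∧ x₁ • w = u + w := by
    rcases eq_bot_or_eq_top (Submodule.map (LinearMap.toSpanSingleton R M w) I) with hT | hT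
    · exfalso
      have hker : I ≤ LinearMap.ker (LinearMap.toSpanSingleton R M w) := by
        intro s hs
        rw [LinearMap.mem_ker, LinearMap.toSpanSingleton_apply]
        have : s • w ∈ Submodule.map (LinearMap.toSpanSingleton R M w) I :=
          ⟨s, hs, rfl⟩
        rwa [hT, Submodule.mem_bot] at this
      have : a • w = 0 := by
        have h1 : (Submodule.liftQ I (LinearMap.toSpanSingleton R M w) hker)
            (Submodule.Quotient.mk a) = a • w := by
          rw [Submodule.liftQ_apply, LinearMap.toSpanSingleton_apply]
        have h2 : (Submodule.Quotient.mk a : M) = 0 := by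
          rw [Submodule.Quotient.mk_eq_zero]; exact ha
        rw [← h1, h2, map_zero]
      exact haw this
    · have : u + w ∈ Submodule.map (LinearMap.toSpanSingleton R M w) I := by
        rw [hT]; trivial
      obtain ⟨x₁, hx₁I, hx₁⟩ := this
      rw [LinearMap.toSpanSingleton_apply] at hx₁
      refine ⟨x₁, ?_, hx₁⟩
      rw [hsm x₁, Submodule.Quotient.mk_eq_zero]; exact hx₁I
  -- step B
  obtain ⟨x₂, hx₂w, hx₂u⟩ : ∃ x₂ : R, x₂ • w = 0 ∧ x₂ • u = w := by
    rcases eq_bot_or_eq_top (Submodule.map (LinearMap.toSpanSingleton R M u)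
        (LinearMap.ker (LinearMap.toSpanSingleton R M w))) with hS | hS
    · exfalso
      have hker2 : LinearMap.ker (LinearMap.toSpanSingleton R M w) ≤
          LinearMap.ker (LinearMap.toSpanSingleton R M u) := by
        intro s hs
        rw [LinearMap.mem_ker, LinearMap.toSpanSingleton_apply]
        have : s • u ∈ Submodule.map (LinearMap.toSpanSingleton R M u)
            (LinearMap.ker (LinearMap.toSpanSingleton R M w)) := ⟨s, hs, rfl⟩
        rwa [hS, Submodule.mem_bot] at this
      have hsurj : Function.Surjective (LinearMap.toSpanSingleton R M w) :=
        IsSimpleModule.toSpanSingleton_surjective R hw0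
      set eqv := (LinearMap.toSpanSingleton R M w).quotKerEquivOfSurjective hsurj with heqv
      set ψ : M →ₗ[R] M :=
        (Submodule.liftQ _ (LinearMap.toSpanSingleton R M u) hker2).comp
          (eqv.symm : M →ₗ[R] _) with hψ
      have heqv1 : eqv (Submodule.Quotient.mk 1) = w := by
        rw [heqv]
        simp [LinearMap.quotKerEquivOfSurjective, LinearMap.toSpanSingleton_apply]
      have hψw : ψ w = u := by
        have h2 : eqv.symm w = Submodule.Quotient.mk 1 := by
          rw [LinearEquiv.symm_apply_eq]
          exact heqv1.symm
        rw [hψ]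
        simp only [LinearMap.comp_apply, LinearEquiv.coe_coe]
        rw [h2, Submodule.liftQ_apply, LinearMap.toSpanSingleton_apply, one_smul]
      have hψne : ψ ≠ 0 := by
        intro h0
        rw [h0] at hψw
        exact hu0 (by simpa using hψw.symm)
      have hinj := LinearMap.injective_of_ne_zero hψne
      have : ψ (a • w) = ψ 0 := by
        rw [map_smul, hψw, hau, map_zero]
      exact haw (hinj this)
    · have : w ∈ Submodule.map (LinearMap.toSpanSingleton R M u)
          (LinearMap.ker (LinearMap.toSpanSingleton R M w)) := by rw [hS]; trivial
      obtain ⟨x₂, hx₂k, hx₂⟩ := this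
      rw [LinearMap.toSpanSingleton_apply] at hx₂
      have hx₂k' : x₂ • w = 0 := by
        have := LinearMap.mem_ker.mp hx₂k
        rwa [LinearMap.toSpanSingleton_apply] at this
      exact ⟨x₂, hx₂k', hx₂⟩
  -- step C
  set x := x₁ + x₂ with hx
  have hxu : x • u = w := by rw [hx, add_smul, hx₁u, hx₂u, zero_add]
  have hxw : x • w = u + w := by rw [hx, add_smul, hx₁w, hx₂w, add_zero]
  have h3 : x ^ 3 = x * x * x := by rw [pow_succ, pow_two]
  have h2w : (x * x) • u = u + w := by rw [mul_smul, hxu, hxw]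
  have h2w' : (x * x) • w = w + (u + w) := by rw [mul_smul, hxw, smul_add, hxu, hxw]
  have h3u : (x * x * x) • u = w + (u + w) := by rw [mul_smul, hxu, h2w']
  have h3w : (x * x * x) • w = (u + w) + (w + (u + w)) := by
    rw [mul_smul, hxw, smul_add, h2w, h2w']
  have hNu : (x ^ 3 - x) • u = u + w := by
    rw [sub_smul, h3, h3u, hxu]; abel
  have hNw : (x ^ 3 - x) • w = u + w + w := by
    rw [sub_smul, h3, h3w, hxw]; abel
  -- integer recursion
  let G : ℕ → ℤ × ℤ := fun m => Nat.rec ((1 : ℤ), (0 : ℤ))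
    (fun _ p => (p.1 + p.2, p.1 + 2 * p.2)) m
  have hG0 : G 0 = (1, 0) := rfl
  have hGs : ∀ m, G (m + 1) = ((G m).1 + (G m).2, (G m).1 + 2 * (G m).2) := fun _ => rfl
  have claim1 : ∀ m, ((x ^ 3 - x) ^ m) • u = (G m).1 • u + (G m).2 • w := by
    intro m
    induction m with
    | zero => rw [pow_zero, one_smul, hG0]; simp
    | succ m ih =>
      rw [pow_succ' (x ^ 3 - x) m, mul_smul, ih, hGs m]
      rw [smul_add, smul_comm ((x:R)^3 - x) (G m).1 u, smul_comm ((x:R)^3 - x) (G m).2 w,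
        hNu, hNw]
      simp only [smul_add, add_smul, two_mul]
      abel
  have claim2 : ∀ m, ∃ c d : ℤ, c * (G m).1 + d * (G m).2 = 1 := by
    intro m
    induction m with
    | zero => exact ⟨1, 0, by rw [hG0]; norm_num⟩
    | succ m ih =>
      obtain ⟨c, d, hcd⟩ := ih
      refine ⟨2 * c - d, d - c, ?_⟩
      rw [hGs m]
      dsimp only
      linear_combination hcd
  obtain ⟨K, hK⟩ := H x
  have hNK : ((x ^ 3 - x) ^ K) = 0 := by
    have hneg : x ^ 3 - x = -(x - x ^ 3) := by abel
    rw [hneg, neg_pow, hK, mul_zero]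
  have hsum : (G K).1 • u + (G K).2 • w = 0 := by
    rw [← claim1 K, hNK, zero_smul]
  obtain ⟨c, d, hcd⟩ := claim2 K
  set A := (G K).1 with hA
  set B := (G K).2 with hB
  let φA : M →ₗ[R] M := A • (LinearMap.id : M →ₗ[R] M)
  let φB : M →ₗ[R] M := B • (LinearMap.id : M →ₗ[R] M)
  have hφA : ∀ m : M, φA m = A • m := fun m => rfl
  have hφB : ∀ m : M, φB m = B • m := fun m => rfl
  by_cases hBw : B • w = 0
  · have hAu : A • u = 0 := by
      have := hsum
      rw [hBw, add_zero] at this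
      exact this
    have hA0 : φA = 0 := by
      by_contra hne
      have hinj := LinearMap.injective_of_ne_zero hne
      exact hu0 (hinj (by rw [hφA, hAu]; simp))
    have hB0 : φB = 0 := by
      by_contra hne
      have hinj := LinearMap.injective_of_ne_zero hne
      exact hw0 (hinj (by rw [hφB, hBw]; simp))
    have hBu : B • u = 0 := by
      have := congrArg (fun f : M →ₗ[R] M => f u) hB0
      simpa [hφB] using this
    have : u = 0 := by
      calc u = (1 : ℤ) • u := (one_smul ℤ u).symm
      _ = (c * A + d * B) • u := by rw [hcd]
      _ = c • (A • u) + d • (B • u) := by rw [add_smul, mul_smul, mul_smul]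
      _ = 0 := by rw [hAu, hBu, smul_zero, smul_zero, add_zero]
    exact hu0 this
  · have hφBne : φB ≠ 0 := by
      intro h0
      apply hBw
      have := congrArg (fun f : M →ₗ[R] M => f w) h0
      simpa [hφB] using this
    have hinj := LinearMap.injective_of_ne_zero hφBne
    have hBwA : B • w = -(A • u) := by
      have := hsum
      rw [add_comm] at this
      exact eq_neg_of_add_eq_zero_left this
    have hz : φB (a • w) = φB 0 := by
      rw [hφB, hφB, smul_zero]
      rw [smul_comm B a w, hBwA, smul_neg, smul_comm a A u, hau, smul_zero, neg_zero]
    exact haw (hinj hz)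


lemma nilpotent_mem_maximal
    (hqd : ∀ I : Ideal R, I.IsMaximal → ∀ a ∈ I, ∀ r : R, a * r ∈ I)
    (J : Ideal R) (hJ : J.IsMaximal) {w : R} (hw : IsNilpotent w) : w ∈ J := by
  by_contra hwJ
  obtain ⟨q, hq⟩ := hw
  rcases Nat.eq_zero_or_pos q with rfl | hqpos
  · have h10 : (1 : R) = 0 := by simpa using hq
    exact hJ.ne_top ((Ideal.eq_top_iff_one J).mpr (h10 ▸ J.zero_mem))
  -- J ⊔ span{w} = ⊤
  have hco : IsCoatom J := Ideal.isMaximal_def.mp hJ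
  have hsup : J ⊔ Ideal.span {w} = ⊤ := by
    refine hco.2 (J ⊔ Ideal.span {w}) (lt_of_le_of_ne le_sup_left ?_)
    intro hEq
    apply hwJ
    rw [hEq]
    exact le_sup_right (b := Ideal.span {w}) (Ideal.subset_span rfl)
  have h1 : (1 : R) ∈ J ⊔ Ideal.span {w} := by rw [hsup]; trivial
  obtain ⟨m, hm, z, hz, hmz⟩ := Submodule.mem_sup.mp h1
  obtain ⟨s, hs⟩ := Ideal.mem_span_singleton'.mp hz
  -- descending induction: all powers w^(q-d) for d ≤ q-1... we show ∀ d ≤ q, w^(q+1-d-? )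
  have key : ∀ d : ℕ, d ≤ q - 1 → w ^ (q - d) ∈ J := by
    intro d
    induction d with
    | zero =>
      intro _
      have : w ^ q = 0 := hq
      simpa [this] using J.zero_mem
    | succ dd ih =>
      intro hdd
      have hih := ih (by omega)
      have hsplit : w ^ (q - (dd + 1)) = m * w ^ (q - (dd + 1)) + s * w ^ (q - dd) := by
        have hstep : (1 : R) * w ^ (q - (dd + 1)) = (m + z) * w ^ (q - (dd + 1)) := by
          rw [hmz]
        have hzw : z * w ^ (q - (dd + 1)) = s * w ^ (q - dd) := by
          rw [← hs, mul_assoc]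
          congr 1
          rw [← pow_succ']
          congr 1
          omega
        rw [one_mul, add_mul, hzw] at hstep
        exact hstep
      rw [hsplit]
      exact Ideal.add_mem _ (hqd J hJ m hm _) (Ideal.mul_mem_left _ s hih)
  have hw1 : w ∈ J := by
    have := key (q - 1) le_rfl
    have hq1 : q - (q - 1) = 1 := by omega
    rwa [hq1, pow_one] at this
  exact hwJ hw1

lemma nilpotent_mem_jacobson
    (hqd : ∀ I : Ideal R, I.IsMaximal → ∀ a ∈ I, ∀ r : R, a * r ∈ I)
    {w : R} (hw : IsNilpotent w) : w ∈ Ideal.jacobson (⊥ : Ideal R) := by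
  rw [Ideal.jacobson]
  rw [Submodule.mem_sInf]
  rintro J ⟨-, hJmax⟩
  exact nilpotent_mem_maximal hqd J hJmax hw

lemma jacobson_mul_right
    (hqd : ∀ I : Ideal R, I.IsMaximal → ∀ a ∈ I, ∀ r : R, a * r ∈ I)
    {x : R} (hx : x ∈ Ideal.jacobson (⊥ : Ideal R)) (r : R) :
    x * r ∈ Ideal.jacobson (⊥ : Ideal R) := by
  rw [Ideal.jacobson, Submodule.mem_sInf] at hx ⊢
  rintro J ⟨hb, hJmax⟩
  exact hqd J hJmax x (hx J ⟨hb, hJmax⟩) r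


end Aux2

theorem strongly2NilClean_iff_trinilClean_quasiDuo_nilJacobson (R : Type*) [Ring R] :
    Strongly2NilClean R ↔
      (TrinilClean R ∧
        (∀ I : Ideal R, I.IsMaximal → ∀ a ∈ I, ∀ r : R, a * r ∈ I) ∧
        ∀ x ∈ Ideal.jacobson (⊥ : Ideal R), IsNilpotent x) := by
  constructor
  · intro h
    have H := forall_nilpotent_of_strongly2NilClean h
    refine ⟨fun a => ?_, quasiDuo_of_forall_nilpotent H, jacobson_nilpotent_of_forall H⟩
    obtain ⟨e, w, he, hw, -, heq⟩ := h a
    exact ⟨e, w, he, hw, heq⟩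
  · rintro ⟨htri, hqd, hjac⟩
    apply strongly2NilClean_of_forall_nilpotent
    intro a
    obtain ⟨e, w, he, hw, heq⟩ := htri a
    have hwJ : w ∈ Ideal.jacobson (⊥ : Ideal R) := nilpotent_mem_jacobson hqd hw
    have hmem : a - a ^ 3 ∈ Ideal.jacobson (⊥ : Ideal R) := by
      have hexp : a - a ^ 3 = (e - e ^ 3) +
          (w - (e * (e * w) + e * (w * e) + e * (w * w) + w * (e * e) + w * (e * w)
            + w * (w * e) + w * (w * w))) := by
        rw [heq]; noncomm_ring
      rw [hexp, he, sub_self, zero_add]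
      set J := Ideal.jacobson (⊥ : Ideal R) with hJdef
      have m1 : e * (e * w) ∈ J := Ideal.mul_mem_left _ _ (Ideal.mul_mem_left _ _ hwJ)
      have m2 : e * (w * e) ∈ J := Ideal.mul_mem_left _ _ (jacobson_mul_right hqd hwJ e)
      have m3 : e * (w * w) ∈ J := Ideal.mul_mem_left _ _ (Ideal.mul_mem_left _ _ hwJ)
      have m4 : w * (e * e) ∈ J := jacobson_mul_right hqd hwJ _
      have m5 : w * (e * w) ∈ J := jacobson_mul_right hqd hwJ _
      have m6 : w * (w * e) ∈ J := jacobson_mul_right hqd hwJ _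
      have m7 : w * (w * w) ∈ J := jacobson_mul_right hqd hwJ _
      exact Submodule.sub_mem _ hwJ
        (Submodule.add_mem _ (Submodule.add_mem _ (Submodule.add_mem _ (Submodule.add_mem _
          (Submodule.add_mem _ (Submodule.add_mem _ m1 m2) m3) m4) m5) m6) m7)
    exact hjac _ hmem
end

section
/- Let R be a ring in which any two nilpotent elements commute (a*b = b*a for all nilpotent a, b ∈ R). Then R is strongly 2-nil-clean if and only if R is trinil clean. -/
section NoncommAux

variable {R : Type*} [Ring R]

lemma nil_swap {a b : R} (h : IsNilpotent (a * b)) : IsNilpotent (b * a) := by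
  obtain ⟨n, hn⟩ := h
  refine ⟨n + 1, ?_⟩
  have key : ∀ m : ℕ, (b * a) ^ (m + 1) = b * (a * b) ^ m * a := by
    intro m
    induction m with
    | zero => simp [pow_succ]
    | succ m ih =>
      rw [pow_succ, ih, pow_succ]
      noncomm_ring
  rw [key n, hn, mul_zero, zero_mul]

lemma grg_nil (hcomm : ∀ a b : R, IsNilpotent a → IsNilpotent b → a * b = b * a)
    (g r : R) (hg : g * g = g) (hr : IsNilpotent r) :
    IsNilpotent (g * r * g) ∧ IsNilpotent (g * r) ∧ IsNilpotent (r * g) := by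
  have hg' : ∀ t : R, g * (g * t) = g * t := fun t => by rw [← mul_assoc, hg]
  set x := g * r * (1 - g) with hxdef
  set y := (1 - g) * r * g with hydef
  have h1g : (1 - g) * g = 0 := by rw [sub_mul, one_mul, hg, sub_self]
  have hg1 : g * (1 - g) = 0 := by rw [mul_sub, mul_one, hg, sub_self]
  have hx2 : x * x = 0 := by
    have : x * x = g * r * ((1 - g) * g) * (r * (1 - g)) := by
      rw [hxdef]; noncomm_ring
    rw [this, h1g, mul_zero, zero_mul]
  have hy2 : y * y = 0 := by
    have : y * y = (1 - g) * r * (g * (1 - g)) * (r * g) := by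
      rw [hydef]; noncomm_ring
    rw [this, hg1, mul_zero, zero_mul]
  have hxn : IsNilpotent x := ⟨2, by rw [pow_two, hx2]⟩
  have hyn : IsNilpotent y := ⟨2, by rw [pow_two, hy2]⟩
  set z := r - x - y with hzdef
  have hzn : IsNilpotent z := by
    apply Commute.isNilpotent_sub _ _ hyn
    · exact hcomm _ _ (Commute.isNilpotent_sub (hcomm _ _ hr hxn) hr hxn) hyn
    · exact Commute.isNilpotent_sub (hcomm _ _ hr hxn) hr hxn
  have hzg : z * g = g * r * g := by
    rw [hzdef, hxdef, hydef]
    have e1 : (g * r * (1 - g)) * g = g * r * ((1-g) * g) := by noncomm_ring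
    have e2 : ((1 - g) * r * g) * g = (1 - g) * r * (g * g) := by noncomm_ring
    rw [sub_mul, sub_mul, e1, e2, h1g, mul_zero, sub_zero, hg]
    noncomm_ring
  have hgz : g * z = g * r * g := by
    rw [hzdef, hxdef, hydef]
    have e1 : g * (g * r * (1 - g)) = (g * g) * r * (1-g) := by noncomm_ring
    have e2 : g * ((1 - g) * r * g) = (g * (1-g)) * (r * g) := by noncomm_ring
    rw [mul_sub, mul_sub, e1, e2, hg1, zero_mul, sub_zero, hg]
    noncomm_ring
  have hcom : Commute z g := hzg.trans hgz.symm
  have hgrg : IsNilpotent (g * r * g) := by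
    rw [← hzg]
    exact (Commute.isNilpotent_mul_right hcom hzn)
  refine ⟨hgrg, ?_, ?_⟩
  · -- g*r = g*r*g + x
    have : g * r = g * r * g + x := by rw [hxdef]; noncomm_ring
    rw [this]
    exact Commute.isNilpotent_add (hcomm _ _ hgrg hxn) hgrg hxn
  · -- r*g = g*r*g + y
    have : r * g = g * r * g + y := by rw [hydef]; noncomm_ring
    rw [this]
    exact Commute.isNilpotent_add (hcomm _ _ hgrg hyn) hgrg hyn

lemma ed_nil (hcomm : ∀ a b : R, IsNilpotent a → IsNilpotent b → a * b = b * a)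
    (e d : R) (hgd : e * e * d = d) (hd : IsNilpotent d) :
    IsNilpotent (e * d) := by
  have habs : ∀ c : ℕ, 0 < c → e * e * d ^ c = d ^ c := by
    intro c hc
    obtain ⟨c', rfl⟩ := Nat.exists_eq_succ_of_ne_zero hc.ne'
    rw [pow_succ', ← mul_assoc, hgd]
  -- n_c := e * d^c * e is nilpotent for c > 0
  have hnc : ∀ c : ℕ, 0 < c → IsNilpotent (e * d ^ c * e) := by
    intro c hc
    have h1 : IsNilpotent (e * (e * d ^ c)) := by
      rw [← mul_assoc, habs c hc]
      exact hd.pow_of_pos hc.ne'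
    exact nil_swap h1
  -- doubling identity
  have key : ∀ j : ℕ, (e * d) ^ (2 * 2 ^ j) = e * d ^ (2 ^ j) * e * d ^ (2 ^ j) := by
    intro j
    induction j with
    | zero =>
      norm_num
      rw [pow_two]
      noncomm_ring
    | succ j ih =>
      have hc : (0:ℕ) < 2 ^ j := Nat.pow_pos (by norm_num)
      have h2 : (2:ℕ) * 2 ^ (j+1) = (2 * 2 ^ j) * 2 := by ring
      rw [h2, pow_mul, ih]
      set c := (2:ℕ) ^ j
      set n := e * d ^ c * e with hndef
      have hcomm' : d ^ c * n = n * d ^ c :=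
        hcomm _ _ (hd.pow_of_pos hc.ne') (hnc c hc)
      have e1 : (n * d ^ c) ^ 2 = n * (d ^ c * n) * d ^ c := by
        rw [pow_two]; noncomm_ring
      have e2 : n * (n * d ^ c) * d ^ c = (n * n) * (d ^ c * d ^ c) := by noncomm_ring
      have e3 : n * n = e * d ^ c * (e * e * d ^ c) * e := by rw [hndef]; noncomm_ring
      have hdd : d ^ c * d ^ c = d ^ (2 ^ (j + 1)) := by
        rw [← pow_add]; congr 1; rw [pow_succ]; ring
      calc (n * d ^ c) ^ 2 = e * (d ^ c * d ^ c) * e * (d ^ c * d ^ c) := by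
            rw [e1, hcomm', e2, e3, habs c hc]; noncomm_ring
        _ = e * d ^ 2 ^ (j+1) * e * d ^ 2 ^ (j+1) := by rw [hdd]
  obtain ⟨K, hK⟩ := hd
  refine ⟨2 * 2 ^ K, ?_⟩
  rw [key K, pow_eq_zero_of_le (Nat.lt_two_pow_self (n := K)).le hK]
  simp

lemma er_nil (hcomm : ∀ a b : R, IsNilpotent a → IsNilpotent b → a * b = b * a)
    (e r : R) (he : e ^ 3 = e) (hr : IsNilpotent r) : IsNilpotent (e * r) := by
  have he' : e * e * e = e := by
    have : e * e * e = e ^ 3 := by rw [pow_succ, pow_two]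
    rw [this, he]
  have hg : (e * e) * (e * e) = e * e := by
    have : (e * e) * (e * e) = (e * e * e) * e := by noncomm_ring
    rw [this, he']
  set d := (e * e) * r * (e * e) with hddef
  have hd : IsNilpotent d := (grg_nil hcomm (e*e) r hg hr).1
  have hgd : e * e * d = d := by
    rw [hddef]
    have : e * e * ((e*e) * r * (e*e)) = ((e*e)*(e*e)) * r * (e*e) := by noncomm_ring
    rw [this, hg]
  have h1 : IsNilpotent (e * d) := ed_nil hcomm e d hgd hd
  have h0 : e * d = e * (r * (e * e)) := by
    rw [hddef]
    have : e * ((e*e) * r * (e*e)) = (e * e * e) * (r * (e * e)) := by noncomm_ring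
    rw [this, he']
  have hsplit : e * r = e * d + e * r * (1 - e * e) := by
    rw [h0]; noncomm_ring
  have h1g : (1 - e * e) * e = 0 := by
    rw [sub_mul, one_mul]
    have : e * e * e = e := he'
    rw [this, sub_self]
  have h2 : (e * r * (1 - e * e)) * (e * r * (1 - e * e)) = 0 := by
    have : (e * r * (1 - e * e)) * (e * r * (1 - e * e))
        = e * r * (((1 - e*e) * e) * (r * (1 - e*e))) := by noncomm_ring
    rw [this, h1g, zero_mul, mul_zero]
  have h2n : IsNilpotent (e * r * (1 - e * e)) := ⟨2, by rw [pow_two, h2]⟩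
  rw [hsplit]
  exact Commute.isNilpotent_add (hcomm _ _ h1 h2n) h1 h2n

lemma re_nil (hcomm : ∀ a b : R, IsNilpotent a → IsNilpotent b → a * b = b * a)
    (e r : R) (he : e ^ 3 = e) (hr : IsNilpotent r) : IsNilpotent (r * e) :=
  nil_swap (er_nil hcomm e r he hr)

lemma xr_nil (hcomm : ∀ a b : R, IsNilpotent a → IsNilpotent b → a * b = b * a)
    (htri : TrinilClean R) (x r : R) (hr : IsNilpotent r) : IsNilpotent (x * r) := by
  obtain ⟨e, w, he, hw, hx⟩ := htri x
  have h1 : IsNilpotent (e * r) := er_nil hcomm e r he hr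
  have h2 : IsNilpotent (w * r) := Commute.isNilpotent_mul_right (hcomm w r hw hr) hw
  have : x * r = e * r + w * r := by rw [hx]; noncomm_ring
  rw [this]
  exact Commute.isNilpotent_add (hcomm _ _ h1 h2) h1 h2

lemma rx_nil (hcomm : ∀ a b : R, IsNilpotent a → IsNilpotent b → a * b = b * a)
    (htri : TrinilClean R) (x r : R) (hr : IsNilpotent r) : IsNilpotent (r * x) := by
  obtain ⟨e, w, he, hw, hx⟩ := htri x
  have h1 : IsNilpotent (r * e) := re_nil hcomm e r he hr
  have h2 : IsNilpotent (r * w) := Commute.isNilpotent_mul_left (hcomm r w hr hw) hw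
  have : r * x = r * e + r * w := by rw [hx]; noncomm_ring
  rw [this]
  exact Commute.isNilpotent_add (hcomm _ _ h1 h2) h1 h2

lemma cube_nil (hcomm : ∀ a b : R, IsNilpotent a → IsNilpotent b → a * b = b * a)
    (htri : TrinilClean R) (a : R) : IsNilpotent (a ^ 3 - a) := by
  obtain ⟨e, w, he, hw, ha⟩ := htri a
  subst ha
  have n1 : IsNilpotent (w * (e * e)) := rx_nil hcomm htri (e * e) w hw
  have n2 : IsNilpotent ((e + w) * w) := xr_nil hcomm htri (e + w) w hw
  have n2' : IsNilpotent ((e + w) * w * e) := rx_nil hcomm htri e ((e + w) * w) n2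
  have n3 : IsNilpotent ((e + w) * ((e + w) * w)) := xr_nil hcomm htri (e + w) ((e + w) * w) n2
  have key : (e + w) ^ 3 - (e + w)
      = (e ^ 3 - e) + (w * (e * e) + (e + w) * w * e + (e + w) * ((e + w) * w) - w) := by
    noncomm_ring
  rw [key, he, sub_self, zero_add]
  have s1 : IsNilpotent (w * (e * e) + (e + w) * w * e) :=
    Commute.isNilpotent_add (hcomm _ _ n1 n2') n1 n2'
  have s2 : IsNilpotent (w * (e * e) + (e + w) * w * e + (e + w) * ((e + w) * w)) :=
    Commute.isNilpotent_add (hcomm _ _ s1 n3) s1 n3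
  exact Commute.isNilpotent_sub (hcomm _ _ s2 hw) s2 hw

lemma six_nil (hcomm : ∀ a b : R, IsNilpotent a → IsNilpotent b → a * b = b * a)
    (htri : TrinilClean R) : IsNilpotent (6 : R) := by
  have := cube_nil hcomm htri (2 : R)
  norm_num at this
  exact this

end NoncommAux

section CommAux

variable {A : Type*} [CommRing A]

lemma span_pair_nilpotent {x y : A} (hx : IsNilpotent x) (hy : IsNilpotent y) :
    ∃ M : ℕ, Ideal.span {x, y} ^ M = ⊥ := by
  obtain ⟨k, hk⟩ := hx
  obtain ⟨l, hl⟩ := hy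
  refine ⟨k + l, ?_⟩
  have hsp : Ideal.span ({x, y} : Set A) = Ideal.span {x} ⊔ Ideal.span {y} := by
    rw [Ideal.span_insert]
  rw [hsp]
  refine le_bot_iff.mp ?_
  calc (Ideal.span {x} ⊔ Ideal.span {y}) ^ (k + l) ≤ Ideal.span {x} ^ k ⊔ Ideal.span {y} ^ l :=
        Ideal.sup_pow_add_le_pow_sup_pow
    _ = ⊥ := by
        rw [Ideal.span_singleton_pow, Ideal.span_singleton_pow, hk, hl,
          Ideal.span_singleton_eq_bot.mpr rfl, sup_idem]

lemma sq_sub_nil (h2 : IsNilpotent (2 : A)) {c : A} (hc : IsNilpotent (c ^ 3 - c)) :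
    IsNilpotent (c ^ 2 - c) := by
  have key : (c ^ 2 - c) ^ 2 = c * (c ^ 3 - c) - 2 * (c ^ 3 - c ^ 2) := by ring
  have n1 : IsNilpotent (c * (c ^ 3 - c)) := (Commute.all _ _).isNilpotent_mul_left hc
  have n2 : IsNilpotent (2 * (c ^ 3 - c ^ 2)) := (Commute.all _ _).isNilpotent_mul_right h2
  have : IsNilpotent ((c ^ 2 - c) ^ 2) := by
    rw [key]; exact (Commute.all _ _).isNilpotent_sub n1 n2
  exact this.of_pow

lemma trip2 (h2 : IsNilpotent (2 : A)) (a : A) (ha : IsNilpotent (a ^ 3 - a)) :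
    ∃ e w : A, e ^ 3 = e ∧ IsNilpotent w ∧ a = e + w := by
  set I : Ideal A := Ideal.span {a ^ 3 - a, 2} with hIdef
  set c : ℕ → A := fun m => a ^ (2 ^ m) with hcdef
  have hc0 : c 0 = a := by simp [hcdef]
  have hcs : ∀ m, c (m + 1) = (c m) ^ 2 := by
    intro m
    simp only [hcdef]
    rw [← pow_mul, pow_succ]
  have hrec : ∀ m, (c (m+1)) ^ 3 - c (m+1)
      = ((c m) ^ 3 - c m) * (((c m) ^ 3 - c m) + 2 * c m) := by
    intro m; rw [hcs m]; ring
  have hInil : ∀ z ∈ I, IsNilpotent z := by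
    intro z hz
    have hle : I ≤ nilradical A := by
      rw [hIdef, Ideal.span_le]
      rintro t ht
      rcases ht with rfl | ht
      · exact mem_nilradical.mpr ha
      · rcases ht with rfl
        exact mem_nilradical.mpr h2
    exact mem_nilradical.mp (hle hz)
  have hmem : ∀ m, (c m) ^ 3 - c m ∈ I ^ (m + 1) := by
    intro m
    induction m with
    | zero =>
      rw [pow_one, hc0, hIdef]
      exact Ideal.subset_span (by simp)
    | succ m ih =>
      rw [hrec m]
      have hs : ((c m) ^ 3 - c m) + 2 * c m ∈ I := by
        refine Ideal.add_mem I (Ideal.pow_le_self (Nat.succ_ne_zero m) ih) ?_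
        exact Ideal.mul_mem_right _ _ (Ideal.subset_span (by simp))
      have := Ideal.mul_mem_mul ih hs
      rwa [← pow_succ] at this
  obtain ⟨M, hM⟩ := span_pair_nilpotent ha h2
  have hDM : (c M) ^ 3 - c M = 0 := by
    have h1 : (c M) ^ 3 - c M ∈ I ^ M :=
      Ideal.pow_le_pow_right (Nat.le_succ M) (hmem M)
    rw [hM] at h1
    simpa using h1
  have hwn : ∀ m, IsNilpotent (a - c m) := by
    intro m
    induction m with
    | zero => rw [hc0]; simp
    | succ m ih =>
      have hstep : IsNilpotent ((c m) ^ 2 - c m) :=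
        sq_sub_nil h2 (hInil _ (Ideal.pow_le_self (Nat.succ_ne_zero m) (hmem m)))
      have : a - c (m+1) = (a - c m) - ((c m) ^ 2 - c m) := by rw [hcs m]; ring
      rw [this]
      exact (Commute.all _ _).isNilpotent_sub ih hstep
  exact ⟨c M, a - c M, by rw [sub_eq_zero] at hDM; exact hDM, hwn M, by ring⟩

lemma trip3 (h3 : IsNilpotent (3 : A)) (a : A) (ha : IsNilpotent (a ^ 3 - a)) :
    ∃ e w : A, e ^ 3 = e ∧ IsNilpotent w ∧ a = e + w := by
  set I : Ideal A := Ideal.span {a ^ 3 - a, 3} with hIdef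
  set c : ℕ → A := fun m => a ^ (3 ^ m) with hcdef
  have hc0 : c 0 = a := by simp [hcdef]
  have hcs : ∀ m, c (m + 1) = (c m) ^ 3 := by
    intro m
    simp only [hcdef]
    rw [← pow_mul, pow_succ]
  have hrec : ∀ m, (c (m+1)) ^ 3 - c (m+1)
      = ((c m) ^ 3 - c m) * (3 * (c m) ^ 2 + 3 * c m * ((c m) ^ 3 - c m) + ((c m) ^ 3 - c m) ^ 2) := by
    intro m; rw [hcs m]; ring
  have hInil : ∀ z ∈ I, IsNilpotent z := by
    intro z hz
    have hle : I ≤ nilradical A := by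
      rw [hIdef, Ideal.span_le]
      rintro t ht
      rcases ht with rfl | ht
      · exact mem_nilradical.mpr ha
      · rcases ht with rfl
        exact mem_nilradical.mpr h3
    exact mem_nilradical.mp (hle hz)
  have hmem : ∀ m, (c m) ^ 3 - c m ∈ I ^ (m + 1) := by
    intro m
    induction m with
    | zero =>
      rw [pow_one, hc0, hIdef]
      exact Ideal.subset_span (by simp)
    | succ m ih =>
      rw [hrec m]
      have h3I : (3 : A) ∈ I := Ideal.subset_span (by simp)
      have hDI : (c m) ^ 3 - c m ∈ I := Ideal.pow_le_self (Nat.succ_ne_zero m) ih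
      have hs : 3 * (c m) ^ 2 + 3 * c m * ((c m) ^ 3 - c m) + ((c m) ^ 3 - c m) ^ 2 ∈ I := by
        refine Ideal.add_mem I (Ideal.add_mem I ?_ ?_) ?_
        · exact Ideal.mul_mem_right _ _ h3I
        · exact Ideal.mul_mem_left _ _ hDI
        · rw [pow_two]; exact Ideal.mul_mem_left _ _ hDI
      have := Ideal.mul_mem_mul ih hs
      rwa [← pow_succ] at this
  obtain ⟨M, hM⟩ := span_pair_nilpotent ha h3
  have hDM : (c M) ^ 3 - c M = 0 := by
    have h1 : (c M) ^ 3 - c M ∈ I ^ M :=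
      Ideal.pow_le_pow_right (Nat.le_succ M) (hmem M)
    rw [hM] at h1
    simpa using h1
  have hwn : ∀ m, IsNilpotent (a - c m) := by
    intro m
    induction m with
    | zero => rw [hc0]; simp
    | succ m ih =>
      have hstep : IsNilpotent ((c m) ^ 3 - c m) :=
        hInil _ (Ideal.pow_le_self (Nat.succ_ne_zero m) (hmem m))
      have : a - c (m+1) = (a - c m) - ((c m) ^ 3 - c m) := by rw [hcs m]; ring
      rw [this]
      exact (Commute.all _ _).isNilpotent_sub ih hstep
  exact ⟨c M, a - c M, by rw [sub_eq_zero] at hDM; exact hDM, hwn M, by ring⟩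

lemma comm_main (h6 : IsNilpotent (6 : A)) (a : A) (ha : IsNilpotent (a ^ 3 - a)) :
    ∃ e w : A, e ^ 3 = e ∧ IsNilpotent w ∧ a = e + w := by
  obtain ⟨k, hk⟩ := h6
  have hcop : IsCoprime ((2:ℤ) ^ k) ((3:ℤ) ^ k) := by
    apply IsCoprime.pow
    rw [Int.isCoprime_iff_gcd_eq_one]; decide
  obtain ⟨v, u, huv⟩ := hcop   -- v * 2^k + u * 3^k = 1
  set p : A := ((u * 3 ^ k : ℤ) : A) with hpdef
  set q : A := ((v * 2 ^ k : ℤ) : A) with hqdef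
  have hpq1 : p + q = 1 := by
    rw [hpdef, hqdef, ← Int.cast_add, ← Int.cast_one]
    congr 1
    linarith [huv]
  have h23 : (2:A)^k * (3:A)^k = 0 := by
    rw [← mul_pow]
    norm_num
    exact hk
  have hpq0 : p * q = 0 := by
    have : p * q = ((u:A) * (v:A)) * ((2:A)^k * (3:A)^k) := by
      rw [hpdef, hqdef]; push_cast; ring
    rw [this, h23, mul_zero]
  have hp : p * p = p := by
    have h1 : p * p = p * (p + q) - p * q := by ring
    rw [hpq1, hpq0, mul_one, sub_zero] at h1
    exact h1
  have hq : q * q = q := by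
    have h1 : q * q = q * (p + q) - p * q := by ring
    rw [hpq1, hpq0, mul_one, sub_zero] at h1
    exact h1
  have h2p : (2:A) ^ k * p = 0 := by
    have : (2:A)^k * p = (u:A) * ((2:A)^k * (3:A)^k) := by
      rw [hpdef]; push_cast; ring
    rw [this, h23, mul_zero]
  have h3q : (3:A) ^ k * q = 0 := by
    have : (3:A)^k * q = (v:A) * ((2:A)^k * (3:A)^k) := by
      rw [hqdef]; push_cast; ring
    rw [this, h23, mul_zero]
  -- quotient by (q) : 2 becomes nilpotent
  set J : Ideal A := Ideal.span {q} with hJdef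
  set K : Ideal A := Ideal.span {p} with hKdef
  have h2J : (2:A)^k ∈ J := by
    have : (2:A)^k = (2:A)^k * q := by
      calc (2:A)^k = (2:A)^k * (p + q) := by rw [hpq1, mul_one]
        _ = (2:A)^k * p + (2:A)^k * q := by ring
        _ = (2:A)^k * q := by rw [h2p, zero_add]
    rw [this]
    exact Ideal.mem_span_singleton'.mpr ⟨(2:A)^k, rfl⟩
  have h3K : (3:A)^k ∈ K := by
    have : (3:A)^k = (3:A)^k * p := by
      calc (3:A)^k = (3:A)^k * (p + q) := by rw [hpq1, mul_one]
        _ = (3:A)^k * p + (3:A)^k * q := by ring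
        _ = (3:A)^k * p := by rw [h3q, add_zero]
    rw [this]
    exact Ideal.mem_span_singleton'.mpr ⟨(3:A)^k, rfl⟩
  -- apply trip2 in A/J
  have h2' : IsNilpotent (2 : A ⧸ J) := by
    refine ⟨k, ?_⟩
    have : (2 : A ⧸ J) = Ideal.Quotient.mk J (2:A) := by push_cast; rfl
    rw [this, ← map_pow, Ideal.Quotient.eq_zero_iff_mem]
    exact h2J
  have h3' : IsNilpotent (3 : A ⧸ K) := by
    refine ⟨k, ?_⟩
    have : (3 : A ⧸ K) = Ideal.Quotient.mk K (3:A) := by push_cast; rfl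
    rw [this, ← map_pow, Ideal.Quotient.eq_zero_iff_mem]
    exact h3K
  have haJ : IsNilpotent ((Ideal.Quotient.mk J a) ^ 3 - Ideal.Quotient.mk J a) := by
    have : (Ideal.Quotient.mk J a) ^ 3 - Ideal.Quotient.mk J a
        = Ideal.Quotient.mk J (a ^ 3 - a) := by rw [map_sub, map_pow]
    rw [this]
    exact ha.map _
  have haK : IsNilpotent ((Ideal.Quotient.mk K a) ^ 3 - Ideal.Quotient.mk K a) := by
    have : (Ideal.Quotient.mk K a) ^ 3 - Ideal.Quotient.mk K a
        = Ideal.Quotient.mk K (a ^ 3 - a) := by rw [map_sub, map_pow]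
    rw [this]
    exact ha.map _
  obtain ⟨eb1, wb1, heb1, hwb1, heq1⟩ := trip2 h2' (Ideal.Quotient.mk J a) haJ
  obtain ⟨eb2, wb2, heb2, hwb2, heq2⟩ := trip3 h3' (Ideal.Quotient.mk K a) haK
  obtain ⟨e1, he1⟩ := Ideal.Quotient.mk_surjective eb1
  obtain ⟨e2, he2⟩ := Ideal.Quotient.mk_surjective eb2
  -- e1^3 - e1 ∈ J
  have he1J : e1 ^ 3 - e1 ∈ J := by
    rw [← Ideal.Quotient.eq_zero_iff_mem, map_sub, map_pow, he1, heb1, sub_self]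
  have he2K : e2 ^ 3 - e2 ∈ K := by
    rw [← Ideal.Quotient.eq_zero_iff_mem, map_sub, map_pow, he2, heb2, sub_self]
  -- (a - e1)^n ∈ J for some n
  obtain ⟨n1, hn1⟩ := hwb1
  have hw1J : (a - e1) ^ (n1 + 1) ∈ J := by
    rw [← Ideal.Quotient.eq_zero_iff_mem, map_pow, map_sub, he1]
    have : Ideal.Quotient.mk J a - eb1 = wb1 := by rw [heq1]; ring
    rw [this, pow_succ, hn1, zero_mul]
  obtain ⟨n2, hn2⟩ := hwb2
  have hw2K : (a - e2) ^ (n2 + 1) ∈ K := by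
    rw [← Ideal.Quotient.eq_zero_iff_mem, map_pow, map_sub, he2]
    have : Ideal.Quotient.mk K a - eb2 = wb2 := by rw [heq2]; ring
    rw [this, pow_succ, hn2, zero_mul]
  obtain ⟨x, hx⟩ := Ideal.mem_span_singleton'.mp he1J
  obtain ⟨y, hy⟩ := Ideal.mem_span_singleton'.mp he2K
  obtain ⟨z1, hz1⟩ := Ideal.mem_span_singleton'.mp hw1J
  obtain ⟨z2, hz2⟩ := Ideal.mem_span_singleton'.mp hw2K
  refine ⟨e1 * p + e2 * q, a - (e1 * p + e2 * q), ?_, ?_, by ring⟩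
  · -- tripotency
    linear_combination (e1^3*(p+1))*hp + (e2^3*(q+1))*hq
      + (3*e1^2*e2*p + 3*e1*e2^2*q + x + y)*hpq0 + (-p)*hx + (-q)*hy
  · -- nilpotency
    have hsplit : a - (e1 * p + e2 * q) = (a - e1) * p + (a - e2) * q := by
      have : a = a * (p + q) := by rw [hpq1, mul_one]
      calc a - (e1 * p + e2 * q) = a * (p + q) - (e1 * p + e2 * q) := by rw [← this]
        _ = (a - e1) * p + (a - e2) * q := by ring
    rw [hsplit]
    have hnp : IsNilpotent ((a - e1) * p) := by
      refine ⟨n1 + 1, ?_⟩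
      rw [mul_pow, ← hz1]
      have : z1 * q * p ^ (n1 + 1) = z1 * p ^ n1 * (p * q) := by ring
      rw [this, hpq0, mul_zero]
    have hnq : IsNilpotent ((a - e2) * q) := by
      refine ⟨n2 + 1, ?_⟩
      rw [mul_pow, ← hz2]
      have : z2 * p * q ^ (n2 + 1) = z2 * q ^ n2 * (p * q) := by ring
      rw [this, hpq0, mul_zero]
    exact (Commute.all _ _).isNilpotent_add hnp hnq

end CommAux

theorem strongly2NilClean_iff_trinilClean_of_nilpotents_commute (R : Type*) [Ring R]
    (hcomm : ∀ a b : R, IsNilpotent a → IsNilpotent b → a * b = b * a) :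
    Strongly2NilClean R ↔ TrinilClean R := by
  constructor
  · intro h a
    obtain ⟨e, w, he, hw, _, ha⟩ := h a
    exact ⟨e, w, he, hw, ha⟩
  · intro htri a
    have h6 := six_nil hcomm htri
    have ha := cube_nil hcomm htri a
    set S := Subring.closure ({a} : Set R) with hSdef
    letI : CommRing S := Subring.closureCommRingOfComm (by
      rintro x hx y hy
      rcases Set.mem_singleton_iff.mp hx with rfl
      rcases Set.mem_singleton_iff.mp hy with rfl
      rfl)
    set a' : S := ⟨a, Subring.subset_closure rfl⟩ with ha'def
    have coe_pow : ∀ (x : S) (n : ℕ), ((x ^ n : S) : R) = (x : R) ^ n :=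
      fun x n => SubmonoidClass.coe_pow x n
    have coe_sub : ∀ x y : S, ((x - y : S) : R) = (x : R) - (y : R) := fun _ _ => rfl
    have coe_mul : ∀ x y : S, ((x * y : S) : R) = (x : R) * (y : R) := fun _ _ => rfl
    have coe_add : ∀ x y : S, ((x + y : S) : R) = (x : R) + (y : R) := fun _ _ => rfl
    have coe_six : ((6 : S) : R) = 6 := by
      have h0 : (6 : S) = ((6:ℕ) : S) := by norm_cast
      rw [h0, SubringClass.coe_natCast]
      norm_num
    have h6' : IsNilpotent (6 : S) := by
      obtain ⟨k, hk⟩ := h6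
      refine ⟨k, Subtype.ext ?_⟩
      rw [coe_pow, coe_six]
      exact hk
    have ha' : IsNilpotent (a' ^ 3 - a') := by
      obtain ⟨n, hn⟩ := ha
      refine ⟨n, Subtype.ext ?_⟩
      rw [coe_pow, coe_sub, coe_pow]
      exact hn
    obtain ⟨e, w, he, hw, heq⟩ := comm_main h6' a' ha'
    refine ⟨(e : R), (w : R), ?_, ?_, ?_, ?_⟩
    · have := congrArg (fun z : S => (z : R)) he
      simpa only [coe_pow] using this
    · obtain ⟨n, hn⟩ := hw
      refine ⟨n, ?_⟩
      have := congrArg (fun z : S => (z : R)) hn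
      simpa only [coe_pow, ZeroMemClass.coe_zero] using this
    · have h := congrArg (fun z : S => (z : R)) (mul_comm e w)
      simpa only [coe_mul] using h
    · have := congrArg (fun z : S => (z : R)) heq
      simpa only [coe_add] using this
end

section
/- For every nontrivial ring R and every n ≥ 2, the matrix ring M_n(R) of n × n matrices over R is not strongly 2-nil-clean. -/
private lemma key_nilpotent {S : Type*} [Ring S] (e w : S) (h3 : e ^ 3 = e)
    (hw : IsNilpotent w) (hc : e * w = w * e) :
    IsNilpotent ((e + w) ^ 3 - (e + w)) := by
  have hce : Commute w e := (hc).symm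
  have hid : (e + w) ^ 3 - (e + w) =
      w * (3 * e ^ 2 + 3 * (e * w) + w ^ 2 - 1) := by
    linear_combination (norm := noncomm_ring) h3 + e * hc + 2 * (hc * e) + hc * w - w * hc
  rw [hid]
  refine Commute.isNilpotent_mul_right ?_ hw
  have h1 : Commute w (3 * e ^ 2) := (Commute.ofNat_right w 3).mul_right (hce.pow_right 2)
  have h2 : Commute w (3 * (e * w)) :=
    (Commute.ofNat_right w 3).mul_right (hce.mul_right (Commute.refl w))
  have h3' : Commute w (w ^ 2) := (Commute.refl w).pow_right 2
  exact ((h1.add_right h2).add_right h3').sub_right (Commute.one_right w)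

private lemma fromBlocks_pow {l m : Type*} [DecidableEq l] [DecidableEq m]
    [Fintype l] [Fintype m] {S : Type*} [Ring S] (x : Matrix l l S) (k : ℕ) :
    (Matrix.fromBlocks x 0 0 (0 : Matrix m m S)) ^ (k + 1) =
      Matrix.fromBlocks (x ^ (k + 1)) 0 0 0 := by
  induction k with
  | zero => simp
  | succ k ih =>
    rw [pow_succ, ih, Matrix.fromBlocks_multiply]
    simp [← pow_succ]

theorem matrix_not_strongly2NilClean (R : Type*) [Ring R] [Nontrivial R]
    (n : ℕ) (hn : 2 ≤ n) :
    ¬ Strongly2NilClean (Matrix (Fin n) (Fin n) R) := by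
  intro H
  set a : Matrix (Fin 2) (Fin 2) R := !![0, 1; 1, 1] with ha
  have hab : a * !![-1, 1; 1, 0] = 1 := by
    ext i j
    fin_cases i <;> fin_cases j <;>
      simp [ha, Matrix.mul_apply, Fin.sum_univ_two, Matrix.one_apply]
  have hba : !![-1, 1; 1, 0] * a = 1 := by
    ext i j
    fin_cases i <;> fin_cases j <;>
      simp [ha, Matrix.mul_apply, Fin.sum_univ_two, Matrix.one_apply]
  have haunit : IsUnit a := ⟨⟨a, !![-1, 1; 1, 0], hab, hba⟩, rfl⟩
  have hcube : a ^ 3 - a = a ^ 2 := by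
    ext i j
    fin_cases i <;> fin_cases j <;>
      simp [ha, pow_succ, Matrix.mul_apply, Fin.sum_univ_two]
  -- reindex equivalence
  have hn' : 2 + (n - 2) = n := by omega
  let σ : Fin 2 ⊕ Fin (n - 2) ≃ Fin n := finSumFinEquiv.trans (finCongr hn')
  let φ := Matrix.reindexAlgEquiv ℕ R σ
  set B : Matrix (Fin 2 ⊕ Fin (n - 2)) (Fin 2 ⊕ Fin (n - 2)) R :=
    Matrix.fromBlocks a 0 0 0 with hB
  obtain ⟨e, w, h3, hw, hc, heq⟩ := H (φ B)
  have hnil : IsNilpotent ((φ B) ^ 3 - φ B) := heq ▸ key_nilpotent e w h3 hw hc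
  have hnilB : IsNilpotent (B ^ 3 - B) := by
    have : B ^ 3 - B = φ.symm ((φ B) ^ 3 - φ B) := by
      simp [map_sub, map_pow]
    rw [this]
    exact hnil.map φ.symm.toAlgHom.toRingHom
  have hB3 : B ^ 3 - B = Matrix.fromBlocks (a ^ 2) 0 0 0 := by
    rw [hB]
    rw [show (3 : ℕ) = 2 + 1 from rfl, fromBlocks_pow]
    rw [← hcube]
    ext (i | i) (j | j) <;> simp [Matrix.fromBlocks]
  rw [hB3] at hnilB
  obtain ⟨k, hk⟩ := hnilB
  have hk1 : (Matrix.fromBlocks (a ^ 2) 0 0 (0 : Matrix (Fin (n - 2)) (Fin (n - 2)) R)) ^ (k + 1) = 0 := by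
    rw [pow_succ, hk, zero_mul]
  rw [fromBlocks_pow] at hk1
  have hz : (a ^ 2) ^ (k + 1) = 0 := by
    ext i j
    have := congrFun (congrFun hk1 (Sum.inl i)) (Sum.inl j)
    simpa [Matrix.fromBlocks] using this
  have : IsUnit ((a ^ 2) ^ (k + 1)) := (haunit.pow 2).pow (k + 1)
  rw [hz] at this
  exact one_ne_zero ((isUnit_zero_iff.mp this).symm)
end

section
/- Let K be a field and n ≥ 1. Then the matrix ring M_n(K) is trinil clean if and only if K is isomorphic (as a ring) to ℤ/2ℤ or to ℤ/3ℤ. -/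
open Matrix Module

section StepA

variable {K : Type*} [Field K]

private lemma strictLower_pow {m : ℕ} (L : Matrix (Fin m) (Fin m) K)
    (hL : ∀ i j : Fin m, (i : ℕ) ≤ (j : ℕ) → L i j = 0) :
    ∀ (k : ℕ) (i j : Fin m), (i : ℕ) < (j : ℕ) + k → (L ^ k) i j = 0 := by
  intro k
  induction k with
  | zero =>
    intro i j h
    rw [pow_zero]
    exact Matrix.one_apply_ne (by simp at h; exact fun he => absurd (congrArg Fin.val he) (by omega))
  | succ k ih =>
    intro i j h
    rw [pow_succ, Matrix.mul_apply]
    apply Finset.sum_eq_zero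
    intro l _
    by_cases hl : (j : ℕ) < (l : ℕ)
    · rw [ih i l (by omega), zero_mul]
    · rw [hL l j (by omega), mul_zero]

private lemma strictLower_nilpotent {m : ℕ} (L : Matrix (Fin m) (Fin m) K)
    (hL : ∀ i j : Fin m, (i : ℕ) ≤ (j : ℕ) → L i j = 0) : IsNilpotent L := by
  refine ⟨m, ?_⟩
  ext i j
  rw [Matrix.zero_apply]
  exact strictLower_pow L hL m i j (by have := i.isLt; omega)

private lemma vmv_mul {m : ℕ} (a b c d : Fin m → K) :
    vecMulVec a b * vecMulVec c d = (b ⬝ᵥ c) • vecMulVec a d := by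
  ext i j
  simp only [Matrix.mul_apply, Matrix.vecMulVec_apply, Matrix.smul_apply, dotProduct,
    smul_eq_mul, Finset.sum_mul]
  exact Finset.sum_congr rfl fun l _ => by ring

private lemma companion_trinil (hK : ∀ x : K, x ^ 3 = x)
    {m : ℕ} (hm : 0 < m) (M : Matrix (Fin m) (Fin m) K)
    (hM : ∀ i j : Fin m, (j : ℕ) + 1 < m → M i j = if (i : ℕ) = (j : ℕ) + 1 then 1 else 0) :
    ∃ E, E ^ 3 = E ∧ IsNilpotent (M - E) := by
  have sq1 : ∀ x : K, x ≠ 0 → x * x = 1 := by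
    intro x hx
    have h : x * (x * x - 1) = 0 := by linear_combination hK x
    rcases mul_eq_zero.mp h with h' | h'
    · exact absurd h' hx
    · exact sub_eq_zero.mp h'
  set last : Fin m := ⟨m - 1, by omega⟩ with hlast
  set v : Fin m → K := fun i => M i last with hv
  have hcol : ∀ j : Fin m, j ≠ last → (j : ℕ) + 1 < m := by
    intro j hj
    have h1 : (j : ℕ) < m := j.isLt
    have h2 : (j : ℕ) ≠ m - 1 := fun h => hj (Fin.ext (by simp [hlast, h]))
    omega
  set r : Fin m → K := Pi.single last 1 with hr
  by_cases hvl : v last ≠ 0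
  · -- Case 1 : last coefficient nonzero, rank one tripotent
    refine ⟨vecMulVec v r, ?_, ?_⟩
    · have e2 : vecMulVec v r * vecMulVec v r = v last • vecMulVec v r := by
        rw [vmv_mul, hr, single_dotProduct, one_mul]
      rw [pow_succ, pow_two, e2, smul_mul_assoc, e2, smul_smul, sq1 _ hvl, one_smul]
    · apply strictLower_nilpotent
      intro i j hij
      rw [Matrix.sub_apply, Matrix.vecMulVec_apply]
      by_cases hj : j = last
      · subst hj
        rw [hr, Pi.single_eq_same, mul_one]
        exact sub_self (M i last)
      · rw [hM i j (hcol j hj), hr, Pi.single_eq_of_ne hj, mul_zero, if_neg (by omega), sub_zero]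
  · push_neg at hvl
    by_cases hv0 : ∀ i, v i = 0
    · -- Case 2 : nilpotent, take E = 0
      refine ⟨0, by simp, ?_⟩
      rw [sub_zero]
      apply strictLower_nilpotent
      intro i j hij
      by_cases hj : j = last
      · subst hj; exact hv0 i
      · rw [hM i j (hcol j hj), if_neg (by omega)]
    · -- Case 3 : rank two tripotent
      push_neg at hv0
      obtain ⟨k, hk⟩ := hv0
      have hkl : k ≠ last := fun h => hk (h ▸ hvl)
      have hklt : (k : ℕ) < (last : ℕ) := by
        have h1 : (k : ℕ) < m := k.isLt
        have h2 : (k : ℕ) ≠ m - 1 := fun h => hkl (Fin.ext (by simp [hlast, h]))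
        simp only [hlast]
        omega
      set s : Fin m → K := Pi.single k (v k)⁻¹ with hs
      have d1 : r ⬝ᵥ v = 0 := by rw [hr, single_dotProduct, one_mul, hvl]
      have d2 : r ⬝ᵥ r = 1 := by
        rw [hr, single_dotProduct, one_mul, Pi.single_eq_same]
      have d3 : s ⬝ᵥ v = 1 := by
        rw [hs, single_dotProduct]; exact inv_mul_cancel₀ hk
      have d4 : s ⬝ᵥ r = 0 := by
        rw [hs, single_dotProduct, hr, Pi.single_eq_of_ne hkl, mul_zero]
      refine ⟨vecMulVec v r + vecMulVec r s, ?_, ?_⟩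
      · have e2 : (vecMulVec v r + vecMulVec r s) * (vecMulVec v r + vecMulVec r s)
            = vecMulVec v s + vecMulVec r r := by
          rw [add_mul, mul_add, mul_add, vmv_mul, vmv_mul, vmv_mul, vmv_mul,
            d1, d2, d3, d4, zero_smul, one_smul, one_smul, zero_smul, zero_add, add_zero]
        rw [pow_succ, pow_two, e2, add_mul, mul_add, mul_add, vmv_mul, vmv_mul, vmv_mul,
          vmv_mul, d1, d2, d3, d4, zero_smul, one_smul, one_smul, zero_smul,
          add_zero, zero_add]
      · apply strictLower_nilpotent
        intro i j hij
        have hil : i ≠ last ∨ j = last := by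
          by_cases hj : j = last
          · exact Or.inr hj
          · left
            intro hi
            have := hcol j hj
            subst hi
            simp only [hlast] at hij ⊢
            omega
        rw [Matrix.sub_apply, Matrix.add_apply, Matrix.vecMulVec_apply, Matrix.vecMulVec_apply]
        by_cases hj : j = last
        · subst hj
          rw [hr, Pi.single_eq_same, mul_one, hs, Pi.single_eq_of_ne (Ne.symm hkl), mul_zero,
            add_zero]
          exact sub_self (M i last)
        · rw [hM i j (hcol j hj), if_neg (by omega), hr, Pi.single_eq_of_ne hj, mul_zero]
          have hine : i ≠ last := hil.resolve_right hj
          by_cases hjk : j = k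
          · subst hjk
            rw [Pi.single_eq_of_ne hine, zero_mul, add_zero, sub_zero]
          · rw [hs, Pi.single_eq_of_ne hjk, mul_zero, add_zero, sub_zero]

end StepA

section StepB

universe u
variable {K : Type*} [Field K]

private lemma pow3_apply {V : Type u} [AddCommGroup V] [Module K V] (u : V →ₗ[K] V) (x : V) :
    (u ^ 3) x = u (u (u x)) := by
  rw [pow_succ, pow_two]
  rfl

private lemma end_trinil (hK : ∀ x : K, x ^ 3 = x) :
    ∀ (n : ℕ) (V : Type u) [AddCommGroup V] [Module K V] [FiniteDimensional K V],
      Module.finrank K V ≤ n → ∀ f : V →ₗ[K] V,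
      ∃ e w : V →ₗ[K] V, e ^ 3 = e ∧ IsNilpotent w ∧ f = e + w := by
  intro n
  induction n with
  | zero =>
    intro V _ _ _ hr f
    have hs : Subsingleton V :=
      Module.finrank_zero_iff.mp (le_antisymm hr (Nat.zero_le _))
    exact ⟨0, 0, by simp, ⟨1, by simp⟩, Subsingleton.elim _ _⟩
  | succ n ih =>
    intro V _ _ _ hr f
    by_cases hle : Module.finrank K V ≤ n
    · exact ih V hle f
    push_neg at hle
    have hpos : 0 < Module.finrank K V := by omega
    have hnt : Nontrivial V := Module.nontrivial_of_finrank_pos hpos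
    obtain ⟨v, hv⟩ := exists_ne (0 : V)
    classical
    set g : ℕ → V := fun i => (f ^ i) v with hg
    have hfg : ∀ i, f (g i) = g (i + 1) := by
      intro i
      simp only [hg, pow_succ', Module.End.mul_apply]
    set p : Submodule K V := Submodule.span K (Set.range g) with hp
    have hvp : v ∈ p := Submodule.subset_span ⟨0, by simp [hg]⟩
    have hfp : ∀ x ∈ p, f x ∈ p := by
      have hm : Submodule.map f p ≤ p := by
        rw [hp, Submodule.map_span, Submodule.span_le]
        rintro _ ⟨_, ⟨i, rfl⟩, rfl⟩
        exact Submodule.subset_span ⟨i + 1, (hfg i).symm⟩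
      exact fun x hx => hm ⟨x, hx, rfl⟩
    by_cases hptop : p = ⊤
    · -- cyclic case
      set m := Module.finrank K V with hm
      set S : ℕ → Submodule K V := fun j => Submodule.span K (g '' Set.Iio j) with hS
      have chain : ∀ N : ℕ, (∀ j < N, g j ∉ S j) → N ≤ Module.finrank K (S N) := by
        intro N
        induction N with
        | zero => intro _; omega
        | succ N ihN =>
          intro hnotin
          have h1 : S N ≤ S (N + 1) :=
            Submodule.span_mono (Set.image_mono fun x hx => lt_trans hx (Nat.lt_succ_self N))
          have h2 : S N < S (N + 1) := by
            refine lt_of_le_of_ne h1 fun heq => ?_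
            have hgN : g N ∈ S (N + 1) := Submodule.subset_span ⟨N, Nat.lt_succ_self N, rfl⟩
            rw [← heq] at hgN
            exact hnotin N (Nat.lt_succ_self N) hgN
          have h3 := Submodule.finrank_lt_finrank_of_lt h2
          have h4 := ihN fun j hj => hnotin j (lt_trans hj (Nat.lt_succ_self N))
          omega
      have hex : ∃ k, g k ∈ S k := by
        by_contra hcon
        push_neg at hcon
        have h1 := chain (m + 1) fun j _ => hcon j
        have h2 := Submodule.finrank_le (S (m + 1))
        omega
      set k := Nat.find hex with hkdef
      have hkS : g k ∈ S k := Nat.find_spec hex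
      have hmin : ∀ j < k, g j ∉ S j := fun j hj => Nat.find_min hex hj
      have hk0 : 0 < k := by
        rcases Nat.eq_zero_or_pos k with h | h
        · exfalso
          rw [h] at hkS
          have hbot : S 0 = ⊥ := by
            rw [hS]
            have : Set.Iio 0 = (∅ : Set ℕ) := by ext x; simp
            simp [this]
          rw [hbot] at hkS
          simp only [Submodule.mem_bot] at hkS
          exact hv (by simpa [hg] using hkS)
        · exact h
      have hSinv : ∀ x ∈ S k, f x ∈ S k := by
        have hm' : Submodule.map f (S k) ≤ S k := by
          rw [hS, Submodule.map_span, Submodule.span_le]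
          rintro _ ⟨_, ⟨i, hi, rfl⟩, rfl⟩
          rw [hfg i]
          simp only [Set.mem_Iio] at hi
          rcases Nat.lt_or_ge (i + 1) k with h | h
          · exact Submodule.subset_span ⟨i + 1, h, rfl⟩
          · have hik : i + 1 = k := by omega
            rw [hik]; exact hkS
        exact fun x hx => hm' ⟨x, hx, rfl⟩
      have hall : ∀ j, g j ∈ S k := by
        intro j
        induction j with
        | zero => exact Submodule.subset_span ⟨0, hk0, rfl⟩
        | succ j ihj => rw [← hfg j]; exact hSinv _ ihj
      have htopS : S k = ⊤ := by
        rw [eq_top_iff, ← hptop, hp, Submodule.span_le]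
        rintro _ ⟨j, rfl⟩
        exact hall j
      have hSrange : ∀ N : ℕ, S N = Submodule.span K (Set.range fun i : Fin N => g i) := by
        intro N
        have hsets : g '' Set.Iio N = Set.range fun i : Fin N => g i := by
          ext x
          constructor
          · rintro ⟨i, hi, rfl⟩; exact ⟨⟨i, hi⟩, rfl⟩
          · rintro ⟨⟨i, hi⟩, rfl⟩; exact ⟨i, hi, rfl⟩
        show Submodule.span K (g '' Set.Iio N) = Submodule.span K (Set.range fun i : Fin N => g i)
        rw [hsets]
      have hmk : m ≤ k := by
        have h1 : Module.finrank K (S k) ≤ k := by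
          rw [hSrange k]
          simpa [Set.finrank] using finrank_range_le_card (R := K) fun i : Fin k => g i
        rw [htopS, finrank_top] at h1
        exact h1
      have hkm : k ≤ m := by
        have h1 := chain k hmin
        have h2 := Submodule.finrank_le (S k)
        omega
      have hkem : k = m := le_antisymm hkm hmk
      have hspan : ⊤ ≤ Submodule.span K (Set.range fun i : Fin m => g i) := by
        rw [← hSrange m, ← hkem, htopS]
      have hcard : Fintype.card (Fin m) = Module.finrank K V := by simp [hm]
      set b := basisOfTopLeSpanOfCardEqFinrank (fun i : Fin m => g i) hspan hcard with hb
      have hbcoe : ∀ i : Fin m, b i = g i := fun i => by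
        rw [hb, coe_basisOfTopLeSpanOfCardEqFinrank]
      set Ψ := LinearMap.toMatrixAlgEquiv b with hΨ
      have hMcol : ∀ i j : Fin m, (j : ℕ) + 1 < m →
          (Ψ f) i j = if (i : ℕ) = (j : ℕ) + 1 then 1 else 0 := by
        intro i j hj
        rw [hΨ, LinearMap.toMatrixAlgEquiv_apply]
        have hbj : f (b j) = b ⟨(j : ℕ) + 1, hj⟩ := by
          rw [hbcoe, hbcoe]; exact hfg j
        rw [hbj, Basis.repr_self, Finsupp.single_apply]
        by_cases h : (i : ℕ) = (j : ℕ) + 1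
        · rw [if_pos h, if_pos (Fin.ext h.symm)]
        · rw [if_neg h, if_neg fun he => h (by rw [← congrArg Fin.val he])]
      obtain ⟨E, hE3, hEnil⟩ := companion_trinil hK (m := m) (by omega) (Ψ f) hMcol
      refine ⟨Ψ.symm E, Ψ.symm (Ψ f - E), ?_, ?_, ?_⟩
      · rw [← map_pow, hE3]
      · exact hEnil.map Ψ.symm
      · rw [map_sub, AlgEquiv.symm_apply_apply]
        abel
    · -- split case
      have hp_lt : p < ⊤ := lt_top_iff_ne_top.mpr hptop
      have hrp : Module.finrank K p ≤ n := by
        have h1 : Module.finrank K p < Module.finrank K (⊤ : Submodule K V) :=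
          Submodule.finrank_lt_finrank_of_lt hp_lt
        rw [finrank_top] at h1
        omega
      have hppos : 0 < Module.finrank K p := by
        haveI : Nontrivial p := ⟨⟨⟨v, hvp⟩, 0, fun h => hv (by simpa using congrArg Subtype.val h)⟩⟩
        exact Module.finrank_pos
      have hrq : Module.finrank K (V ⧸ p) ≤ n := by
        have hq := Submodule.finrank_quotient_add_finrank p
        omega
      have hfq : p ≤ p.comap f := fun x hx => hfp x hx
      obtain ⟨e₁, w₁, he₁, hw₁, hf₁⟩ := ih p hrp (f.restrict hfp)
      obtain ⟨e₂, w₂, he₂, hw₂, hf₂⟩ := ih (V ⧸ p) hrq (Submodule.mapQ p p f hfq)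
      obtain ⟨c, hc⟩ := Submodule.exists_isCompl p
      set π := Submodule.projectionOnto p c hc with hπ
      set σ : (V ⧸ p) →ₗ[K] V := c.subtype ∘ₗ (Submodule.quotientEquivOfIsCompl p c hc).toLinearMap
        with hσ
      have hσmem : ∀ y, σ y ∈ c := fun y => (Submodule.quotientEquivOfIsCompl p c hc y).2
      have hπσ : ∀ y, π (σ y) = 0 := fun y =>
        Submodule.projectionOnto_apply_right hc ⟨_, hσmem y⟩
      have hπcoe : ∀ y : p, π (y : V) = y := fun y =>
        Submodule.projectionOnto_apply_left hc y
      have hmkp : ∀ x ∈ p, p.mkQ x = 0 := fun x hx => (Submodule.Quotient.mk_eq_zero p).mpr hx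
      have hmkσ : ∀ y, p.mkQ (σ y) = y := fun y => by
        exact Submodule.mk_quotientEquivOfIsCompl_apply hc y
      set e : V →ₗ[K] V := p.subtype ∘ₗ e₁ ∘ₗ π + σ ∘ₗ e₂ ∘ₗ p.mkQ with he
      have he_apply : ∀ x : V, e x = (e₁ (π x) : V) + σ (e₂ (p.mkQ x)) := fun x => rfl
      have hπe : ∀ x : V, π (e x) = e₁ (π x) := by
        intro x
        rw [he_apply, map_add, hπcoe, hπσ, add_zero]
      have hmke : ∀ x : V, p.mkQ (e x) = e₂ (p.mkQ x) := by
        intro x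
        rw [he_apply, map_add, hmkp _ (e₁ (π x)).2, hmkσ, zero_add]
      have he3 : e ^ 3 = e := by
        have hc1 : ∀ y : p, e₁ (e₁ (e₁ y)) = e₁ y := fun y => by
          have h := DFunLike.congr_fun he₁ y
          rwa [pow3_apply] at h
        have hc2 : ∀ y : V ⧸ p, e₂ (e₂ (e₂ y)) = e₂ y := fun y => by
          have h := DFunLike.congr_fun he₂ y
          rwa [pow3_apply] at h
        ext x
        rw [pow3_apply]
        calc e (e (e x))
            = (e₁ (e₁ (e₁ (π x))) : V) + σ (e₂ (e₂ (e₂ (p.mkQ x)))) := by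
              rw [he_apply (e (e x)), hπe, hπe, hmke, hmke]
          _ = (e₁ (π x) : V) + σ (e₂ (p.mkQ x)) := by rw [hc1, hc2]
          _ = e x := (he_apply x).symm
      have hep : ∀ (x : V) (hx : x ∈ p), e x = (e₁ (⟨x, hx⟩ : p) : V) := by
        intro x hx
        rw [he_apply, hmkp _ hx, map_zero, map_zero, add_zero,
          show π x = ⟨x, hx⟩ from hπcoe ⟨x, hx⟩]
      have hwp : ∀ x ∈ p, (f - e) x ∈ p := by
        intro x hx
        rw [LinearMap.sub_apply]
        exact sub_mem (hfp x hx) (by rw [hep x hx]; exact (e₁ ⟨x, hx⟩).2)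
      have hwr : (f - e).restrict hwp = w₁ := by
        have hw₁' : w₁ = f.restrict hfp - e₁ := by rw [hf₁]; abel
        ext x
        have h2 : e (x : V) = (e₁ x : V) := by
          rw [hep _ x.2, Subtype.coe_eta]
        rw [hw₁']
        simp only [LinearMap.restrict_coe_apply, LinearMap.sub_apply, Submodule.coe_sub,
          LinearMap.restrict_coe_apply]
        rw [h2]
      have hwq : p ≤ p.comap (f - e) := fun x hx => hwp x hx
      have hmapQw : Submodule.mapQ p p (f - e) hwq = w₂ := by
        have hw₂' : w₂ = Submodule.mapQ p p f hfq - e₂ := by rw [hf₂]; abel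
        apply LinearMap.ext
        intro y
        obtain ⟨x, rfl⟩ := Submodule.mkQ_surjective p y
        have h1 : (p.mapQ p (f - e) hwq) (p.mkQ x) = p.mkQ ((f - e) x) := by
          simp only [Submodule.mkQ_apply, Submodule.mapQ_apply]
        have h2 : (p.mapQ p f hfq) (p.mkQ x) = p.mkQ (f x) := by
          simp only [Submodule.mkQ_apply, Submodule.mapQ_apply]
        rw [h1, hw₂']
        simp only [LinearMap.sub_apply]
        rw [h2, ← hmke, ← map_sub]
      obtain ⟨k₁, hk₁⟩ := hwr ▸ hw₁
      obtain ⟨k₂, hk₂⟩ := hmapQw ▸ hw₂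
      refine ⟨e, f - e, he3, ⟨k₁ + k₂, ?_⟩, by abel⟩
      ext x
      rw [pow_add, Module.End.mul_apply]
      have hxp : ((f - e) ^ k₂) x ∈ p := by
        have hq1 : p.mkQ (((f - e) ^ k₂) x)
            = (p.mapQ p ((f - e) ^ k₂) (p.le_comap_pow_of_le_comap hwq k₂)) (p.mkQ x) := by
          simp only [Submodule.mkQ_apply, Submodule.mapQ_apply]
        rw [← Submodule.Quotient.mk_eq_zero, ← Submodule.mkQ_apply, hq1,
          p.mapQ_pow hwq k₂, hk₂, LinearMap.zero_apply]
      have hres := Module.End.pow_restrict k₁ hwp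
      have h0 : (((f - e) ^ k₁).restrict (Module.End.pow_apply_mem_of_forall_mem k₁ hwp))
          ⟨((f - e) ^ k₂) x, hxp⟩ = 0 := by
        rw [← hres, hk₁]
        rfl
      have h0' := congrArg Subtype.val h0
      simpa using h0'
  
end StepB


section Wrap
variable {K : Type*} [Field K]

private lemma matrix_trinil (hK : ∀ x : K, x ^ 3 = x) (n : ℕ) :
    TrinilClean (Matrix (Fin n) (Fin n) K) := by
  intro A
  let Φ : ((Fin n → K) →ₗ[K] (Fin n → K)) ≃ₐ[K] Matrix (Fin n) (Fin n) K :=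
    LinearMap.toMatrixAlgEquiv'
  obtain ⟨e, w, he, hw, hfe⟩ :=
    end_trinil hK (Module.finrank K (Fin n → K)) (Fin n → K) le_rfl (Φ.symm A)
  refine ⟨Φ e, Φ w, ?_, hw.map Φ, ?_⟩
  · rw [← map_pow, he]
  · rw [← map_add, ← hfe, AlgEquiv.apply_symm_apply]

end Wrap

theorem matrix_trinilClean_iff_field (K : Type*) [Field K] (n : ℕ) (hn : 1 ≤ n) :
    TrinilClean (Matrix (Fin n) (Fin n) K) ↔
      Nonempty (K ≃+* ZMod 2) ∨ Nonempty (K ≃+* ZMod 3) := by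
  constructor
  · intro hT
    haveI : Nonempty (Fin n) := ⟨⟨0, hn⟩⟩
    haveI : Nontrivial (Matrix (Fin n) (Fin n) K) := by infer_instance
    have h3 : ∀ a : K, a ^ 3 = a := by
      intro a
      obtain ⟨E, W, hE, hW, hA⟩ := hT (a • (1 : Matrix (Fin n) (Fin n) K))
      have hWdef : W = a • (1 : Matrix (Fin n) (Fin n) K) - E := by rw [hA]; abel
      have hcomm : Commute E W := by
        rw [hWdef]
        exact Commute.sub_right (Commute.smul_right (Commute.one_right E) a) (Commute.refl E)
      have hexp : (E + W) ^ 3 - (E + W)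
          = (W ^ 2 + (E * W + E * W + E * W) + (E ^ 2 + E ^ 2 + E ^ 2) - 1) * W
            + (E ^ 3 - E) := by
        rw [hcomm.add_pow]
        simp only [Finset.sum_range_succ, Finset.sum_range_zero]
        norm_num
        noncomm_ring
      have hX : Commute (W ^ 2 + (E * W + E * W + E * W) + (E ^ 2 + E ^ 2 + E ^ 2) - 1) W := by
        have hEW : Commute (E * W) W := hcomm.mul_left (Commute.refl W)
        have hE2 : Commute (E ^ 2) W := hcomm.pow_left 2
        exact Commute.sub_left
          (Commute.add_left
            (Commute.add_left ((Commute.refl W).pow_left 2)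
              (Commute.add_left (Commute.add_left hEW hEW) hEW))
            (Commute.add_left (Commute.add_left hE2 hE2) hE2))
          (Commute.one_left W)
      have hnil3 : IsNilpotent ((E + W) ^ 3 - (E + W)) := by
        rw [hexp, hE, sub_self, add_zero]
        exact hX.isNilpotent_mul_left hW
      have hnil : IsNilpotent ((a ^ 3 - a) • (1 : Matrix (Fin n) (Fin n) K)) := by
        have hsm : (a • (1 : Matrix (Fin n) (Fin n) K)) ^ 3 - a • 1
            = (a ^ 3 - a) • (1 : Matrix (Fin n) (Fin n) K) := by
          rw [smul_pow, one_pow, sub_smul]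
        rw [← hsm, hA]
        exact hnil3
      obtain ⟨k, hk⟩ := hnil
      rw [smul_pow, one_pow] at hk
      have hsc : (a ^ 3 - a) ^ k = 0 := by
        obtain ⟨i⟩ := ‹Nonempty (Fin n)›
        have h1 := congrFun (congrFun hk i) i
        simpa using h1
      have hz : a ^ 3 - a = 0 := by
        rcases Nat.eq_zero_or_pos k with h | h
        · rw [h, pow_zero] at hsc
          exact absurd hsc one_ne_zero
        · exact pow_eq_zero_iff (by omega) |>.mp hsc
      exact sub_eq_zero.mp hz
    -- characteristic analysis
    have h6 : (6 : K) = 0 := by linear_combination h3 2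
    have hchar : CharP K (ringChar K) := ringChar.charP K
    have hdvd : ringChar K ∣ 6 :=
      (CharP.cast_eq_zero_iff K (ringChar K) 6).mp (by exact_mod_cast h6)
    have hprime : (ringChar K).Prime := by
      rcases CharP.char_is_prime_or_zero K (ringChar K) with h | h
      · exact h
      · exfalso
        rw [h] at hchar
        haveI := hchar
        haveI : CharZero K := CharP.charP_to_charZero K
        have h6' : ((6 : ℕ) : K) ≠ 0 := Nat.cast_ne_zero.mpr (by norm_num)
        exact h6' (by exact_mod_cast h6)
    have hp23 : ringChar K = 2 ∨ ringChar K = 3 := by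
      have h2 := hprime.two_le
      have h6' := Nat.le_of_dvd (by norm_num) hdvd
      rcases (by omega : ringChar K = 2 ∨ ringChar K = 3 ∨ ringChar K = 4 ∨
          ringChar K = 5 ∨ ringChar K = 6) with h | h | h | h | h
      · exact Or.inl h
      · exact Or.inr h
      · rw [h] at hprime; norm_num at hprime
      · rw [h] at hdvd; norm_num at hdvd
      · rw [h] at hprime; norm_num at hprime
    rcases hp23 with hp | hp
    · haveI : CharP K 2 := hp ▸ hchar
      haveI : Fact (Nat.Prime 2) := ⟨Nat.prime_two⟩
      refine Or.inl ⟨(RingEquiv.ofBijective (ZMod.castHom (dvd_refl 2) K)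
        ⟨(ZMod.castHom (dvd_refl 2) K).injective, ?_⟩).symm⟩
      intro a
      have hfac : a * (a - 1) * (a + 1) = 0 := by linear_combination h3 a
      rcases mul_eq_zero.mp hfac with h' | h'
      · rcases mul_eq_zero.mp h' with h'' | h''
        · exact ⟨0, by rw [_root_.map_zero]; exact h''.symm⟩
        · exact ⟨1, by rw [_root_.map_one]; exact (sub_eq_zero.mp h'').symm⟩
      · exact ⟨-1, by rw [_root_.map_neg, _root_.map_one]; exact (eq_neg_of_add_eq_zero_left h').symm⟩
    · haveI : CharP K 3 := hp ▸ hchar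
      haveI : Fact (Nat.Prime 3) := ⟨Nat.prime_three⟩
      refine Or.inr ⟨(RingEquiv.ofBijective (ZMod.castHom (dvd_refl 3) K)
        ⟨(ZMod.castHom (dvd_refl 3) K).injective, ?_⟩).symm⟩
      intro a
      have hfac : a * (a - 1) * (a + 1) = 0 := by linear_combination h3 a
      rcases mul_eq_zero.mp hfac with h' | h'
      · rcases mul_eq_zero.mp h' with h'' | h''
        · exact ⟨0, by rw [_root_.map_zero]; exact h''.symm⟩
        · exact ⟨1, by rw [_root_.map_one]; exact (sub_eq_zero.mp h'').symm⟩
      · exact ⟨-1, by rw [_root_.map_neg, _root_.map_one]; exact (eq_neg_of_add_eq_zero_left h').symm⟩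
  · rintro (hφ | hφ)
    · obtain ⟨φ⟩ := hφ
      refine matrix_trinil (fun x => ?_) n
      apply φ.injective
      rw [_root_.map_pow]
      exact (by decide : ∀ y : ZMod 2, y ^ 3 = y) (φ x)
    · obtain ⟨φ⟩ := hφ
      refine matrix_trinil (fun x => ?_) n
      apply φ.injective
      rw [_root_.map_pow]
      exact (by decide : ∀ y : ZMod 3, y ^ 3 = y) (φ x)
end

section
/- Let R be a von Neumann regular ring and let n ≥ 2. Then x^3 = x for every x ∈ R if and only if R is commutative and the matrix ring M_n(R) is trinil clean. -/
open Matrix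

section TrinilB

variable {A B : Type*} [Ring A] [Ring B]

/-- bounded trinil decomposition -/
def TrinilB (k : ℕ) (a : A) : Prop := ∃ e w : A, e ^ 3 = e ∧ w ^ k = 0 ∧ a = e + w

theorem TrinilB.map (f : A →+* B) {k : ℕ} {a : A} (h : TrinilB k a) : TrinilB k (f a) := by
  obtain ⟨e, w, he, hw, rfl⟩ := h
  exact ⟨f e, f w, by rw [← map_pow, he], by rw [← map_pow, hw, map_zero], by rw [map_add]⟩

theorem TrinilB.mono {k l : ℕ} (hkl : k ≤ l) {a : A} (h : TrinilB k a) : TrinilB l a := by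
  obtain ⟨e, w, he, hw, rfl⟩ := h
  exact ⟨e, w, he, by rw [← Nat.sub_add_cancel hkl, pow_add, hw, mul_zero], rfl⟩

theorem TrinilB.isNilpotent {k : ℕ} {a : A} (h : TrinilB k a) :
    ∃ e w : A, e ^ 3 = e ∧ IsNilpotent w ∧ a = e + w := by
  obtain ⟨e, w, he, hw, rfl⟩ := h
  exact ⟨e, w, he, ⟨k, hw⟩, rfl⟩

end TrinilB

section StrictLower

variable {F : Type*} [Field F] {d : ℕ}

theorem strictLower_pow_entry (M : Matrix (Fin d) (Fin d) F)
    (h : ∀ i j : Fin d, (i : ℕ) ≤ j → M i j = 0) :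
    ∀ (k : ℕ) (i j : Fin d), (i : ℕ) < (j : ℕ) + k → (M ^ k) i j = 0 := by
  intro k
  induction k with
  | zero =>
    intro i j hij
    simp only [pow_zero]
    have : i ≠ j := by omega
    simp [Matrix.one_apply, this]
  | succ k ih =>
    intro i j hij
    rw [pow_succ, Matrix.mul_apply]
    apply Finset.sum_eq_zero
    intro l _
    by_cases hl : (i : ℕ) < (l : ℕ) + k
    · rw [ih i l hl, zero_mul]
    · have : (l : ℕ) ≤ j := by omega
      rw [h l j this, mul_zero]

theorem strictLower_pow_eq_zero (M : Matrix (Fin d) (Fin d) F)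
    (h : ∀ i j : Fin d, (i : ℕ) ≤ j → M i j = 0) : M ^ d = 0 := by
  ext i j
  rw [strictLower_pow_entry M h d i j (by omega)]
  rfl

theorem vecMulVec_mul_vecMulVec (a b c e : Fin d → F) :
    vecMulVec a b * vecMulVec c e = (b ⬝ᵥ c) • vecMulVec a e := by
  ext i j
  simp only [Matrix.mul_apply, vecMulVec_apply, Matrix.smul_apply, dotProduct, smul_eq_mul,
    Finset.sum_mul, Finset.mul_sum]
  apply Finset.sum_congr rfl
  intro k _
  ring

end StrictLower

section Companion

variable {F : Type*} [Field F] (hF : ∀ x : F, x ^ 3 = x)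

/-- generalized companion-style matrix: last column `c`, subdiagonal 1's -/
def compMat {d : ℕ} (c : Fin d → F) : Matrix (Fin d) (Fin d) F :=
  fun i j => if (j : ℕ) = d - 1 then c i else if (i : ℕ) = (j : ℕ) + 1 then 1 else 0

include hF in
theorem sq_eq_one_of_ne_zero {x : F} (hx : x ≠ 0) : x ^ 2 = 1 := by
  have h := hF x
  have h2 : x * (x ^ 2 - 1) = 0 := by linear_combination h
  rcases mul_eq_zero.mp h2 with h' | h'
  · exact absurd h' hx
  · exact sub_eq_zero.mp h'

include hF in
theorem compMat_trinilB {d : ℕ} (hd : 0 < d) (c : Fin d → F) : TrinilB d (compMat c) := by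
  classical
  set last : Fin d := ⟨d - 1, by omega⟩ with hlast
  have hlastv : (last : ℕ) = d - 1 := rfl
  have hcol : ∀ (E : Matrix (Fin d) (Fin d) F),
      (∀ i j : Fin d, (i : ℕ) ≤ j → E i j = (if j = last then c i else 0)) →
      (compMat c - E) ^ d = 0 := by
    intro E hE
    apply strictLower_pow_eq_zero
    intro i j hij
    have hj : ((j : ℕ) = d - 1) ↔ j = last := by
      constructor
      · intro h; exact Fin.ext h
      · intro h; rw [h]
    rw [Matrix.sub_apply, hE i j hij, compMat]
    have hne : ¬ ((i : ℕ) = (j : ℕ) + 1) := by omega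
    by_cases h : j = last
    · simp [h, hj.mpr h, hlast]
    · have hj' : ¬ ((j : ℕ) = d - 1) := fun hh => h (hj.mp hh)
      simp [h, hj', hne]
  by_cases hc : c = 0
  · refine ⟨0, compMat c, by simp, ?_, by simp⟩
    have := hcol 0 (by intro i j _; simp [hc])
    simpa using this
  by_cases hcl : c last ≠ 0
  · -- E = vecMulVec c (single last 1)
    set p : Fin d → F := Pi.single last 1 with hp
    set E := vecMulVec c p with hE
    have hE2 : E * E = c last • E := by
      rw [hE, _root_.vecMulVec_mul_vecMulVec]
      congr 1
      simp [hp]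
    have hE3 : E ^ 3 = E := by
      rw [pow_succ, pow_succ, pow_one, hE2, smul_mul_assoc, hE2, smul_smul, ← sq,
        sq_eq_one_of_ne_zero hF hcl, one_smul]
    refine ⟨E, compMat c - E, hE3, hcol E ?_, by abel⟩
    intro i j _
    by_cases h : j = last <;> simp [hE, vecMulVec_apply, hp, h, Pi.single_apply]
  · -- c last = 0, pick j0 with c j0 ≠ 0
    push_neg at hcl
    obtain ⟨j0, hj0⟩ : ∃ j0, c j0 ≠ 0 := by
      by_contra h
      push_neg at h
      exact hc (funext h)
    have hj0l : j0 ≠ last := fun h => hj0 (h ▸ hcl)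
    have hj0v : (j0 : ℕ) < d - 1 := by
      have h1 : (j0 : ℕ) ≠ d - 1 := fun h => hj0l (Fin.ext (by rw [h, hlastv]))
      have := j0.isLt
      omega
    set t := c j0 with ht
    set p : Fin d → F := Pi.single last 1 with hp
    set q : Fin d → F := Pi.single j0 t with hq
    set E := vecMulVec c p + vecMulVec p q with hE
    have hpc : p ⬝ᵥ c = 0 := by simp [hp, hcl]
    have hqc : q ⬝ᵥ c = 1 := by
      simp only [hq, single_dotProduct, ht]
      rw [← sq, sq_eq_one_of_ne_zero hF hj0]
    have hpp : p ⬝ᵥ p = (1 : F) := by simp [hp]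
    have hqp : q ⬝ᵥ p = 0 := by
      simp [hq, hp, Pi.single_apply, hj0l]
    have hE2 : E * E = vecMulVec c q + vecMulVec p p := by
      rw [hE, add_mul, mul_add, mul_add, _root_.vecMulVec_mul_vecMulVec, _root_.vecMulVec_mul_vecMulVec,
        _root_.vecMulVec_mul_vecMulVec, _root_.vecMulVec_mul_vecMulVec, hpc, hqc, hpp, hqp]
      simp
    have key : (vecMulVec c q + vecMulVec p p) * (vecMulVec c p + vecMulVec p q)
        = vecMulVec c p + vecMulVec p q := by
      rw [add_mul, mul_add, mul_add, _root_.vecMulVec_mul_vecMulVec, _root_.vecMulVec_mul_vecMulVec,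
        _root_.vecMulVec_mul_vecMulVec, _root_.vecMulVec_mul_vecMulVec, hpc, hqc, hpp, hqp]
      simp
    have hE3 : E ^ 3 = E := by
      rw [pow_succ, pow_succ, pow_one, hE2]
      conv_lhs => rw [hE]
      rw [key, ← hE]
    refine ⟨E, compMat c - E, hE3, hcol E ?_, by abel⟩
    intro i j hij
    have h2 : (vecMulVec p q) i j = 0 := by
      simp only [vecMulVec_apply, hp, hq, Pi.single_apply]
      by_cases hi : i = last
      · have hjj : j ≠ j0 := by
          intro hjj
          rw [hi, hjj, hlastv] at hij
          omega
        simp [hjj]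
      · simp [hi]
    rw [hE, Matrix.add_apply, h2, add_zero]
    by_cases h : j = last <;> simp [vecMulVec_apply, hp, h, Pi.single_apply]

end Companion

section Extension

variable {F V : Type*} [Field F] [AddCommGroup V] [Module F V]

theorem trinilB_ext (f : Module.End F V) (K : Submodule F V)
    (hK : ∀ x ∈ K, f x ∈ K) {a b : ℕ}
    (h1 : TrinilB a (f.restrict hK))
    (h2 : TrinilB b (Submodule.mapQ K K f (fun x hx => hK x hx))) :
    TrinilB (a + b) f := by
  obtain ⟨e₁, w₁, he₁, hw₁, hf₁⟩ := h1
  obtain ⟨e₂, w₂, he₂, hw₂, hf₂⟩ := h2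
  obtain ⟨K', hcpl⟩ := Submodule.exists_isCompl K
  set fQ := Submodule.mapQ K K f (fun x hx => hK x hx) with hfQ
  set pr : V →ₗ[F] K := K.linearProjOfIsCompl K' hcpl with hpr
  set π : V →ₗ[F] V ⧸ K := K.mkQ with hπdef
  set eqv := Submodule.quotientEquivOfIsCompl K K' hcpl with heqv
  set σ : (V ⧸ K) →ₗ[F] V := K'.subtype ∘ₗ eqv.toLinearMap with hσ
  have hπσ : ∀ y, π (σ y) = y := by
    intro y
    show π (K'.subtype (eqv y)) = y
    have h1 : (Submodule.Quotient.mk (K'.subtype (eqv y)) : V ⧸ K) = eqv.symm (eqv y) :=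
      (Submodule.quotientEquivOfIsCompl_symm_apply K K' hcpl (eqv y)).symm
    rw [hπdef, Submodule.mkQ_apply, h1, LinearEquiv.symm_apply_apply]
  have hprσ : ∀ y, pr (σ y) = 0 :=
    fun y => Submodule.projectionOnto_apply_of_mem_right hcpl (eqv y).2
  have hπK : ∀ x ∈ K, π x = 0 := by
    intro x hx
    rw [hπdef, Submodule.mkQ_apply]
    exact (Submodule.Quotient.mk_eq_zero K).mpr hx
  have hπK' : ∀ y : K, π ((y : K) : V) = 0 := fun y => hπK _ y.2
  have hprK : ∀ (x : V) (hx : x ∈ K), pr x = ⟨x, hx⟩ :=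
    fun x hx => Submodule.linearProjOfIsCompl_apply_left hcpl ⟨x, hx⟩
  have hprK' : ∀ y : K, pr ((y : K) : V) = y :=
    fun y => Submodule.linearProjOfIsCompl_apply_left hcpl y
  set P : Module.End F V := K.subtype ∘ₗ (e₁ ∘ₗ pr) with hP
  set S : Module.End F V := σ ∘ₗ (e₂ ∘ₗ π) with hS
  set e : Module.End F V := P + S with he
  set w : Module.End F V := f - e with hw
  have hPapp : ∀ x, P x = ((e₁ (pr x) : K) : V) := fun _ => rfl
  have hSapp : ∀ x, S x = σ (e₂ (π x)) := fun _ => rfl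
  have heapp : ∀ x, e x = P x + S x := fun _ => rfl
  have hwapp : ∀ x, w x = f x - e x := fun _ => rfl
  have hPS : ∀ y, P (σ (e₂ y)) = 0 := by
    intro y
    rw [hPapp, hprσ, map_zero]
    rfl
  have hSP : ∀ (y : K), S ((y : K) : V) = 0 := by
    intro y
    rw [hSapp, hπK', map_zero, map_zero]
  have he₁' : ∀ z, e₁ (e₁ (e₁ z)) = e₁ z := by
    intro z
    have := LinearMap.ext_iff.mp he₁ z
    rwa [pow_succ, pow_succ, pow_one, Module.End.mul_apply, Module.End.mul_apply] at this
  have he₂' : ∀ z, e₂ (e₂ (e₂ z)) = e₂ z := by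
    intro z
    have := LinearMap.ext_iff.mp he₂ z
    rwa [pow_succ, pow_succ, pow_one, Module.End.mul_apply, Module.End.mul_apply] at this
  have hPP : ∀ (y : K), P ((y : K) : V) = ((e₁ y : K) : V) := by
    intro y
    rw [hPapp, hprK']
  have hSS : ∀ y, S (σ (e₂ y)) = σ (e₂ (e₂ y)) := by
    intro y
    rw [hSapp, hπσ]
  have hex : ∀ x, e x = ((e₁ (pr x) : K) : V) + σ (e₂ (π x)) := by
    intro x
    rw [heapp, hPapp, hSapp]
  have he2x : ∀ x, e (e x) = ((e₁ (e₁ (pr x)) : K) : V) + σ (e₂ (e₂ (π x))) := by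
    intro x
    rw [hex x, map_add, heapp (((e₁ (pr x) : K) : V)), hPP, hSP, add_zero,
      heapp (σ (e₂ (π x))), hPS, hSS, zero_add]
  have he3 : e ^ 3 = e := by
    ext x
    rw [pow_succ, pow_succ, pow_one, Module.End.mul_apply, Module.End.mul_apply]
    rw [he2x x, map_add, heapp (((e₁ (e₁ (pr x)) : K) : V)), hPP, hSP, add_zero,
      heapp (σ (e₂ (e₂ (π x)))), hPS, hSS, zero_add, he₁', he₂', ← hex]
  have hwK : ∀ (x : V) (hx : x ∈ K), w x = ((w₁ ⟨x, hx⟩ : K) : V) := by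
    intro x hx
    have hex : e x = ((e₁ ⟨x, hx⟩ : K) : V) := by
      rw [heapp, hPapp, hprK x hx]
      have : S x = 0 := by
        rw [hSapp, hπK x hx, map_zero, map_zero]
      rw [this, add_zero]
    have hfx : f x = ((f.restrict hK ⟨x, hx⟩ : K) : V) := by
      rw [LinearMap.restrict_apply]
    have hsub : (f.restrict hK) ⟨x, hx⟩ - e₁ ⟨x, hx⟩ = w₁ ⟨x, hx⟩ := by
      rw [hf₁, LinearMap.add_apply]
      abel
    rw [hwapp, hex, hfx, ← Submodule.coe_sub, hsub]
  have hwKmem : ∀ (x : V), x ∈ K → w x ∈ K := by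
    intro x hx
    rw [hwK x hx]
    exact (w₁ ⟨x, hx⟩).2
  have hwπ : ∀ x, π (w x) = w₂ (π x) := by
    intro x
    have hfπ : π (f x) = fQ (π x) := by
      rw [hπdef, Submodule.mkQ_apply, Submodule.mkQ_apply, hfQ, Submodule.mapQ_apply]
    have heπ : π (e x) = e₂ (π x) := by
      rw [heapp, map_add, hPapp, hπK', zero_add, hSapp, hπσ]
    rw [hwapp, map_sub, hfπ, heπ, hf₂, LinearMap.add_apply]
    abel
  have hπpow : ∀ (k : ℕ) (x : V), π ((w ^ k) x) = (w₂ ^ k) (π x) := by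
    intro k
    induction k with
    | zero => intro x; simp
    | succ k ih =>
      intro x
      rw [pow_succ', pow_succ', Module.End.mul_apply, Module.End.mul_apply, hwπ, ih]
  have hKpow : ∀ (k : ℕ) (x : V) (hx : x ∈ K), (w ^ k) x = (((w₁ ^ k) ⟨x, hx⟩ : K) : V) := by
    intro k
    induction k with
    | zero => intro x hx; simp
    | succ k ih =>
      intro x hx
      rw [pow_succ', Module.End.mul_apply, ih x hx, hwK _ ((w₁ ^ k) ⟨x, hx⟩).2]
      congr 1
      rw [Subtype.coe_eta, pow_succ', Module.End.mul_apply]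
  have hwpow : w ^ (a + b) = 0 := by
    ext x
    rw [pow_add, Module.End.mul_apply]
    have hmem : (w ^ b) x ∈ K := by
      have := hπpow b x
      rw [hw₂, LinearMap.zero_apply, hπdef, Submodule.mkQ_apply] at this
      exact (Submodule.Quotient.mk_eq_zero K).mp this
    rw [hKpow a _ hmem, hw₁]
    simp
  exact ⟨e, w, he3, hwpow, by ext x; rw [LinearMap.add_apply, hwapp]; abel⟩

end Extension

section EndoThm

open Module

universe u v

theorem endo_trinilB {F : Type u} [Field F] (hF : ∀ x : F, x ^ 3 = x) :
    ∀ (m : ℕ) (V : Type v) [AddCommGroup V] [Module F V] [FiniteDimensional F V],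
      Module.finrank F V = m → ∀ f : Module.End F V, TrinilB m f := by
  intro m
  induction m using Nat.strong_induction_on with
  | _ m IH =>
    intro V _ _ _ hm f
    rcases Nat.eq_zero_or_pos m with hm0 | hmpos
    · subst hm0
      haveI : Subsingleton V := Module.finrank_zero_iff.mp hm
      exact ⟨0, f, by simp, Subsingleton.elim _ _, by simp⟩
    haveI : Nontrivial V := Module.finrank_pos_iff.mp (by omega : 0 < Module.finrank F V)
    obtain ⟨v, hv⟩ := exists_ne (0 : V)
    classical
    set g : ℕ → V := fun i => (f ^ i) v with hg
    have hstep : ∀ j : ℕ, f (g j) = g (j + 1) := by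
      intro j
      rw [hg]
      simp only
      rw [pow_succ', Module.End.mul_apply]
    set Pk : ℕ → Prop := fun k => LinearIndependent F (fun i : Fin k => g i) with hPk
    have hP1 : Pk 1 := by
      rw [hPk]
      apply linearIndependent_unique_iff.mpr
      simpa [hg] using hv
    have hPbound : ∀ k, Pk k → k ≤ m := by
      intro k hk
      have := hk.fintype_card_le_finrank
      rwa [Fintype.card_fin, hm] at this
    set d := Nat.findGreatest Pk m with hd
    have hd1 : 1 ≤ d := Nat.le_findGreatest hmpos hP1
    have hdm : d ≤ m := Nat.findGreatest_le m
    have hdP : Pk d := Nat.findGreatest_spec hmpos hP1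
    have hnot : ¬ Pk (d + 1) := by
      by_cases h : d + 1 ≤ m
      · exact Nat.findGreatest_is_greatest (Nat.lt_succ_self d) h
      · intro hc; exact h (hPbound _ hc)
    have hinit : Fin.init (fun i : Fin (d + 1) => g i) = fun i : Fin d => g i := by
      funext i
      simp [Fin.init]
    have hrel : g d ∈ Submodule.span F (Set.range fun i : Fin d => g i) := by
      by_contra hcon
      apply hnot
      rw [hPk]
      show LinearIndependent F (fun i : Fin (d + 1) => g i)
      rw [linearIndependent_fin_succ', hinit]
      exact ⟨hdP, by simpa using hcon⟩
    set K := Submodule.span F (Set.range fun i : Fin d => g i) with hK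
    have hKinv : ∀ x ∈ K, f x ∈ K := by
      intro x hx
      have hmap : Submodule.map f K ≤ K := by
        rw [hK, Submodule.map_span, Submodule.span_le]
        rintro y ⟨_, ⟨i, rfl⟩, rfl⟩
        rw [hstep]
        by_cases hi : (i : ℕ) + 1 < d
        · apply Submodule.subset_span
          exact ⟨⟨(i : ℕ) + 1, hi⟩, rfl⟩
        · have hieq : (i : ℕ) + 1 = d := by have := i.isLt; omega
          rw [hieq]
          exact hrel
      exact hmap (Submodule.mem_map_of_mem hx)
    set bK : Basis (Fin d) F K := Basis.span hdP with hbK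
    have hfinK : Module.finrank F K = d := by
      rw [finrank_eq_card_basis bK, Fintype.card_fin]
    set fK := f.restrict hKinv with hfK
    set c : Fin d → F := fun i => bK.repr ⟨g d, hrel⟩ i with hc
    have hCK : LinearMap.toMatrixAlgEquiv bK fK = compMat c := by
      ext i j
      rw [LinearMap.toMatrixAlgEquiv_apply]
      have hbj : ((bK j : K) : V) = g j := congrArg Subtype.val (Module.Basis.span_apply hdP j)
      have hfKj : ((fK (bK j) : K) : V) = g ((j : ℕ) + 1) := by
        have h0 : ((fK (bK j) : K) : V) = f ((bK j : K) : V) := by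
          rw [hfK, LinearMap.restrict_apply]
        rw [h0, hbj, hstep]
      by_cases hj : (j : ℕ) = d - 1
      · have hje : fK (bK j) = ⟨g d, hrel⟩ := Subtype.ext (by rw [hfKj]; congr 1; omega)
        rw [hje, compMat, if_pos hj, hc]
      · have hj1 : (j : ℕ) + 1 < d := by have := j.isLt; omega
        have hje : fK (bK j) = bK ⟨(j : ℕ) + 1, hj1⟩ :=
          Subtype.ext (by rw [hfKj, Basis.span_apply])
        rw [hje, Basis.repr_self, compMat]
        simp only [if_neg hj]
        by_cases hi : (i : ℕ) = (j : ℕ) + 1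
        · have : i = ⟨(j : ℕ) + 1, hj1⟩ := Fin.ext hi
          rw [if_pos hi, this, Finsupp.single_eq_same]
        · rw [if_neg hi, Finsupp.single_apply, if_neg]
          intro hcon
          exact hi (by rw [← hcon])
    have h1 : TrinilB d fK := by
      have hmaps := (compMat_trinilB hF (by omega : 0 < d) c).map
        ((LinearMap.toMatrixAlgEquiv bK).symm : Matrix (Fin d) (Fin d) F ≃ₐ[F] Module.End F K).toRingEquiv.toRingHom
      rw [← hCK] at hmaps
      simpa using hmaps
    set fQ := Submodule.mapQ K K f (fun x hx => hKinv x hx) with hfQ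
    have hfinQ : Module.finrank F (V ⧸ K) = m - d := by
      have hq := Submodule.finrank_quotient_add_finrank K
      rw [hm, hfinK] at hq
      omega
    have h2 : TrinilB (m - d) fQ := IH (m - d) (by omega) (V ⧸ K) hfinQ fQ
    have hext := trinilB_ext f K hKinv h1 h2
    rwa [show d + (m - d) = m by omega] at hext

end EndoThm

section MatrixField

theorem matrix_field_trinilB {F : Type*} [Field F] (hF : ∀ x : F, x ^ 3 = x) (n : ℕ)
    (A : Matrix (Fin n) (Fin n) F) : TrinilB n A := by
  classical
  set b := Pi.basisFun F (Fin n) with hb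
  have hfr : Module.finrank F (Fin n → F) = n := by
    rw [Module.finrank_eq_card_basis b, Fintype.card_fin]
  have hf : TrinilB n ((LinearMap.toMatrixAlgEquiv b).symm A) :=
    endo_trinilB hF n (Fin n → F) hfr _
  have := hf.map ((LinearMap.toMatrixAlgEquiv b :
    Module.End F (Fin n → F) ≃ₐ[F] Matrix (Fin n) (Fin n) F)).toRingEquiv.toRingHom
  simpa using this

end MatrixField

section FiniteRing

attribute [local instance] IsArtinianRing.fieldOfSubtypeIsMaximal

theorem isReduced_of_cube_eq {S : Type*} [CommRing S] (hS : ∀ x : S, x ^ 3 = x) :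
    IsReduced S := by
  constructor
  intro x hx
  obtain ⟨m, hm⟩ := hx
  have hodd : ∀ k : ℕ, x ^ (2 * k + 1) = x := by
    intro k
    induction k with
    | zero => simp
    | succ k ih =>
      have : x ^ (2 * (k + 1) + 1) = x ^ (2 * k + 1) * x ^ 2 := by ring
      rw [this, ih]
      have := hS x
      linear_combination this
  have h1 : x ^ (2 * m + 1) = 0 := by
    have : x ^ (2 * m + 1) = x ^ m * x ^ (m + 1) := by ring
    rw [this, hm, zero_mul]
  rw [hodd m] at h1
  exact h1

theorem matrix_finite_trinilB {S : Type*} [CommRing S] [Finite S] (hS : ∀ x : S, x ^ 3 = x)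
    (n : ℕ) (A : Matrix (Fin n) (Fin n) S) : TrinilB n A := by
  classical
  haveI : IsReduced S := isReduced_of_cube_eq hS
  haveI : IsArtinianRing S := inferInstance
  set ι := MaximalSpectrum S with hι
  set e := IsArtinianRing.equivPi S with he
  set Φ : Matrix (Fin n) (Fin n) S ≃+* Matrix (Fin n) (Fin n) (∀ I : ι, S ⧸ I.1) :=
    RingEquiv.mapMatrix e.toRingEquiv with hΦ
  set A' := Φ A with hA'
  have hFI : ∀ (I : ι) (x : S ⧸ I.1), x ^ 3 = x := by
    intro I x
    obtain ⟨y, rfl⟩ := Ideal.Quotient.mk_surjective x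
    rw [← map_pow, hS]
  have hcomp := fun I : ι =>
    matrix_field_trinilB (hFI I) n ((Pi.evalRingHom (fun I : ι => S ⧸ I.1) I).mapMatrix A')
  choose E W hE hW hA using hcomp
  set bigE : Matrix (Fin n) (Fin n) (∀ I : ι, S ⧸ I.1) := fun k l I => E I k l with hbigE
  set bigW : Matrix (Fin n) (Fin n) (∀ I : ι, S ⧸ I.1) := fun k l I => W I k l with hbigW
  have keyE : ∀ I : ι, (Pi.evalRingHom (fun I : ι => S ⧸ I.1) I).mapMatrix bigE = E I :=
    fun I => rfl
  have keyW : ∀ I : ι, (Pi.evalRingHom (fun I : ι => S ⧸ I.1) I).mapMatrix bigW = W I :=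
    fun I => rfl
  have hE3 : bigE ^ 3 = bigE := by
    ext k l I
    calc ((bigE ^ 3) k l) I
        = ((Pi.evalRingHom (fun I : ι => S ⧸ I.1) I).mapMatrix (bigE ^ 3)) k l := rfl
      _ = (((Pi.evalRingHom (fun I : ι => S ⧸ I.1) I).mapMatrix bigE ^ 3)) k l := by
          rw [map_pow]
      _ = (E I) k l := by rw [keyE, hE I]
      _ = (bigE k l) I := rfl
  have hWn : bigW ^ n = 0 := by
    ext k l I
    calc ((bigW ^ n) k l) I
        = ((Pi.evalRingHom (fun I : ι => S ⧸ I.1) I).mapMatrix (bigW ^ n)) k l := rfl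
      _ = (((Pi.evalRingHom (fun I : ι => S ⧸ I.1) I).mapMatrix bigW ^ n)) k l := by
          rw [map_pow]
      _ = (0 : Matrix (Fin n) (Fin n) (S ⧸ I.1)) k l := by rw [keyW, hW I]
      _ = ((0 : Matrix (Fin n) (Fin n) (∀ I : ι, S ⧸ I.1)) k l) I := by simp
  have hsum : A' = bigE + bigW := by
    ext k l I
    calc (A' k l) I
        = ((Pi.evalRingHom (fun I : ι => S ⧸ I.1) I).mapMatrix A') k l := rfl
      _ = (E I + W I) k l := by rw [hA I]
      _ = ((bigE + bigW) k l) I := rfl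
  have hA'trinil : TrinilB n A' := ⟨bigE, bigW, hE3, hWn, hsum⟩
  have := hA'trinil.map (Φ.symm : Matrix (Fin n) (Fin n) (∀ I : ι, S ⧸ I.1) ≃+*
    Matrix (Fin n) (Fin n) S).toRingHom
  simpa [hA'] using this

end FiniteRing

section Forward

theorem matrix_trinilB_of_cube {R : Type*} [Ring R] (H : ∀ x : R, x ^ 3 = x)
    (hcomm : ∀ a b : R, a * b = b * a) (n : ℕ) (A : Matrix (Fin n) (Fin n) R) :
    TrinilB n A := by
  classical
  letI : CommRing R := { (inferInstance : Ring R) with mul_comm := hcomm }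
  have h6 : (6 : R) = 0 := by linear_combination H 2
  haveI : CharP R (ringChar R) := ringChar.charP R
  have hdvd : ringChar R ∣ 6 := (CharP.cast_eq_zero_iff R (ringChar R) 6).mp (by push_cast; exact h6)
  letI : Algebra (ZMod 6) R := (ZMod.castHom hdvd R).toAlgebra
  set s : Set R := Set.range (fun p : Fin n × Fin n => A p.1 p.2) with hs
  set T := Algebra.adjoin (ZMod 6) s with hT
  have hint : ∀ x ∈ s, IsIntegral (ZMod 6) x := by
    intro x _
    refine ⟨Polynomial.X ^ 3 - Polynomial.X, ?_, ?_⟩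
    · haveI : Nontrivial (ZMod 6) := ⟨0, 1, by decide⟩
      have hdeg : (Polynomial.X : Polynomial (ZMod 6)).degree < (3 : ℕ) := by
        rw [Polynomial.degree_X]
        exact_mod_cast (by norm_num : (1 : ℕ) < 3)
      exact Polynomial.monic_X_pow_sub hdeg
    · simp only [Polynomial.eval₂_sub, Polynomial.eval₂_X_pow, Polynomial.eval₂_X]
      rw [H x, sub_self]
  have hfg := fg_adjoin_of_finite (Set.finite_range _) hint
  haveI : Module.Finite (ZMod 6) T := ⟨(Submodule.fg_top _).mpr hfg⟩
  haveI : Finite T := Module.finite_of_finite (ZMod 6)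
  have hTx : ∀ x : T, x ^ 3 = x := by
    intro x
    exact Subtype.ext (by rw [SubmonoidClass.coe_pow]; exact H _)
  set A' : Matrix (Fin n) (Fin n) T :=
    fun k l => ⟨A k l, Algebra.subset_adjoin ⟨(k, l), rfl⟩⟩ with hA'
  have h := matrix_finite_trinilB hTx n A'
  have h2 := h.map ((Subalgebra.val T).toRingHom.mapMatrix)
  have hAA : (Subalgebra.val T).toRingHom.mapMatrix A' = A := by
    ext k l
    rfl
  rwa [hAA] at h2

end Forward

section Comm

variable {R : Type*} [Ring R]

theorem comm_of_cube (H : ∀ x : R, x ^ 3 = x) : ∀ a b : R, a * b = b * a := by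
  have hx3 : ∀ x : R, x * x * x = x := by
    intro x
    have := H x
    rwa [pow_succ, pow_succ, pow_one] at this
  have h6 : ∀ x : R, 6 * x = 0 := by
    intro x
    have h := H (2 * x)
    have e : (2 * x) ^ 3 = 8 * (x * x * x) := by noncomm_ring
    rw [e, hx3 x] at h
    have e2 : 6 * x = 8 * x - 2 * x := by noncomm_ring
    rw [e2, h, sub_self]
  have hred : ∀ w : R, w * w = 0 → w = 0 := by
    intro w hw
    have := hx3 w
    rw [hw, zero_mul] at this
    exact this.symm
  have hidem : ∀ e : R, e * e = e → ∀ y : R, e * y = y * e := by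
    intro e he y
    have he' : ∀ z : R, e * (e * z) = e * z := by
      intro z
      rw [← mul_assoc, he]
    have ha : (e * y - e * y * e) * (e * y - e * y * e) = 0 := by
      simp only [mul_sub, sub_mul, mul_assoc, he']
      abel
    have hb : (y * e - e * y * e) * (y * e - e * y * e) = 0 := by
      have he'' : ∀ z : R, (z * e) * e = z * e := by
        intro z
        rw [mul_assoc, he]
      simp only [mul_sub, sub_mul, mul_assoc, he']
      simp only [← mul_assoc, he'']
      abel
    have ha' := hred _ ha
    have hb' := hred _ hb
    have h1 : e * y = e * y * e := by rwa [sub_eq_zero] at ha'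
    have h2 : y * e = e * y * e := by rwa [sub_eq_zero] at hb'
    rw [h1, h2]
  have hsq : ∀ x : R, (x * x) * (x * x) = x * x := by
    intro x
    rw [← mul_assoc, hx3]
  have hsqc : ∀ x y : R, (x * x) * y = y * (x * x) := fun x => hidem _ (hsq x)
  have h2c : ∀ x y : R, (2 * x) * y = y * (2 * x) := by
    intro x y
    have hs : (x + x * x) * (x + x * x) = (x * x + x * x) + (x + x) := by
      have e1 : (x + x * x) * (x + x * x)
          = x * x + x * (x * x) + ((x * x) * x + (x * x) * (x * x)) := by noncomm_ring
      rw [e1, hsq, ← mul_assoc x x x, hx3 x]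
      abel
    have heq : 2 * x = (x + x * x) * (x + x * x) - (x * x) - (x * x) := by
      rw [hs]
      noncomm_ring
    rw [heq, sub_mul, sub_mul, mul_sub, mul_sub,
      hsqc (x + x * x) y, hsqc x y]
  have h3c : ∀ x y : R, (3 * x) * y = y * (3 * x) := by
    intro x y
    have hzz : (3 * x) * (3 * x) - 3 * x = 9 * (x * x) - 3 * x := by noncomm_ring
    have hsqr : ((3 * x) * (3 * x) - 3 * x) * ((3 * x) * (3 * x) - 3 * x) = 0 := by
      rw [hzz]
      have e1 : (9 * (x * x) - 3 * x) * (9 * (x * x) - 3 * x)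
          = 81 * ((x * x) * (x * x)) - 27 * ((x * x) * x) - 27 * (x * (x * x)) + 9 * (x * x) := by
        noncomm_ring
      rw [e1, hsq, ← mul_assoc x x x, hx3 x]
      have e2 : 81 * (x * x) - 27 * x - 27 * x + 9 * (x * x)
          = 15 * (6 * (x * x)) - 9 * (6 * x) := by noncomm_ring
      rw [e2, h6, h6, mul_zero, mul_zero, sub_self]
    have hz := hred _ hsqr
    have hz' : (3 * x) * (3 * x) = 3 * x := by rwa [sub_eq_zero] at hz
    exact hidem _ hz' y
  intro a b
  have h3 := h3c a b
  have h2 := h2c a b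
  have e1 : a * b = (3 * a) * b - (2 * a) * b := by noncomm_ring
  have e2 : b * a = b * (3 * a) - b * (2 * a) := by noncomm_ring
  rw [e1, e2, h3, h2]

end Comm

section Backward

variable {R : Type*} [Ring R]

theorem reduced_of_reg (hreg : ∀ a : R, ∃ x : R, a = a * x * a)
    (hcomm : ∀ a b : R, a * b = b * a) :
    ∀ (y : R) (k : ℕ), y ^ k = 0 → y = 0 := by
  have hsq : ∀ y : R, y * y = 0 → y = 0 := by
    intro y hy
    obtain ⟨x, hx⟩ := hreg y
    rw [hcomm y x, mul_assoc, hy, mul_zero] at hx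
    exact hx
  have hpow2 : ∀ (m : ℕ) (y : R), y ^ (2 ^ m) = 0 → y = 0 := by
    intro m
    induction m with
    | zero => intro y hy; simpa using hy
    | succ m ih =>
      intro y hy
      have : (y * y) ^ (2 ^ m) = 0 := by
        rw [← pow_two, ← pow_mul, mul_comm 2 (2 ^ m), ← pow_succ]
        exact hy
      exact hsq y (ih _ this)
  intro y k hy
  rcases Nat.eq_zero_or_pos k with hk | hk
  · subst hk
    rw [pow_zero] at hy
    calc y = y * 1 := (mul_one y).symm
      _ = y * 0 := by rw [hy]
      _ = 0 := mul_zero y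
  · apply hpow2 k
    have hle : k ≤ 2 ^ k := Nat.le_of_lt (Nat.lt_two_pow_self)
    have hsplit : y ^ (2 ^ k) = y ^ k * y ^ (2 ^ k - k) := by
      rw [← pow_add, Nat.add_sub_cancel' hle]
    rw [hsplit, hy, zero_mul]

theorem cube_of_trinil (hreg : ∀ a : R, ∃ x : R, a = a * x * a)
    (hcomm : ∀ a b : R, a * b = b * a) (n : ℕ) (hn : 0 < n)
    (htr : ∀ a : Matrix (Fin n) (Fin n) R,
      ∃ e w : Matrix (Fin n) (Fin n) R, e ^ 3 = e ∧ IsNilpotent w ∧ a = e + w)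
    (x : R) : x ^ 3 = x := by
  classical
  letI : CommRing R := { (inferInstance : Ring R) with mul_comm := hcomm }
  set M := Matrix (Fin n) (Fin n) R with hM
  set c : M := x • (1 : M) with hc
  obtain ⟨e, w, he, ⟨k, hwk⟩, hx⟩ := htr c
  have hes : e = c - w := by rw [hx]; abel
  have he' : (c - w) * ((c - w) * (c - w)) = c - w := by
    have h3 := he
    rw [pow_succ, pow_succ, pow_one, hes] at h3
    rw [← mul_assoc]
    exact h3
  have hexp : (c - w) * ((c - w) * (c - w))
      = (x * (x * x)) • (1 : M)
        - ((x * x) • w + (x * x) • w + (x * x) • w)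
        + (x • (w * w) + x • (w * w) + x • (w * w)) - w * (w * w) := by
    rw [hc]
    simp only [mul_sub, sub_mul, smul_mul_assoc, mul_smul_comm, smul_sub, smul_add,
      one_mul, mul_one, smul_smul, mul_assoc]
    abel
  have hwm : w * (((x * x) • (1 : M) + (x * x) • (1 : M) + (x * x) • (1 : M))
        - (x • w + x • w + x • w) + w * w - 1)
      = ((x * x) • w + (x * x) • w + (x * x) • w)
        - (x • (w * w) + x • (w * w) + x • (w * w)) + w * (w * w) - w := by
    simp only [mul_sub, mul_add, mul_smul_comm, mul_one, mul_assoc]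
  have heq : (x * (x * x)) • (1 : M)
      - ((x * x) • w + (x * x) • w + (x * x) • w)
      + (x • (w * w) + x • (w * w) + x • (w * w)) - w * (w * w) = c - w := by
    rw [← hexp]
    exact he'
  have hkey : (x * (x * x) - x) • (1 : M)
      = w * (((x * x) • (1 : M) + (x * x) • (1 : M) + (x * x) • (1 : M))
        - (x • w + x • w + x • w) + w * w - 1) := by
    rw [sub_smul, hwm, ← hc]
    have hdiff : ((x * (x * x)) • (1 : M) - c)
        - (((x * x) • w + (x * x) • w + (x * x) • w)
          - (x • (w * w) + x • (w * w) + x • (w * w)) + w * (w * w) - w)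
        = ((x * (x * x)) • (1 : M)
          - ((x * x) • w + (x * x) • w + (x * x) • w)
          + (x • (w * w) + x • (w * w) + x • (w * w)) - w * (w * w)) - (c - w) := by abel
    rw [heq, sub_self] at hdiff
    exact sub_eq_zero.mp hdiff
  have hcomm_wm : Commute w (((x * x) • (1 : M) + (x * x) • (1 : M) + (x * x) • (1 : M))
      - (x • w + x • w + x • w) + w * w - 1) := by
    show _ = _
    simp only [mul_sub, mul_add, sub_mul, add_mul, mul_smul_comm, smul_mul_assoc,
      mul_one, one_mul, mul_assoc]
  have hnil : IsNilpotent ((x * (x * x) - x) • (1 : M)) := by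
    rw [hkey]
    exact hcomm_wm.isNilpotent_mul_right ⟨k, hwk⟩
  obtain ⟨j, hj⟩ := hnil
  rw [smul_pow, one_pow] at hj
  have i0 : Fin n := ⟨0, hn⟩
  have hone : (1 : M) i0 i0 = 1 := Matrix.one_apply_eq i0
  have hentry : (x * (x * x) - x) ^ j = 0 := by
    calc (x * (x * x) - x) ^ j = (x * (x * x) - x) ^ j * (1 : M) i0 i0 := by
          rw [hone, mul_one]
      _ = ((x * (x * x) - x) ^ j • (1 : M)) i0 i0 := rfl
      _ = (0 : M) i0 i0 := by rw [hj]
      _ = 0 := rfl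
  have hx0 : x * (x * x) - x = 0 := reduced_of_reg hreg hcomm _ j hentry
  have hxx : x * (x * x) = x := by rwa [sub_eq_zero] at hx0
  rw [pow_succ, pow_succ, pow_one, mul_assoc]
  exact hxx

end Backward

theorem tripotent_iff_comm_and_matrix_trinilClean (R : Type*) [Ring R]
    (hreg : ∀ a : R, ∃ x : R, a = a * x * a) (n : ℕ) (hn : 2 ≤ n) :
    (∀ x : R, x ^ 3 = x) ↔
      ((∀ a b : R, a * b = b * a) ∧ TrinilClean (Matrix (Fin n) (Fin n) R)) := by
  constructor
  · intro H
    refine ⟨comm_of_cube H, ?_⟩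
    intro A
    exact (matrix_trinilB_of_cube H (comm_of_cube H) n A).isNilpotent
  · rintro ⟨hcomm, htr⟩
    intro x
    exact cube_of_trinil hreg hcomm n (by omega) htr x
end
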